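/- arXiv:1108.4812 — 9 statements merged into one kernel-verified Lean document; each statement's English description precedes it below -/
import Mathlib

section
/- Let (Ω, ℱ, ℙ) be a probability space, θ > 0 and b > 0. Let V : Ω → (0, ∞] be a random variable and let E be an exponential random variable with rate θ, independent of V. For y ≥ 0 define ψ(y) := y − b·𝔼[1 − e^{−y V}], with the convention e^{−y·∞} = 0 (that is, 𝔼[1 − e^{−y V}] := ℙ(V = ∞) + 𝔼[𝟙_{V<∞}(1 − e^{−y V})]), and define ψ_θ(x) := x − b·𝔼[1 − e^{−x (min(V,E))}] (note min(V,E) is finite almost surely). Then for every x ≥ 0, ψ_θ(x) = x ψ(x + θ)/(x + θ). -/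
open MeasureTheory ProbabilityTheory Set
open scoped ENNReal

lemma aux_deriv (c t : ℝ) : HasDerivAt (fun s => -Real.exp (-c * s)) (c * Real.exp (-c * t)) t := by
  have h1 : HasDerivAt (fun s : ℝ => -c * s) (-c) t := by
    simpa using (hasDerivAt_id t).const_mul (-c)
  have : HasDerivAt (fun s => -Real.exp (-c * s)) _ t := (h1.exp).neg
  convert this using 1
  ring

lemma aux_interval (c v : ℝ) (hv : 0 ≤ v) :
    ∫ t in Set.Ioo 0 v, c * Real.exp (-c * t) = 1 - Real.exp (-c * v) := by
  rw [← integral_Ioc_eq_integral_Ioo, ← intervalIntegral.integral_of_le hv]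
  rw [intervalIntegral.integral_eq_sub_of_hasDerivAt (fun t _ => aux_deriv c t)]
  · simp [neg_mul]; ring
  · exact (Continuous.intervalIntegrable (by continuity) _ _)

lemma aux_Ioi (c : ℝ) (hc : 0 < c) :
    ∫ t in Set.Ioi (0:ℝ), c * Real.exp (-c * t) = 1 := by
  have hint : IntegrableOn (fun t => c * Real.exp (-c * t)) (Set.Ioi (0:ℝ)) :=
    (exp_neg_integrableOn_Ioi 0 hc).const_mul c
  have htend : Filter.Tendsto (fun s => -Real.exp (-c * s)) Filter.atTop (nhds 0) := by
    rw [← neg_zero]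
    apply Filter.Tendsto.neg
    apply Real.tendsto_exp_atBot.comp
    exact Filter.Tendsto.const_mul_atTop_of_neg (neg_neg_iff_pos.mpr hc) Filter.tendsto_id
  have hcont : ContinuousWithinAt (fun s => -Real.exp (-c * s)) (Set.Ici 0) 0 :=
    (Continuous.continuousWithinAt (by continuity))
  have := MeasureTheory.integral_Ioi_of_hasDerivAt_of_tendsto
    (f := fun s => -Real.exp (-c * s)) (f' := fun t => c * Real.exp (-c * t))
    (a := 0) (m := 0) hcont (fun t _ => aux_deriv c t) hint htend
  rw [this]; simp

lemma aux_lIoi (c : ℝ) (hc : 0 < c) :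
    ∫⁻ t in Set.Ioi (0:ℝ), ENNReal.ofReal (c * Real.exp (-c * t)) = 1 := by
  rw [← ofReal_integral_eq_lintegral_ofReal ((exp_neg_integrableOn_Ioi 0 hc).const_mul c)
    (ae_of_all _ fun t => by positivity), aux_Ioi c hc, ENNReal.ofReal_one]

lemma aux_lIoo (c v : ℝ) (hc : 0 < c) (hv : 0 ≤ v) :
    ∫⁻ t in Set.Ioo 0 v, ENNReal.ofReal (c * Real.exp (-c * t))
      = ENNReal.ofReal (1 - Real.exp (-c * v)) := by
  rw [← ofReal_integral_eq_lintegral_ofReal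
    ((show IntegrableOn (fun t => c * Real.exp (-c * t)) (Set.Ioi 0) volume from (exp_neg_integrableOn_Ioi 0 hc).const_mul c).mono_set Set.Ioo_subset_Ioi_self)
    (ae_of_all _ fun t => by positivity), aux_interval c v hv]

lemma key {Ω : Type*} [MeasurableSpace Ω] (P : Measure Ω) [IsProbabilityMeasure P]
    (m : Ω → ℝ≥0∞) (hm : Measurable m) (c : ℝ) (hc : 0 < c) :
    ∫⁻ ω, ENNReal.ofReal (if m ω = ∞ then 1 else 1 - Real.exp (-c * (m ω).toReal)) ∂P
      = ∫⁻ t in Set.Ioi (0:ℝ), ENNReal.ofReal (c * Real.exp (-c * t))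
          * P {ω | ENNReal.ofReal t < m ω} := by
  have hswap := MeasureTheory.lintegral_lintegral_swap (μ := P)
    (ν := (volume : Measure ℝ).restrict (Set.Ioi 0))
    (f := fun ω t => ENNReal.ofReal (c * Real.exp (-c * t))
      * (if ENNReal.ofReal t < m ω then 1 else 0))
    (by
      apply Measurable.aemeasurable
      apply Measurable.mul
      · exact ENNReal.measurable_ofReal.comp (by fun_prop)
      · exact Measurable.ite
          (measurableSet_lt (ENNReal.measurable_ofReal.comp measurable_snd) (hm.comp measurable_fst))
          measurable_const measurable_const)
  have h1 : ∀ ω, (∫⁻ t in Set.Ioi (0:ℝ), ENNReal.ofReal (c * Real.exp (-c * t))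
      * (if ENNReal.ofReal t < m ω then 1 else 0))
      = ENNReal.ofReal (if m ω = ∞ then 1 else 1 - Real.exp (-c * (m ω).toReal)) := by
    intro ω
    rcases eq_or_ne (m ω) ∞ with h | h
    · rw [if_pos h]
      rw [setLIntegral_congr_fun measurableSet_Ioi
        (fun t _ => by rw [if_pos (h ▸ ENNReal.ofReal_lt_top), mul_one])]
      rw [aux_lIoi c hc, ENNReal.ofReal_one]
    · rw [if_neg h]
      have hsm : ∀ t ∈ Set.Ioi (0:ℝ),
          ENNReal.ofReal (c * Real.exp (-c * t)) * (if ENNReal.ofReal t < m ω then 1 else 0)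
          = Set.indicator (Set.Iio (m ω).toReal) (fun t => ENNReal.ofReal (c * Real.exp (-c * t))) t := by
        intro t ht
        rw [Set.indicator_apply]
        by_cases hlt : ENNReal.ofReal t < m ω
        · rw [if_pos hlt, mul_one,
            if_pos (by exact (ENNReal.ofReal_lt_iff_lt_toReal (le_of_lt ht) h).mp hlt)]
        · rw [if_neg hlt, mul_zero,
            if_neg (by exact fun hmem => hlt ((ENNReal.ofReal_lt_iff_lt_toReal (le_of_lt ht) h).mpr hmem))]
      rw [setLIntegral_congr_fun measurableSet_Ioi hsm,
        lintegral_indicator measurableSet_Iio, Measure.restrict_restrict measurableSet_Iio,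
        show Set.Iio (m ω).toReal ∩ Set.Ioi 0 = Set.Ioo 0 (m ω).toReal by
          ext t; simp [Set.mem_Ioo, and_comm]]
      exact aux_lIoo c _ hc ENNReal.toReal_nonneg
  calc ∫⁻ ω, ENNReal.ofReal (if m ω = ∞ then 1 else 1 - Real.exp (-c * (m ω).toReal)) ∂P
      = ∫⁻ ω, (∫⁻ t in Set.Ioi (0:ℝ), ENNReal.ofReal (c * Real.exp (-c * t))
          * (if ENNReal.ofReal t < m ω then 1 else 0)) ∂P := by
        exact lintegral_congr fun ω => (h1 ω).symm
    _ = ∫⁻ t in Set.Ioi (0:ℝ), ∫⁻ ω, ENNReal.ofReal (c * Real.exp (-c * t))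
          * (if ENNReal.ofReal t < m ω then 1 else 0) ∂P := hswap
    _ = ∫⁻ t in Set.Ioi (0:ℝ), ENNReal.ofReal (c * Real.exp (-c * t))
          * P {ω | ENNReal.ofReal t < m ω} := by
        apply lintegral_congr
        intro t
        rw [lintegral_const_mul' _ _ ENNReal.ofReal_ne_top]
        congr 1
        have : ∀ ω, (if ENNReal.ofReal t < m ω then (1:ℝ≥0∞) else 0)
            = Set.indicator {ω | ENNReal.ofReal t < m ω} 1 ω := fun ω => by
          rw [Set.indicator_apply]; rfl
        rw [lintegral_congr this, lintegral_indicator_one (by exact measurableSet_lt measurable_const hm)]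

/-- Equation (2.7): the Laplace exponent of the clonal splitting tree satisfies
`ψ_θ(x) = x ψ(x + θ)/(x + θ)`, where `V_θ = min(V, E)` with `E` exponential of rate `θ`
independent of the lifetime `V`. -/
theorem stmt_1 {Ω : Type*} [MeasurableSpace Ω] (P : Measure Ω) [IsProbabilityMeasure P]
    (θ b : ℝ) (hθ : 0 < θ) (hb : 0 < b)
    (V : Ω → ℝ≥0∞) (hV : Measurable V) (hVpos : ∀ ω, 0 < V ω)
    (E : Ω → ℝ) (hE : Measurable E) (hEnn : ∀ ω, 0 ≤ E ω)
    (hEexp : ∀ t : ℝ, 0 ≤ t → P {ω | t < E ω} = ENNReal.ofReal (Real.exp (-θ * t)))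
    (hindep : IndepFun V E P)
    (ψ : ℝ → ℝ)
    (hψ : ∀ y : ℝ, ψ y =
      y - b * ∫ ω, (if V ω = ∞ then 1 else 1 - Real.exp (-y * (V ω).toReal)) ∂P)
    (ψθ : ℝ → ℝ)
    (hψθ : ∀ x : ℝ, ψθ x =
      x - b * ∫ ω, (1 - Real.exp (-x * (min (V ω) (ENNReal.ofReal (E ω))).toReal)) ∂P) :
    ∀ x : ℝ, 0 ≤ x → ψθ x = x * ψ (x + θ) / (x + θ) := by
  intro x hx
  rcases hx.eq_or_lt with h0 | hxpos
  · rw [← h0]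
    simp [hψθ 0]
  have hxt : 0 < x + θ := by linarith
  set m : Ω → ℝ≥0∞ := fun ω => min (V ω) (ENNReal.ofReal (E ω)) with hm_def
  have hm : Measurable m := hV.min (ENNReal.measurable_ofReal.comp hE)
  have hmfin : ∀ ω, m ω ≠ ∞ := fun ω =>
    (lt_of_le_of_lt (min_le_right _ _) ENNReal.ofReal_lt_top).ne
  -- the ψ-side integral
  set L : ℝ≥0∞ := ∫⁻ ω, ENNReal.ofReal
    (if V ω = ∞ then 1 else 1 - Real.exp (-(x + θ) * (V ω).toReal)) ∂P with hL_def
  have hψmeas : Measurable fun ω =>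
      (if V ω = ∞ then (1:ℝ) else 1 - Real.exp (-(x + θ) * (V ω).toReal)) := by
    exact Measurable.ite (hV (measurableSet_singleton _)) measurable_const (by fun_prop)
  have hψnn : ∀ ω, 0 ≤ (if V ω = ∞ then (1:ℝ) else 1 - Real.exp (-(x + θ) * (V ω).toReal)) := by
    intro ω
    split_ifs
    · norm_num
    · have : Real.exp (-(x + θ) * (V ω).toReal) ≤ 1 := by
        rw [Real.exp_le_one_iff]
        have := ENNReal.toReal_nonneg (a := V ω)
        nlinarith
      linarith
  have hI : (∫ ω, (if V ω = ∞ then (1:ℝ) else 1 - Real.exp (-(x + θ) * (V ω).toReal)) ∂P)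
      = L.toReal := by
    rw [integral_eq_lintegral_of_nonneg_ae (ae_of_all _ hψnn) hψmeas.aestronglyMeasurable]
  have hLle : L ≤ 1 := by
    calc L ≤ ∫⁻ _, 1 ∂P := by
          apply lintegral_mono
          intro ω
          rw [ENNReal.ofReal_le_one]
          split_ifs
          · norm_num
          · have : 0 ≤ Real.exp (-(x + θ) * (V ω).toReal) := Real.exp_nonneg _
            linarith
      _ = 1 := by simp
  have hLne : L ≠ ∞ := (lt_of_le_of_lt hLle ENNReal.one_lt_top).ne
  -- the min-side integral via the key lemma
  have hminnn : ∀ ω, 0 ≤ 1 - Real.exp (-x * (m ω).toReal) := by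
    intro ω
    have : Real.exp (-x * (m ω).toReal) ≤ 1 := by
      rw [Real.exp_le_one_iff]
      have := ENNReal.toReal_nonneg (a := m ω)
      nlinarith
    linarith
  have hminmeas : Measurable fun ω => 1 - Real.exp (-x * (m ω).toReal) := by fun_prop
  have hmin_eq : (∫ ω, (1 - Real.exp (-x * (m ω).toReal)) ∂P)
      = (x / (x + θ)) * L.toReal := by
    have step1 : (∫ ω, (1 - Real.exp (-x * (m ω).toReal)) ∂P)
        = (∫⁻ ω, ENNReal.ofReal (1 - Real.exp (-x * (m ω).toReal)) ∂P).toReal := by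
      rw [integral_eq_lintegral_of_nonneg_ae (ae_of_all _ hminnn) hminmeas.aestronglyMeasurable]
    have step2 : (∫⁻ ω, ENNReal.ofReal (1 - Real.exp (-x * (m ω).toReal)) ∂P)
        = ∫⁻ ω, ENNReal.ofReal
            (if m ω = ∞ then 1 else 1 - Real.exp (-x * (m ω).toReal)) ∂P := by
      apply lintegral_congr
      intro ω
      rw [if_neg (hmfin ω)]
    have step3 := key P m hm x hxpos
    have step4 := key P V hV (x + θ) hxt
    -- rewrite the tail probability of m using independence and the law of E
    have hset : ∀ t : ℝ, t ∈ Set.Ioi (0:ℝ) →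
        P {ω | ENNReal.ofReal t < m ω}
          = P {ω | ENNReal.ofReal t < V ω} * ENNReal.ofReal (Real.exp (-θ * t)) := by
      intro t ht
      have ht' : (0:ℝ) < t := ht
      have hseteq : {ω | ENNReal.ofReal t < m ω}
          = V ⁻¹' Set.Ioi (ENNReal.ofReal t) ∩ E ⁻¹' Set.Ioi t := by
        ext ω
        simp only [hm_def, Set.mem_setOf_eq, lt_min_iff, Set.mem_inter_iff, Set.mem_preimage,
          Set.mem_Ioi]
        constructor
        · rintro ⟨h1, h2⟩
          exact ⟨h1, (ENNReal.ofReal_lt_ofReal_iff_of_nonneg ht'.le).mp h2⟩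
        · rintro ⟨h1, h2⟩
          exact ⟨h1, (ENNReal.ofReal_lt_ofReal_iff_of_nonneg ht'.le).mpr h2⟩
      rw [hseteq, hindep.measure_inter_preimage_eq_mul _ _ measurableSet_Ioi measurableSet_Ioi,
        ← hEexp t ht'.le]
      rfl
    have heq : ∀ t ∈ Set.Ioi (0:ℝ), ENNReal.ofReal (x * Real.exp (-x * t))
          * P {ω | ENNReal.ofReal t < m ω}
        = ENNReal.ofReal (x / (x + θ)) * (ENNReal.ofReal ((x + θ) * Real.exp (-(x + θ) * t))
            * P {ω | ENNReal.ofReal t < V ω}) := by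
      intro t ht
      have hre : x * Real.exp (-x * t) * Real.exp (-θ * t)
          = (x / (x + θ)) * ((x + θ) * Real.exp (-(x + θ) * t)) := by
        rw [mul_assoc, ← Real.exp_add, show -x * t + -θ * t = -(x + θ) * t by ring]
        field_simp
      calc ENNReal.ofReal (x * Real.exp (-x * t)) * P {ω | ENNReal.ofReal t < m ω}
          = ENNReal.ofReal (x * Real.exp (-x * t) * Real.exp (-θ * t))
            * P {ω | ENNReal.ofReal t < V ω} := by
            rw [hset t ht, mul_comm (P _) (ENNReal.ofReal (Real.exp (-θ * t))), ← mul_assoc,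
              ← ENNReal.ofReal_mul (by positivity)]
        _ = ENNReal.ofReal (x / (x + θ)) * (ENNReal.ofReal ((x + θ) * Real.exp (-(x + θ) * t))
            * P {ω | ENNReal.ofReal t < V ω}) := by
            rw [hre, ENNReal.ofReal_mul (by positivity), mul_assoc]
    have step5 : (∫⁻ t in Set.Ioi (0:ℝ), ENNReal.ofReal (x * Real.exp (-x * t))
          * P {ω | ENNReal.ofReal t < m ω})
        = ENNReal.ofReal (x / (x + θ)) * L := by
      rw [setLIntegral_congr_fun measurableSet_Ioi heq,
        lintegral_const_mul' _ _ ENNReal.ofReal_ne_top]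
      congr 1
      rw [hL_def, step4]
    rw [step1, step2, step3, step5, ENNReal.toReal_mul,
      ENNReal.toReal_ofReal (by positivity)]
  -- put everything together
  rw [hψθ x, hψ (x + θ), hmin_eq, hI]
  field_simp
end

section
/- Let W : [0,∞) → [0,∞) be measurable and locally integrable, let α ≥ 0, θ > 0, and let ψ : (α,∞) → (0,∞) satisfy ∫₀^∞ e^{−x r} W(r) dr = 1/ψ(x) for every x > α. Define W_θ(x) := e^{−θ x} W(x) + θ ∫₀^x W(y) e^{−θ y} dy. Then for every x > 0 with x + θ > α, the integral ∫₀^∞ e^{−x r} W_θ(r) dr converges and equals (x + θ)/(x ψ(x + θ)). -/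
open MeasureTheory Filter Topology

lemma exp_int {x : ℝ} (hx : 0 < x) (y : ℝ) :
    ∫ r in Set.Ioi y, Real.exp (-x*r) = Real.exp (-x*y)/x := by
  have hderiv : ∀ r ∈ Set.Ici y, HasDerivAt (fun r => -(Real.exp (-x*r)/x)) (Real.exp (-x*r)) r := by
    intro r _
    have h1 : HasDerivAt (fun r : ℝ => -x*r) (-x) r := by
      simpa using (hasDerivAt_id r).const_mul (-x)
    have h2 := ((h1.exp).div_const x).neg
    refine h2.congr_deriv ?_
    rw [mul_neg, neg_div, neg_neg, mul_div_assoc, div_self hx.ne', mul_one]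
  have htend : Tendsto (fun r => -(Real.exp (-x*r)/x)) atTop (𝓝 0) := by
    have h0 : Tendsto (fun r : ℝ => Real.exp (-x*r)) atTop (𝓝 0) := by
      have hmul : Tendsto (fun r : ℝ => x*r) atTop atTop := tendsto_id.const_mul_atTop hx
      have : Tendsto (fun r : ℝ => -x*r) atTop atBot := by
        simp only [neg_mul]; exact tendsto_neg_atBot_iff.mpr hmul
      exact Real.tendsto_exp_atBot.comp this
    simpa using (h0.div_const x).neg
  have := integral_Ioi_of_hasDerivAt_of_tendsto' hderiv
    ((exp_neg_integrableOn_Ioi y hx)) htend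
  rw [this]; ring

/-- `W_θ` (equation (2.6)) is the scale function of the clonal splitting tree:
its Laplace transform at `x` equals `(x+θ)/(x ψ(x+θ)) = 1/ψ_θ(x)`. -/
theorem stmt_2 (α θ : ℝ) (hα : 0 ≤ α) (hθ : 0 < θ)
    (W : ℝ → ℝ) (hWmeas : Measurable W) (hWnn : ∀ r : ℝ, 0 ≤ r → 0 ≤ W r)
    (hloc : ∀ x : ℝ, IntegrableOn W (Set.Icc 0 x))
    (ψ : ℝ → ℝ) (hψpos : ∀ x : ℝ, α < x → 0 < ψ x)
    (hint : ∀ x : ℝ, α < x → IntegrableOn (fun r => Real.exp (-x * r) * W r) (Set.Ioi 0))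
    (hLT : ∀ x : ℝ, α < x → ∫ r in Set.Ioi (0:ℝ), Real.exp (-x * r) * W r = 1 / ψ x)
    (Wθ : ℝ → ℝ)
    (hWθ : ∀ x : ℝ, Wθ x =
      Real.exp (-θ * x) * W x + θ * ∫ y in (0:ℝ)..x, W y * Real.exp (-θ * y)) :
    ∀ x : ℝ, 0 < x → α < x + θ →
      IntegrableOn (fun r => Real.exp (-x * r) * Wθ r) (Set.Ioi 0) ∧
      ∫ r in Set.Ioi (0:ℝ), Real.exp (-x * r) * Wθ r = (x + θ) / (x * ψ (x + θ)) := by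
  intro x hx hxc
  have hψc : 0 < ψ (x + θ) := hψpos _ hxc
  -- rewrite the exponential product
  have hexp_eq : ∀ y : ℝ, Real.exp (-x*y) * (W y * Real.exp (-θ*y))
      = Real.exp (-(x+θ)*y) * W y := by
    intro y
    rw [show -(x+θ)*y = -x*y + -θ*y by ring, Real.exp_add]
    ring
  have hgint : IntegrableOn (fun y => Real.exp (-x*y) * (W y * Real.exp (-θ*y))) (Set.Ioi 0) := by
    have := hint (x+θ) hxc
    simpa only [← hexp_eq] using this
  have hgval : ∫ y in Set.Ioi (0:ℝ), Real.exp (-x*y) * (W y * Real.exp (-θ*y)) = 1 / ψ (x+θ) := by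
    simp_rw [hexp_eq]
    exact hLT (x+θ) hxc
  -- the product-space kernel
  set S : Set (ℝ×ℝ) := {p | 0 < p.2 ∧ p.2 ≤ p.1} with hSdef
  have hSm : MeasurableSet S := by
    have : S = {p : ℝ×ℝ | 0 < p.2} ∩ {p : ℝ×ℝ | p.2 ≤ p.1} := rfl
    rw [this]
    exact (measurableSet_lt measurable_const measurable_snd).inter
      (measurableSet_le measurable_snd measurable_fst)
  set F : ℝ×ℝ → ℝ := fun p => Real.exp (-x*p.1) * (W p.2 * Real.exp (-θ*p.2)) with hFdef
  set h : ℝ → ℝ → ℝ := fun r y => S.indicator F (r, y) with hhdef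
  have hFm : Measurable F :=
    ((measurable_fst.const_mul (-x)).exp).mul
      ((hWmeas.comp measurable_snd).mul ((measurable_snd.const_mul (-θ)).exp))
  have hhm : Measurable (Function.uncurry h) := by
    have : Function.uncurry h = S.indicator F := rfl
    rw [this]
    exact hFm.indicator hSm
  have hhnn : ∀ r y, 0 ≤ h r y := by
    intro r y
    apply Set.indicator_nonneg
    intro p hp
    exact mul_nonneg (Real.exp_pos _).le
      (mul_nonneg (hWnn _ hp.1.le) (Real.exp_pos _).le)
  have hsec_r : ∀ r y : ℝ, h r y
      = (Set.Ioc 0 r).indicator (fun y => Real.exp (-x*r) * (W y * Real.exp (-θ*y))) y := by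
    intro r y
    simp only [hhdef, hSdef, hFdef, Set.indicator_apply, Set.mem_setOf_eq, Set.mem_Ioc]
  have hsec_y : ∀ y : ℝ, 0 < y → ∀ r, h r y
      = (Set.Ici y).indicator (fun r => Real.exp (-x*r) * (W y * Real.exp (-θ*y))) r := by
    intro y hy r
    simp only [hhdef, hSdef, hFdef, Set.indicator_apply, Set.mem_setOf_eq, Set.mem_Ici]
    by_cases hr : y ≤ r
    · simp [hr, hy]
    · simp [hr]
  -- inner integral over r, for fixed y > 0
  have hinner : ∀ y : ℝ, 0 < y →
      ∫ r in Set.Ioi (0:ℝ), h r y = (W y * Real.exp (-θ*y)) * (Real.exp (-x*y) / x) := by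
    intro y hy
    simp_rw [hsec_y y hy]
    rw [setIntegral_indicator measurableSet_Ici]
    have hset : Set.Ioi (0:ℝ) ∩ Set.Ici y = Set.Ici y :=
      Set.inter_eq_right.mpr (fun r hr => lt_of_lt_of_le hy hr)
    rw [hset, integral_Ici_eq_integral_Ioi]
    rw [MeasureTheory.integral_mul_const, exp_int hx y]
    ring
  -- integrability on product space
  have hIh : Integrable (Function.uncurry h)
      ((volume.restrict (Set.Ioi (0:ℝ))).prod (volume.restrict (Set.Ioi (0:ℝ)))) := by
    rw [MeasureTheory.integrable_prod_iff' hhm.aestronglyMeasurable]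
    constructor
    · filter_upwards [ae_restrict_mem measurableSet_Ioi] with y hy
      have heq : (fun r => Function.uncurry h (r, y))
          = (Set.Ici y).indicator (fun r => Real.exp (-x*r) * (W y * Real.exp (-θ*y))) :=
        funext (hsec_y y hy)
      rw [heq]
      exact ((exp_neg_integrableOn_Ioi 0 hx).mul_const _).indicator measurableSet_Ici
    · have heq : ∀ᵐ y ∂(volume.restrict (Set.Ioi (0:ℝ))),
          (1/x) * (Real.exp (-x*y) * (W y * Real.exp (-θ*y)))
            = ∫ r in Set.Ioi (0:ℝ), ‖Function.uncurry h (r, y)‖ := by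
        filter_upwards [ae_restrict_mem measurableSet_Ioi] with y hy
        have hn : ∀ r, ‖Function.uncurry h (r, y)‖ = h r y := fun r => by
          rw [Real.norm_eq_abs]; exact abs_of_nonneg (hhnn r y)
        simp_rw [hn]
        rw [hinner y hy]
        ring
      exact (hgint.const_mul (1/x)).congr heq
  have hswap := MeasureTheory.integral_integral_swap (f := h) hIh
  -- value of the swapped double integral
  have hRHS : ∫ y in Set.Ioi (0:ℝ), ∫ r in Set.Ioi (0:ℝ), h r y = (1/x) * (1 / ψ (x+θ)) := by
    have hae : ∀ᵐ y ∂(volume.restrict (Set.Ioi (0:ℝ))),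
        (∫ r in Set.Ioi (0:ℝ), h r y)
          = (1/x) * (Real.exp (-x*y) * (W y * Real.exp (-θ*y))) := by
      filter_upwards [ae_restrict_mem measurableSet_Ioi] with y hy
      rw [hinner y hy]; ring
    rw [integral_congr_ae hae, MeasureTheory.integral_const_mul, hgval]
  -- inner integral over y, for fixed r > 0
  have hFeq : ∀ r : ℝ, 0 < r → (∫ y in Set.Ioi (0:ℝ), h r y)
      = Real.exp (-x*r) * (∫ y in (0:ℝ)..r, W y * Real.exp (-θ*y)) := by
    intro r hr
    simp_rw [hsec_r r]
    rw [setIntegral_indicator measurableSet_Ioc]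
    have hset : Set.Ioi (0:ℝ) ∩ Set.Ioc 0 r = Set.Ioc 0 r :=
      Set.inter_eq_right.mpr (fun y hy => hy.1)
    rw [hset, intervalIntegral.integral_of_le hr.le, MeasureTheory.integral_const_mul]
  -- pointwise identity on Ioi 0
  have hmain : ∀ r : ℝ, 0 < r → Real.exp (-x*r) * Wθ r
      = Real.exp (-(x+θ)*r) * W r + θ * (∫ y in Set.Ioi (0:ℝ), h r y) := by
    intro r hr
    rw [hWθ r, hFeq r hr]
    have e : Real.exp (-x*r) * Real.exp (-θ*r) = Real.exp (-(x+θ)*r) := by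
      rw [← Real.exp_add]; congr 1; ring
    rw [mul_add, ← mul_assoc, e]
    ring
  have hI2 : IntegrableOn (fun r => ∫ y in Set.Ioi (0:ℝ), h r y) (Set.Ioi 0) :=
    hIh.integral_prod_left
  have hIfinal : IntegrableOn (fun r => Real.exp (-x * r) * Wθ r) (Set.Ioi 0) := by
    have hsum : IntegrableOn (fun r => Real.exp (-(x+θ)*r) * W r
        + θ * (∫ y in Set.Ioi (0:ℝ), h r y)) (Set.Ioi 0) :=
      (hint (x+θ) hxc).add (hI2.const_mul θ)
    refine hsum.congr ?_
    filter_upwards [ae_restrict_mem measurableSet_Ioi] with r hr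
    exact (hmain r hr).symm
  refine ⟨hIfinal, ?_⟩
  have h1 : ∫ r in Set.Ioi (0:ℝ), Real.exp (-x*r) * Wθ r
      = ∫ r in Set.Ioi (0:ℝ), (Real.exp (-(x+θ)*r) * W r
          + θ * (∫ y in Set.Ioi (0:ℝ), h r y)) := by
    apply integral_congr_ae
    filter_upwards [ae_restrict_mem measurableSet_Ioi] with r hr
    exact hmain r hr
  rw [h1, integral_add (hint (x+θ) hxc) (hI2.const_mul θ),
    hLT (x+θ) hxc, MeasureTheory.integral_const_mul, hswap, hRHS]
  field_simp
end

section
/- Let 0 ≤ θ < α and let W : [0,∞) → [0,∞) be measurable and locally integrable with W(t)e^{−α t} → c ∈ (0,∞) as t → ∞. Define W_θ(x) := e^{−θ x} W(x) + θ ∫₀^x W(y) e^{−θ y} dy. Then W_θ(t) e^{−(α−θ) t} → c α/(α − θ) as t → ∞. -/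
open MeasureTheory Filter

lemma exp_mul_integral (β a b : ℝ) (hβ : β ≠ 0) :
    ∫ y in a..b, Real.exp (β * y) = (Real.exp (β * b) - Real.exp (β * a)) / β := by
  rw [intervalIntegral.integral_comp_mul_left (fun x => Real.exp x) hβ]
  simp [div_eq_inv_mul]

/-- Core lemma: if `g(t) e^{-βt} → c` with `β > 0`, then
`e^{-βt} ∫₀^t g → c/β`. -/
lemma aux_avg (β c : ℝ) (hβ : 0 < β) (g : ℝ → ℝ)
    (hint : ∀ x : ℝ, IntegrableOn g (Set.Icc 0 x))
    (hg : Tendsto (fun t => g t * Real.exp (-β * t)) atTop (nhds c)) :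
    Tendsto (fun t => (∫ y in (0:ℝ)..t, g y) * Real.exp (-β * t)) atTop (nhds (c / β)) := by
  rw [Metric.tendsto_atTop] at hg ⊢
  intro ε hε
  have hε3 : 0 < ε * β / 3 := by positivity
  obtain ⟨T₀, hT₀⟩ := hg (ε * β / 3) hε3
  set T : ℝ := max T₀ 0 with hTdef
  have hT0 : (0:ℝ) ≤ T := le_max_right _ _
  have hTb : ∀ y, T ≤ y → |g y * Real.exp (-β * y) - c| ≤ ε * β / 3 := by
    intro y hy
    have := hT₀ y (le_trans (le_max_left _ _) hy)
    rw [Real.dist_eq] at this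
    exact this.le
  set F : ℝ → ℝ := fun t => ∫ y in (0:ℝ)..t, g y with hF
  set K : ℝ := |F T| + |c| * Real.exp (β * T) / β with hK
  have hK0 : 0 ≤ K := by positivity
  have hdecay : Tendsto (fun t : ℝ => K * Real.exp (-β * t)) atTop (nhds 0) := by
    have h1 : Tendsto (fun t : ℝ => Real.exp (-β * t)) atTop (nhds 0) := by
      apply Real.tendsto_exp_comp_nhds_zero.2
      have h3 : Tendsto (fun x : ℝ => β * -x) atTop atBot :=
        (tendsto_const_mul_atBot_of_pos hβ).2
          (tendsto_neg_atTop_atBot : Tendsto (fun x : ℝ => -x) atTop atBot)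
      exact h3.congr (fun x => by ring)
    simpa using h1.const_mul K
  rw [Metric.tendsto_atTop] at hdecay
  obtain ⟨T₁, hT₁⟩ := hdecay (ε / 3) (by positivity)
  refine ⟨max T T₁, fun t ht => ?_⟩
  have htT : T ≤ t := le_trans (le_max_left _ _) ht
  have htT₁ : T₁ ≤ t := le_trans (le_max_right _ _) ht
  have ht0 : (0:ℝ) ≤ t := le_trans hT0 htT
  -- integrability facts
  have hgi : IntervalIntegrable g volume T t :=
    (intervalIntegrable_iff_integrableOn_Icc_of_le htT).2
      ((hint t).mono_set (Set.Icc_subset_Icc_left hT0))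
  have hgi0T : IntervalIntegrable g volume 0 T :=
    (intervalIntegrable_iff_integrableOn_Icc_of_le hT0).2 (hint T)
  have hexpi : IntervalIntegrable (fun y => Real.exp (β * y)) volume T t :=
    (Real.continuous_exp.comp (continuous_const.mul continuous_id)).intervalIntegrable T t
  have hsplit : F t = F T + ∫ y in T..t, g y :=
    (intervalIntegral.integral_add_adjacent_intervals hgi0T hgi).symm
  -- main estimate on the tail integral
  have hest : |(∫ y in T..t, g y) - c * (Real.exp (β * t) - Real.exp (β * T)) / β|
      ≤ ε * β / 3 * ((Real.exp (β * t) - Real.exp (β * T)) / β) := by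
    have h1 : ∫ y in T..t, c * Real.exp (β * y)
        = c * (Real.exp (β * t) - Real.exp (β * T)) / β := by
      rw [intervalIntegral.integral_const_mul, exp_mul_integral β T t (ne_of_gt hβ)]
      ring
    have h2 : ∫ y in T..t, ε * β / 3 * Real.exp (β * y)
        = ε * β / 3 * ((Real.exp (β * t) - Real.exp (β * T)) / β) := by
      rw [intervalIntegral.integral_const_mul, exp_mul_integral β T t (ne_of_gt hβ)]
    rw [← h1, ← intervalIntegral.integral_sub hgi (hexpi.const_mul c)]
    have hbound : ∀ y ∈ Set.Icc T t,
        |g y - c * Real.exp (β * y)| ≤ ε * β / 3 * Real.exp (β * y) := by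
      intro y hy
      have hb := hTb y hy.1
      have hmul : Real.exp (-β * y) * Real.exp (β * y) = 1 := by
        rw [← Real.exp_add]; simp
      have hkey : (g y * Real.exp (-β * y) - c) * Real.exp (β * y)
          = g y - c * Real.exp (β * y) := by
        linear_combination (g y) * hmul
      rw [← hkey, abs_mul, abs_of_pos (Real.exp_pos _)]
      exact mul_le_mul_of_nonneg_right hb (Real.exp_nonneg _)
    calc |∫ y in T..t, (g y - c * Real.exp (β * y))|
        ≤ ∫ y in T..t, |g y - c * Real.exp (β * y)| :=
          intervalIntegral.abs_integral_le_integral_abs htT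
      _ ≤ ∫ y in T..t, ε * β / 3 * Real.exp (β * y) := by
          apply intervalIntegral.integral_mono_on htT
            (hgi.sub (hexpi.const_mul c)).abs (hexpi.const_mul _) hbound
      _ = ε * β / 3 * ((Real.exp (β * t) - Real.exp (β * T)) / β) := h2
  -- assemble
  show dist (F t * Real.exp (-β * t)) (c / β) < ε
  rw [Real.dist_eq]
  set E : ℝ := Real.exp (β * t) with hEdef
  set e : ℝ := Real.exp (β * T) with hedef
  set u : ℝ := Real.exp (-β * t) with hudef
  have hu : 0 < u := Real.exp_pos _
  have he : 0 < e := Real.exp_pos _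
  have hEu : E * u = 1 := by rw [hEdef, hudef, ← Real.exp_add]; simp
  have heq : F t * u - c / β
      = ((∫ y in T..t, g y) - c * (E - e) / β) * u + (F T - c * e / β) * u := by
    rw [hsplit]
    linear_combination (c / β) * hEu
  have hFK : |F T - c * e / β| ≤ K := by
    calc |F T - c * e / β| ≤ |F T| + |c * e / β| := abs_sub _ _
      _ = K := by
          rw [hK, abs_div, abs_mul, abs_of_pos he, abs_of_pos hβ]
  have h2 : ε * β / 3 * ((E - e) / β) * u ≤ ε / 3 := by
    have hq : ε * β / 3 * ((E - e) / β) * u = ε / 3 * ((E - e) * u) := by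
      field_simp
    rw [hq]
    nlinarith [hEu, mul_pos he hu]
  have h3 : K * u < ε / 3 := by
    have := hT₁ t htT₁
    rw [Real.dist_eq, sub_zero, abs_of_nonneg (mul_nonneg hK0 hu.le)] at this
    exact this
  calc |F t * u - c / β|
      ≤ |((∫ y in T..t, g y) - c * (E - e) / β) * u| + |(F T - c * e / β) * u| := by
        rw [heq]; exact abs_add_le _ _
    _ = |(∫ y in T..t, g y) - c * (E - e) / β| * u + |F T - c * e / β| * u := by
        rw [abs_mul, abs_mul, abs_of_pos hu]
    _ ≤ ε * β / 3 * ((E - e) / β) * u + K * u := by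
        exact add_le_add (mul_le_mul_of_nonneg_right hest hu.le)
          (mul_le_mul_of_nonneg_right hFK hu.le)
    _ < ε / 3 + ε / 3 := by linarith
    _ < ε := by linarith

/-- Lemma 3.2 (i): if `W(t) e^{−αt} → c` and `0 ≤ θ < α`, then
`W_θ(t) e^{−(α−θ)t} → c α/(α−θ)`. -/
theorem stmt_3 (θ α c : ℝ) (hθ : 0 ≤ θ) (hθα : θ < α) (hc : 0 < c)
    (W : ℝ → ℝ) (hWmeas : Measurable W) (hWnn : ∀ r : ℝ, 0 ≤ r → 0 ≤ W r)
    (hloc : ∀ x : ℝ, IntegrableOn W (Set.Icc 0 x))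
    (hlim : Tendsto (fun t => W t * Real.exp (-α * t)) atTop (nhds c)) :
    Tendsto (fun t =>
        (Real.exp (-θ * t) * W t + θ * ∫ y in (0:ℝ)..t, W y * Real.exp (-θ * y))
          * Real.exp (-(α - θ) * t))
      atTop (nhds (c * α / (α - θ))) := by
  set β : ℝ := α - θ with hβdef
  have hβ : 0 < β := sub_pos.2 hθα
  set g : ℝ → ℝ := fun y => W y * Real.exp (-θ * y) with hgdef
  have hintg : ∀ x : ℝ, IntegrableOn g (Set.Icc 0 x) := by
    intro x
    exact (hloc x).mul_continuousOn
      ((Real.continuous_exp.comp (continuous_const.mul continuous_id)).continuousOn)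
      isCompact_Icc
  have hexp : ∀ t : ℝ, Real.exp (-θ * t) * Real.exp (-β * t) = Real.exp (-α * t) := by
    intro t
    rw [← Real.exp_add]
    congr 1
    rw [hβdef]; ring
  have hglim : Tendsto (fun t => g t * Real.exp (-β * t)) atTop (nhds c) := by
    refine hlim.congr (fun t => ?_)
    rw [hgdef]
    simp only
    rw [mul_assoc, hexp t]
  have h2 := aux_avg β c hβ g hintg hglim
  have hfinal := hlim.add (h2.const_mul θ)
  have hval : c + θ * ((c / β)) = c * α / (α - θ) := by
    rw [hβdef]
    have hne : α - θ ≠ 0 := sub_ne_zero.2 hθα.ne'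
    field_simp
    ring
  rw [hval] at hfinal
  refine hfinal.congr (fun t => ?_)
  rw [hgdef]
  simp only
  linear_combination (-(W t)) * hexp t
end

section
/- Let 0 < α < θ and let W : [0,∞) → [0,∞) be measurable and locally integrable with W(t)e^{−α t} → c ∈ (0,∞) as t → ∞. Define W_θ(x) := e^{−θ x} W(x) + θ ∫₀^x W(y) e^{−θ y} dy. Then m := θ ∫₀^∞ W(y) e^{−θ y} dy is finite, W_θ(t) → m as t → ∞, and e^{(θ−α) t}(m − W_θ(t)) → c α/(θ − α) as t → ∞. -/
open MeasureTheory Filter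

private lemma exp_tail_integral (a : ℝ) {b : ℝ} (hb : 0 < b) :
    ∫ x in Set.Ioi a, Real.exp (-b * x) = Real.exp (-b * a) / b := by
  have hderiv : ∀ x ∈ Set.Ici a,
      HasDerivAt (fun x => -Real.exp (-b * x) / b) (Real.exp (-b * x)) x := by
    intro x _
    have h1 : HasDerivAt (fun x : ℝ => -b * x) (-b) x := by
      simpa using (hasDerivAt_id x).const_mul (-b)
    have h2 := (Real.hasDerivAt_exp (-b * x)).comp x h1
    have h3 := (h2.neg).div_const b
    rw [show Real.exp (-b * x) = -(Real.exp (-b * x) * -b) / b by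
      rw [mul_neg, neg_neg, mul_div_assoc, div_self hb.ne', mul_one]]
    exact h3
  have hten : Tendsto (fun x : ℝ => -Real.exp (-b * x) / b) atTop (nhds 0) := by
    have hbx : Tendsto (fun x : ℝ => -b * x) atTop atBot :=
      (tendsto_neg_atTop_atBot.comp (tendsto_id.const_mul_atTop hb)).congr fun x => by
        simp only [Function.comp_apply, id_eq]; ring
    have := (Real.tendsto_exp_atBot.comp hbx).neg.div_const b
    simpa using this
  have := integral_Ioi_of_hasDerivAt_of_tendsto' hderiv (exp_neg_integrableOn_Ioi a hb) hten
  rw [this]; ring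

set_option maxHeartbeats 1000000 in
/-- Lemma 3.2 (ii), equation (3.2): for `0 < α < θ`, `W_θ(t) → m = θ∫₀^∞ W e^{−θ·}` and
`e^{(θ−α)t}(m − W_θ(t)) → cα/(θ−α)`. -/
theorem stmt_4 (α θ c : ℝ) (hα : 0 < α) (hαθ : α < θ) (hc : 0 < c)
    (W : ℝ → ℝ) (hWmeas : Measurable W) (hWnn : ∀ r : ℝ, 0 ≤ r → 0 ≤ W r)
    (hloc : ∀ x : ℝ, IntegrableOn W (Set.Icc 0 x))
    (hlim : Tendsto (fun t => W t * Real.exp (-α * t)) atTop (nhds c)) :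
    IntegrableOn (fun y => W y * Real.exp (-θ * y)) (Set.Ioi 0) ∧
    Tendsto (fun t =>
        Real.exp (-θ * t) * W t + θ * ∫ y in (0:ℝ)..t, W y * Real.exp (-θ * y)) atTop
      (nhds (θ * ∫ y in Set.Ioi (0:ℝ), W y * Real.exp (-θ * y))) ∧
    Tendsto (fun t => Real.exp ((θ - α) * t) *
        ((θ * ∫ y in Set.Ioi (0:ℝ), W y * Real.exp (-θ * y)) -
          (Real.exp (-θ * t) * W t + θ * ∫ y in (0:ℝ)..t, W y * Real.exp (-θ * y))))
      atTop (nhds (c * α / (θ - α))) := by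
  have hθ : 0 < θ := hα.trans hαθ
  have hβ : 0 < θ - α := sub_pos.2 hαθ
  have hfg : ∀ y : ℝ, W y * Real.exp (-θ * y)
      = (W y * Real.exp (-α * y)) * Real.exp (-(θ - α) * y) := by
    intro y
    rw [mul_assoc, ← Real.exp_add]
    ring_nf
  have hfmeas : Measurable fun y => W y * Real.exp (-θ * y) :=
    hWmeas.mul (Real.measurable_exp.comp (measurable_id.const_mul (-θ)))
  have hexp0 : Tendsto (fun t : ℝ => Real.exp (-(θ - α) * t)) atTop (nhds 0) := by
    have hbx : Tendsto (fun x : ℝ => -(θ - α) * x) atTop atBot :=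
      (tendsto_neg_atTop_atBot.comp (tendsto_id.const_mul_atTop hβ)).congr fun x => by
        simp only [Function.comp_apply, id_eq]; ring
    exact Real.tendsto_exp_atBot.comp hbx
  -- eventual bound
  obtain ⟨T₀, hT₀⟩ := Metric.tendsto_atTop.1 hlim 1 one_pos
  -- Integrability
  have hInt : IntegrableOn (fun y => W y * Real.exp (-θ * y)) (Set.Ioi 0) := by
    set T := max T₀ 0 with hTdef
    have h1 : IntegrableOn (fun y => W y * Real.exp (-θ * y)) (Set.Ioc 0 T) := by
      refine Integrable.mono' ((hloc T).mono_set Set.Ioc_subset_Icc_self).abs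
        hfmeas.aestronglyMeasurable.restrict ?_
      filter_upwards [ae_restrict_mem measurableSet_Ioc] with y hy
      rw [norm_mul, Real.norm_eq_abs, Real.norm_eq_abs, Real.abs_exp]
      calc |W y| * Real.exp (-θ * y) ≤ |W y| * 1 := by
            gcongr
            exact Real.exp_le_one_iff.2 (by nlinarith [hy.1.le])
        _ = |W y| := mul_one _
    have h2 : IntegrableOn (fun y => W y * Real.exp (-θ * y)) (Set.Ioi T) := by
      refine Integrable.mono' ((exp_neg_integrableOn_Ioi T hβ).const_mul (c + 1))
        hfmeas.aestronglyMeasurable.restrict ?_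
      filter_upwards [ae_restrict_mem measurableSet_Ioi] with y hy
      have hy0 : (0:ℝ) ≤ y := le_trans (le_max_right T₀ 0) hy.le
      have hW : 0 ≤ W y := hWnn y hy0
      have hg : W y * Real.exp (-α * y) ≤ c + 1 := by
        have := hT₀ y (le_trans (le_max_left T₀ 0) hy.le)
        rw [Real.dist_eq] at this
        linarith [(abs_lt.1 this).2]
      rw [Real.norm_eq_abs, abs_of_nonneg (mul_nonneg hW (Real.exp_pos _).le), hfg y]
      have := Real.exp_pos (-(θ - α) * y)
      nlinarith [mul_nonneg hW (Real.exp_pos (-α * y)).le]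
    have := h1.union h2
    rwa [Set.Ioc_union_Ioi_eq_Ioi (le_max_right T₀ 0)] at this
  -- part 2
  have htail0 : Tendsto (fun t => Real.exp (-θ * t) * W t) atTop (nhds 0) := by
    have heq : (fun t => Real.exp (-θ * t) * W t)
        = fun t => (W t * Real.exp (-α * t)) * Real.exp (-(θ - α) * t) := by
      funext t; rw [← hfg t]; ring
    rw [heq]
    have := hlim.mul hexp0
    rwa [mul_zero] at this
  have h2 : Tendsto (fun t => ∫ y in (0:ℝ)..t, W y * Real.exp (-θ * y)) atTop
      (nhds (∫ y in Set.Ioi (0:ℝ), W y * Real.exp (-θ * y))) :=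
    intervalIntegral_tendsto_integral_Ioi 0 hInt tendsto_id
  have part2 : Tendsto (fun t =>
      Real.exp (-θ * t) * W t + θ * ∫ y in (0:ℝ)..t, W y * Real.exp (-θ * y)) atTop
      (nhds (θ * ∫ y in Set.Ioi (0:ℝ), W y * Real.exp (-θ * y))) := by
    simpa using htail0.add (h2.const_mul θ)
  refine ⟨hInt, part2, ?_⟩
  -- part 3 : tail asymptotics
  have htail : Tendsto (fun t => Real.exp ((θ - α) * t) *
      ∫ y in Set.Ioi t, W y * Real.exp (-θ * y)) atTop (nhds (c / (θ - α))) := by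
    rw [Metric.tendsto_atTop]
    intro ε hε
    have hε' : 0 < ε * (θ - α) / 2 := by positivity
    obtain ⟨T₁, hT₁⟩ := Metric.tendsto_atTop.1 hlim (ε * (θ - α) / 2) hε'
    refine ⟨max T₁ 0, fun t ht => ?_⟩
    have ht0 : (0:ℝ) ≤ t := le_trans (le_max_right _ _) ht
    have htT : T₁ ≤ t := le_trans (le_max_left _ _) ht
    have hIt : IntegrableOn (fun y => W y * Real.exp (-θ * y)) (Set.Ioi t) :=
      hInt.mono_set (Set.Ioi_subset_Ioi ht0)
    have hIe : IntegrableOn (fun y => Real.exp (-(θ - α) * y)) (Set.Ioi t) :=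
      exp_neg_integrableOn_Ioi t hβ
    have hbnd : ∀ y ∈ Set.Ioi t,
        (c - ε * (θ - α) / 2) * Real.exp (-(θ - α) * y) ≤ W y * Real.exp (-θ * y)
        ∧ W y * Real.exp (-θ * y) ≤ (c + ε * (θ - α) / 2) * Real.exp (-(θ - α) * y) := by
      intro y hy
      have hd := hT₁ y (htT.trans hy.le)
      rw [Real.dist_eq] at hd
      obtain ⟨hd1, hd2⟩ := abs_lt.1 hd
      have hee := (Real.exp_pos (-(θ - α) * y)).le
      rw [hfg y]
      constructor
      · have : c - ε * (θ - α) / 2 ≤ W y * Real.exp (-α * y) := by linarith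
        exact mul_le_mul_of_nonneg_right this hee
      · have : W y * Real.exp (-α * y) ≤ c + ε * (θ - α) / 2 := by linarith
        exact mul_le_mul_of_nonneg_right this hee
    have hlow : (c - ε * (θ - α) / 2) * (Real.exp (-(θ - α) * t) / (θ - α))
        ≤ ∫ y in Set.Ioi t, W y * Real.exp (-θ * y) := by
      have := setIntegral_mono_on (μ := volume) (hIe.const_mul _) hIt measurableSet_Ioi
        (fun y hy => (hbnd y hy).1)
      rwa [integral_const_mul, exp_tail_integral t hβ] at this
    have hhigh : (∫ y in Set.Ioi t, W y * Real.exp (-θ * y))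
        ≤ (c + ε * (θ - α) / 2) * (Real.exp (-(θ - α) * t) / (θ - α)) := by
      have := setIntegral_mono_on (μ := volume) hIt (hIe.const_mul _) measurableSet_Ioi
        (fun y hy => (hbnd y hy).2)
      rwa [integral_const_mul, exp_tail_integral t hβ] at this
    have hept : (0:ℝ) < Real.exp ((θ - α) * t) := Real.exp_pos _
    have hcancel : Real.exp ((θ - α) * t) * Real.exp (-(θ - α) * t) = 1 := by
      rw [← Real.exp_add, show (θ - α) * t + -(θ - α) * t = 0 by ring, Real.exp_zero]
    have hl2 : c / (θ - α) - ε / 2 ≤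
        Real.exp ((θ - α) * t) * ∫ y in Set.Ioi t, W y * Real.exp (-θ * y) := by
      have := mul_le_mul_of_nonneg_left hlow hept.le
      have heq : Real.exp ((θ - α) * t) *
          ((c - ε * (θ - α) / 2) * (Real.exp (-(θ - α) * t) / (θ - α)))
          = c / (θ - α) - ε / 2 := by
        rw [show Real.exp ((θ - α) * t) *
            ((c - ε * (θ - α) / 2) * (Real.exp (-(θ - α) * t) / (θ - α)))
            = (Real.exp ((θ - α) * t) * Real.exp (-(θ - α) * t)) *
              ((c - ε * (θ - α) / 2) / (θ - α)) by ring, hcancel, one_mul]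
        rw [sub_div]
        congr 1
        rw [div_eq_div_iff hβ.ne' (two_ne_zero)]
        ring
      rw [heq] at this
      linarith
    have hh2 : Real.exp ((θ - α) * t) * (∫ y in Set.Ioi t, W y * Real.exp (-θ * y))
        ≤ c / (θ - α) + ε / 2 := by
      have := mul_le_mul_of_nonneg_left hhigh hept.le
      have heq : Real.exp ((θ - α) * t) *
          ((c + ε * (θ - α) / 2) * (Real.exp (-(θ - α) * t) / (θ - α)))
          = c / (θ - α) + ε / 2 := by
        rw [show Real.exp ((θ - α) * t) *
            ((c + ε * (θ - α) / 2) * (Real.exp (-(θ - α) * t) / (θ - α)))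
            = (Real.exp ((θ - α) * t) * Real.exp (-(θ - α) * t)) *
              ((c + ε * (θ - α) / 2) / (θ - α)) by ring, hcancel, one_mul]
        rw [add_div]
        congr 1
        rw [div_eq_div_iff hβ.ne' (two_ne_zero)]
        ring
      rw [heq] at this
      linarith
    rw [Real.dist_eq]
    rw [abs_lt]
    constructor <;> linarith
  -- combine
  have key : Tendsto (fun t => θ * (Real.exp ((θ - α) * t) *
      ∫ y in Set.Ioi t, W y * Real.exp (-θ * y)) - W t * Real.exp (-α * t))
      atTop (nhds (θ * (c / (θ - α)) - c)) := (htail.const_mul θ).sub hlim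
  have hval : θ * (c / (θ - α)) - c = c * α / (θ - α) := by
    field_simp
    ring
  rw [hval] at key
  refine key.congr' ?_
  filter_upwards [eventually_ge_atTop (0:ℝ)] with t ht0
  have hsplit : (∫ y in Set.Ioi (0:ℝ), W y * Real.exp (-θ * y))
      = (∫ y in (0:ℝ)..t, W y * Real.exp (-θ * y))
        + ∫ y in Set.Ioi t, W y * Real.exp (-θ * y) := by
    rw [intervalIntegral.integral_of_le ht0]
    rw [← setIntegral_union (Set.Ioc_disjoint_Ioi le_rfl) measurableSet_Ioi
      (hInt.mono_set Set.Ioc_subset_Ioi_self) (hInt.mono_set (Set.Ioi_subset_Ioi ht0))]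
    rw [Set.Ioc_union_Ioi_eq_Ioi ht0]
  have hcancel2 : Real.exp ((θ - α) * t) * Real.exp (-θ * t) = Real.exp (-α * t) := by
    rw [← Real.exp_add]; congr 1; ring
  rw [hsplit, show Real.exp ((θ - α) * t) *
      (θ * ((∫ y in (0:ℝ)..t, W y * Real.exp (-θ * y))
          + ∫ y in Set.Ioi t, W y * Real.exp (-θ * y))
        - (Real.exp (-θ * t) * W t + θ * ∫ y in (0:ℝ)..t, W y * Real.exp (-θ * y)))
      = θ * (Real.exp ((θ - α) * t) * ∫ y in Set.Ioi t, W y * Real.exp (-θ * y))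
        - (Real.exp ((θ - α) * t) * Real.exp (-θ * t)) * W t by ring, hcancel2]
  ring
end

section
/- Let 0 < α < θ and let W : [0,∞) → [1,∞) be nondecreasing with W(0) = 1 and W(t)e^{−α t} → c ∈ (0,∞) as t → ∞. Define W_θ(x) := e^{−θ x} W(x) + θ ∫₀^x W(y) e^{−θ y} dy, m := θ ∫₀^∞ W(y) e^{−θ y} dy, φ := 1 − 1/m, and ρ(t) := (1/φ)(1/W_θ(t) − 1/m). Then m ∈ (1, ∞), W_θ is nondecreasing with W_θ(0) = 1, 1 − 1/W_θ(t) = φ(1 − ρ(t)) for all t ≥ 0, ρ is nonincreasing, and e^{(θ−α) t} ρ(t) → c α/((θ−α) m² φ) as t → ∞. -/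
open MeasureTheory Filter

lemma exp_hasDerivAt (b y : ℝ) (hb : b ≠ 0) :
    HasDerivAt (fun y => -Real.exp (-b*y)/b) (Real.exp (-b*y)) y := by
  have h := ((Real.hasDerivAt_exp (-b*y)).comp y ((hasDerivAt_id y).const_mul (-b)))
  have h2 := (h.const_mul (-(1/b)))
  have heq : (fun y : ℝ => -Real.exp (-b*y)/b)
      = fun y => -(1/b) * (Real.exp ∘ HMul.hMul (-b)) y := by
    funext z; simp [Function.comp]; ring
  rw [heq]
  convert h2 using 1
  exacts [rfl, rfl, by field_simp]

lemma exp_tendsto_zero (b : ℝ) (hb : 0 < b) :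
    Tendsto (fun y : ℝ => Real.exp (-b*y)) atTop (nhds 0) := by
  have h1 : Tendsto (fun y : ℝ => b*y) atTop atTop :=
    Tendsto.const_mul_atTop hb tendsto_id
  have := Real.tendsto_exp_neg_atTop_nhds_zero.comp h1
  simpa only [Function.comp_def, neg_mul] using this

lemma exp_integral_Ioi (b a : ℝ) (hb : 0 < b) :
    ∫ y in Set.Ioi a, Real.exp (-b*y) = Real.exp (-b*a)/b := by
  have hlim : Tendsto (fun y => -Real.exp (-b*y)/b) atTop (nhds 0) := by
    have := ((exp_tendsto_zero b hb).div_const b).neg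
    simp only [neg_div, zero_div, neg_zero] at this ⊢
    exact this
  have h := integral_Ioi_of_hasDerivAt_of_tendsto'
    (fun x (_ : x ∈ Set.Ici a) => exp_hasDerivAt b x hb.ne') (exp_neg_integrableOn_Ioi a hb) hlim
  rw [h]; ring

lemma exp_integral_interval (b a x : ℝ) (hb : b ≠ 0) :
    ∫ y in a..x, Real.exp (-b*y) = (Real.exp (-b*a) - Real.exp (-b*x))/b := by
  have h := intervalIntegral.integral_eq_sub_of_hasDerivAt
    (fun y (_ : y ∈ Set.uIcc a x) => exp_hasDerivAt b y hb)
    (Continuous.intervalIntegrable (by continuity) a x)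
  rw [h]; ring

set_option maxHeartbeats 1000000 in
/-- Lemma 3.2 (ii): decomposition `1 − 1/W_θ(t) = φ(1 − ρ(t))` with `φ = 1 − 1/m`, and
asymptotics (3.3): `e^{(θ−α)t} ρ(t) → cα/((θ−α) m² φ)`. -/
theorem stmt_5 (α θ c : ℝ) (hα : 0 < α) (hαθ : α < θ) (hc : 0 < c)
    (W : ℝ → ℝ) (hWmono : MonotoneOn W (Set.Ici 0)) (hW0 : W 0 = 1)
    (hW1 : ∀ x : ℝ, 0 ≤ x → 1 ≤ W x)
    (hlim : Tendsto (fun t => W t * Real.exp (-α * t)) atTop (nhds c))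
    (Wθ : ℝ → ℝ)
    (hWθ : ∀ x : ℝ, Wθ x =
      Real.exp (-θ * x) * W x + θ * ∫ y in (0:ℝ)..x, W y * Real.exp (-θ * y))
    (m φ : ℝ) (hm : m = θ * ∫ y in Set.Ioi (0:ℝ), W y * Real.exp (-θ * y))
    (hφ : φ = 1 - 1 / m)
    (ρ : ℝ → ℝ) (hρ : ∀ t : ℝ, ρ t = (1 / φ) * (1 / Wθ t - 1 / m)) :
    IntegrableOn (fun y => W y * Real.exp (-θ * y)) (Set.Ioi 0) ∧
    1 < m ∧
    MonotoneOn Wθ (Set.Ici 0) ∧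
    Wθ 0 = 1 ∧
    (∀ t : ℝ, 0 ≤ t → 1 - 1 / Wθ t = φ * (1 - ρ t)) ∧
    AntitoneOn ρ (Set.Ici 0) ∧
    Tendsto (fun t => Real.exp ((θ - α) * t) * ρ t) atTop
      (nhds (c * α / ((θ - α) * m ^ 2 * φ))) := by
  have hθ : 0 < θ := hα.trans hαθ
  have hθα : 0 < θ - α := by linarith
  set f : ℝ → ℝ := fun y => W y * Real.exp (-θ * y) with hf
  -- global bound
  obtain ⟨B, hB1, hB⟩ : ∃ B, 1 ≤ B ∧ ∀ y : ℝ, 0 ≤ y → W y * Real.exp (-α*y) ≤ B := by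
    obtain ⟨T, hT⟩ := (Metric.tendsto_atTop.mp hlim) 1 one_pos
    set T0 := max T 0 with hT0def
    have hT0 : ∀ y, T0 ≤ y → W y * Real.exp (-α*y) ≤ c + 1 := by
      intro y hy
      have h := hT y (le_trans (le_max_left _ _) hy)
      rw [Real.dist_eq] at h
      have h2 := (abs_lt.mp h).2
      linarith
    have hexp1 : 1 ≤ Real.exp (α*T0) := Real.one_le_exp (by positivity)
    refine ⟨(c+1) * Real.exp (α * T0), by nlinarith, ?_⟩
    intro y hy
    by_cases h : T0 ≤ y
    · have h1 := hT0 y h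
      nlinarith
    · push_neg at h
      have h1 : W y ≤ W T0 := hWmono hy (le_max_right T 0) h.le
      have h2 := hT0 T0 le_rfl
      have e : Real.exp (-α*T0) * Real.exp (α*T0) = 1 := by
        rw [← Real.exp_add]; simp
      have h3 : W T0 ≤ (c+1) * Real.exp (α*T0) := by
        nlinarith [Real.exp_pos (α*T0), hW1 T0 (le_max_right T 0)]
      have h4 : Real.exp (-α*y) ≤ 1 := Real.exp_le_one_iff.mpr (by nlinarith)
      nlinarith [hW1 y hy, Real.exp_pos (-α*y)]
  -- integrability on tails
  have hfint : ∀ t : ℝ, 0 ≤ t → IntegrableOn f (Set.Ioi t) := by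
    intro t ht
    have hWmeas : Measurable (fun y : ℝ => W (max y 0)) := by
      apply Monotone.measurable
      intro a b hab
      exact hWmono (le_max_right a 0) (le_max_right b 0) (max_le_max hab le_rfl)
    have hmeas : AEStronglyMeasurable f (volume.restrict (Set.Ioi t)) := by
      have h1 : AEStronglyMeasurable (fun y => W (max y 0) * Real.exp (-θ*y))
          (volume.restrict (Set.Ioi t)) :=
        ((hWmeas.mul (Real.measurable_exp.comp (measurable_const.mul measurable_id))).aestronglyMeasurable)
      apply h1.congr
      filter_upwards [ae_restrict_mem measurableSet_Ioi] with y hy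
      have : max y 0 = y := max_eq_left (le_trans ht (le_of_lt hy))
      rw [hf]; simp [this]
    refine Integrable.mono' (g := fun y => B * Real.exp (-(θ-α)*y))
      ((exp_neg_integrableOn_Ioi t hθα).const_mul B) hmeas ?_
    filter_upwards [ae_restrict_mem measurableSet_Ioi] with y hy
    have hy0 : 0 ≤ y := le_trans ht hy.le
    have hWy : 0 ≤ W y := by linarith [hW1 y hy0]
    have hnn : 0 ≤ f y := mul_nonneg hWy (Real.exp_pos _).le
    rw [Real.norm_eq_abs, abs_of_nonneg hnn]
    have e : Real.exp (-θ*y) = Real.exp (-α*y) * Real.exp (-(θ-α)*y) := by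
      rw [← Real.exp_add]; ring_nf
    show W y * Real.exp (-θ*y) ≤ _
    rw [e, ← mul_assoc]
    exact mul_le_mul_of_nonneg_right (hB y hy0) (Real.exp_pos _).le
  -- interval integrability
  have hII : ∀ a b : ℝ, 0 ≤ a → a ≤ b → IntervalIntegrable f volume a b := by
    intro a b ha hab
    rw [intervalIntegrable_iff]
    refine (hfint a ha).mono_set ?_
    rw [Set.uIoc_of_le hab]
    exact Set.Ioc_subset_Ioi_self
  -- tail identity
  have hkey : ∀ t : ℝ, 0 ≤ t →
      m - Wθ t = θ * (∫ y in Set.Ioi t, f y) - Real.exp (-θ*t) * W t := by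
    intro t ht
    have hsplit : ∫ y in Set.Ioi (0:ℝ), f y
        = (∫ y in Set.Ioc 0 t, f y) + ∫ y in Set.Ioi t, f y := by
      rw [← setIntegral_union (Set.Ioc_disjoint_Ioi le_rfl) measurableSet_Ioi
        ((hfint 0 le_rfl).mono_set Set.Ioc_subset_Ioi_self) (hfint t ht),
        Set.Ioc_union_Ioi_eq_Ioi ht]
    rw [hm, hWθ t, hsplit, intervalIntegral.integral_of_le ht]
    ring
  have hWθ0 : Wθ 0 = 1 := by
    have := hWθ 0
    simp at this
    simpa [hW0] using this
  have hmono : MonotoneOn Wθ (Set.Ici 0) := by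
    intro x1 hx1 x2 hx2 h12
    simp only [Set.mem_Ici] at hx1 hx2
    have hadj : ∫ y in (0:ℝ)..x2, f y = (∫ y in (0:ℝ)..x1, f y) + ∫ y in x1..x2, f y :=
      (intervalIntegral.integral_add_adjacent_intervals (hII 0 x1 le_rfl hx1)
        (hII x1 x2 hx1 h12)).symm
    have hlow : W x1 * ((Real.exp (-θ*x1) - Real.exp (-θ*x2))/θ) ≤ ∫ y in x1..x2, f y := by
      have hmon := intervalIntegral.integral_mono_on (f := fun y => W x1 * Real.exp (-θ*y))
        (g := f) h12 ((continuous_const.mul (Real.continuous_exp.comp (continuous_const.mul continuous_id))).intervalIntegrable x1 x2)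
        (hII x1 x2 hx1 h12) (fun y hy => ?_)
      · rwa [intervalIntegral.integral_const_mul, exp_integral_interval θ x1 x2 hθ.ne'] at hmon
      · exact mul_le_mul_of_nonneg_right (hWmono hx1 (hx1.trans hy.1) hy.1) (Real.exp_pos _).le
    have hlow2 : W x1 * (Real.exp (-θ*x1) - Real.exp (-θ*x2)) ≤ θ * ∫ y in x1..x2, f y := by
      have h := mul_le_mul_of_nonneg_left hlow hθ.le
      calc W x1 * (Real.exp (-θ*x1) - Real.exp (-θ*x2))
          = θ * (W x1 * ((Real.exp (-θ*x1) - Real.exp (-θ*x2))/θ)) := by field_simp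
        _ ≤ _ := h
    rw [hWθ x1, hWθ x2, hadj]
    have hWineq := hWmono hx1 hx2 h12
    nlinarith [Real.exp_pos (-θ*x2), Real.exp_pos (-θ*x1)]
  have hWθ1 : ∀ t : ℝ, 0 ≤ t → 1 ≤ Wθ t := fun t ht => by
    simpa [hWθ0] using hmono (Set.self_mem_Ici) ht ht
  have hle : ∀ t : ℝ, 0 ≤ t → Wθ t ≤ m := by
    intro t ht
    have h1 : W t * (Real.exp (-θ*t)/θ) ≤ ∫ y in Set.Ioi t, f y := by
      have hgi : IntegrableOn (fun y => W t * Real.exp (-θ*y)) (Set.Ioi t) :=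
        (exp_neg_integrableOn_Ioi t hθ).const_mul (W t)
      have hmon := setIntegral_mono_on hgi (hfint t ht) measurableSet_Ioi
        (fun y hy => mul_le_mul_of_nonneg_right
          (hWmono ht (ht.trans (le_of_lt hy)) (le_of_lt hy)) (Real.exp_pos _).le)
      rwa [integral_const_mul, exp_integral_Ioi θ t hθ] at hmon
    have h1' : W t * Real.exp (-θ*t) ≤ θ * ∫ y in Set.Ioi t, f y := by
      have h := mul_le_mul_of_nonneg_left h1 hθ.le
      calc W t * Real.exp (-θ*t) = θ * (W t * (Real.exp (-θ*t)/θ)) := by field_simp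
        _ ≤ _ := h
    have h2 := hkey t ht
    linarith
  have hm1 : 1 < m := by
    have h2 : ∀ᶠ t in atTop, c/2 < W t * Real.exp (-α * t) :=
      hlim.eventually (eventually_gt_nhds (by linarith))
    have h3 : ∀ᶠ t in atTop, Real.exp (-α*t) < c/4 :=
      (exp_tendsto_zero α hα).eventually (eventually_lt_nhds (by linarith))
    obtain ⟨t0, ht0c, ht0e, ht00⟩ := (h2.and (h3.and (eventually_ge_atTop 0))).exists
    have hW2 : 2 ≤ W t0 := by nlinarith [Real.exp_pos (-α*t0), hW1 t0 ht00]
    have hlow : (Real.exp (-θ*0) - Real.exp (-θ*t0))/θ ≤ ∫ y in (0:ℝ)..t0, f y := by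
      have hmon := intervalIntegral.integral_mono_on (f := fun y => Real.exp (-θ*y))
        (g := f) ht00 ((Real.continuous_exp.comp (continuous_const.mul continuous_id)).intervalIntegrable 0 t0)
        (hII 0 t0 le_rfl ht00) (fun y hy => ?_)
      · rwa [exp_integral_interval θ 0 t0 hθ.ne'] at hmon
      · have h1 := hW1 y hy.1
        show Real.exp (-θ*y) ≤ W y * Real.exp (-θ*y)
        nlinarith [Real.exp_pos (-θ*y)]
    have hlow2 : Real.exp (-θ*(0:ℝ)) - Real.exp (-θ*t0) ≤ θ * ∫ y in (0:ℝ)..t0, f y := by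
      have h := mul_le_mul_of_nonneg_left hlow hθ.le
      calc Real.exp (-θ*(0:ℝ)) - Real.exp (-θ*t0)
          = θ * ((Real.exp (-θ*(0:ℝ)) - Real.exp (-θ*t0))/θ) := by field_simp
        _ ≤ _ := h
    have hWθt0 : 1 + Real.exp (-θ*t0) ≤ Wθ t0 := by
      rw [hWθ t0]
      have e0 : Real.exp (-θ*(0:ℝ)) = 1 := by simp
      rw [e0] at hlow2
      nlinarith [Real.exp_pos (-θ*t0)]
    have := hle t0 ht00
    nlinarith [Real.exp_pos (-θ*t0)]
  have hφpos : 0 < φ := by rw [hφ]; have : 1/m < 1 := by rw [div_lt_one] <;> linarith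
                           linarith
  have hid : ∀ t : ℝ, 0 ≤ t → 1 - 1 / Wθ t = φ * (1 - ρ t) := by
    intro t ht
    have h1 : (0:ℝ) < Wθ t := lt_of_lt_of_le one_pos (hWθ1 t ht)
    rw [hρ, mul_sub, mul_one, ← mul_assoc, mul_one_div_cancel (ne_of_gt hφpos), one_mul, hφ]
    ring
  have hanti : AntitoneOn ρ (Set.Ici 0) := by
    intro t1 ht1 t2 ht2 h12
    have h1 : (0:ℝ) < Wθ t1 := lt_of_lt_of_le one_pos (hWθ1 t1 ht1)
    have h2 : Wθ t1 ≤ Wθ t2 := hmono ht1 ht2 h12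
    rw [hρ, hρ]
    have : 1 / Wθ t2 ≤ 1 / Wθ t1 := one_div_le_one_div_of_le h1 h2
    have h1φ : 0 ≤ 1/φ := by positivity
    nlinarith
  -- tail limit
  have htail : Tendsto (fun t => Real.exp ((θ-α)*t) * ∫ y in Set.Ioi t, f y) atTop
      (nhds (c/(θ-α))) := by
    rw [Metric.tendsto_atTop]
    intro ε hε
    set ε' := min (ε*(θ-α)/2) (c/2) with hε'def
    have hε'pos : 0 < ε' := lt_min (by positivity) (by positivity)
    have hε'le : ε' ≤ ε*(θ-α)/2 := min_le_left _ _
    clear hε'def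
    clear_value ε'
    obtain ⟨T, hT⟩ := Metric.tendsto_atTop.mp hlim ε' hε'pos
    refine ⟨max T 0, fun t ht => ?_⟩
    have htT : T ≤ t := le_trans (le_max_left _ _) ht
    have ht0 : 0 ≤ t := le_trans (le_max_right _ _) ht
    have hbound : ∀ y, y ∈ Set.Ioi t →
        c - ε' ≤ W y * Real.exp (-α*y) ∧ W y * Real.exp (-α*y) ≤ c + ε' := by
      intro y hy
      have h := hT y (le_trans htT (le_of_lt hy))
      rw [Real.dist_eq] at h
      have h2 := abs_lt.mp h
      exact ⟨by linarith [h2.1], by linarith [h2.2]⟩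
    have hedec : ∀ y : ℝ, Real.exp (-θ*y) = Real.exp (-α*y) * Real.exp (-(θ-α)*y) := by
      intro y; rw [← Real.exp_add]; ring_nf
    have hupper : ∫ y in Set.Ioi t, f y ≤ (c+ε') * (Real.exp (-(θ-α)*t)/(θ-α)) := by
      have hgi : IntegrableOn (fun y => (c+ε') * Real.exp (-(θ-α)*y)) (Set.Ioi t) :=
        (exp_neg_integrableOn_Ioi t hθα).const_mul _
      have hmon := setIntegral_mono_on (hfint t ht0) hgi measurableSet_Ioi (fun y hy => ?_)
      · rwa [integral_const_mul, exp_integral_Ioi _ _ hθα] at hmon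
      · show W y * Real.exp (-θ*y) ≤ _
        rw [hedec y, ← mul_assoc]
        exact mul_le_mul_of_nonneg_right (hbound y hy).2 (Real.exp_pos _).le
    have hlower : (c-ε') * (Real.exp (-(θ-α)*t)/(θ-α)) ≤ ∫ y in Set.Ioi t, f y := by
      have hgi : IntegrableOn (fun y => (c-ε') * Real.exp (-(θ-α)*y)) (Set.Ioi t) :=
        (exp_neg_integrableOn_Ioi t hθα).const_mul _
      have hmon := setIntegral_mono_on hgi (hfint t ht0) measurableSet_Ioi (fun y hy => ?_)
      · rwa [integral_const_mul, exp_integral_Ioi _ _ hθα] at hmon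
      · show _ ≤ W y * Real.exp (-θ*y)
        rw [hedec y, ← mul_assoc]
        exact mul_le_mul_of_nonneg_right (hbound y hy).1 (Real.exp_pos _).le
    have hE := Real.exp_pos ((θ-α)*t)
    have hEE : Real.exp ((θ-α)*t) * Real.exp (-(θ-α)*t) = 1 := by
      have h0 : (θ-α)*t + -(θ-α)*t = 0 := by ring
      rw [← Real.exp_add, h0, Real.exp_zero]
    have hXu : Real.exp ((θ-α)*t) * ((c+ε') * (Real.exp (-(θ-α)*t)/(θ-α))) = (c+ε')/(θ-α) := by
      calc Real.exp ((θ-α)*t) * ((c+ε') * (Real.exp (-(θ-α)*t)/(θ-α)))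
          = (Real.exp ((θ-α)*t) * Real.exp (-(θ-α)*t)) * ((c+ε')/(θ-α)) := by ring
        _ = (c+ε')/(θ-α) := by rw [hEE]; ring
    have hXl : Real.exp ((θ-α)*t) * ((c-ε') * (Real.exp (-(θ-α)*t)/(θ-α))) = (c-ε')/(θ-α) := by
      calc Real.exp ((θ-α)*t) * ((c-ε') * (Real.exp (-(θ-α)*t)/(θ-α)))
          = (Real.exp ((θ-α)*t) * Real.exp (-(θ-α)*t)) * ((c-ε')/(θ-α)) := by ring
        _ = (c-ε')/(θ-α) := by rw [hEE]; ring
    have hu2 : Real.exp ((θ-α)*t) * ∫ y in Set.Ioi t, f y ≤ (c+ε')/(θ-α) := by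
      calc Real.exp ((θ-α)*t) * ∫ y in Set.Ioi t, f y
          ≤ Real.exp ((θ-α)*t) * ((c+ε') * (Real.exp (-(θ-α)*t)/(θ-α))) :=
            mul_le_mul_of_nonneg_left hupper hE.le
        _ = _ := hXu
    have hl2 : (c-ε')/(θ-α) ≤ Real.exp ((θ-α)*t) * ∫ y in Set.Ioi t, f y := by
      calc (c-ε')/(θ-α) = Real.exp ((θ-α)*t) * ((c-ε') * (Real.exp (-(θ-α)*t)/(θ-α))) := hXl.symm
        _ ≤ _ := mul_le_mul_of_nonneg_left hlower hE.le
    rw [Real.dist_eq, abs_sub_lt_iff]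
    have hq1 : (c+ε')/(θ-α) - c/(θ-α) = ε'/(θ-α) := by ring
    have hq2 : c/(θ-α) - (c-ε')/(θ-α) = ε'/(θ-α) := by ring
    have hq3 : ε'/(θ-α) ≤ ε/2 := by
      rw [div_le_iff₀ hθα]
      nlinarith
    constructor <;> linarith
  have hg : Tendsto (fun t => Real.exp ((θ-α)*t) * (m - Wθ t)) atTop
      (nhds (θ*(c/(θ-α)) - c)) := by
    have heq : (fun t => θ * (Real.exp ((θ-α)*t) * ∫ y in Set.Ioi t, f y)
        - W t * Real.exp (-α * t)) =ᶠ[atTop]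
        (fun t => Real.exp ((θ-α)*t) * (m - Wθ t)) := by
      filter_upwards [eventually_ge_atTop (0:ℝ)] with t ht
      rw [hkey t ht,
        show Real.exp (-α*t) = Real.exp ((θ-α)*t) * Real.exp (-θ*t) from by
          rw [← Real.exp_add]; ring_nf]
      ring
    exact Tendsto.congr' heq ((htail.const_mul θ).sub hlim)
  have hWθlim : Tendsto Wθ atTop (nhds m) := by
    have h0 := hg.mul (exp_tendsto_zero (θ-α) hθα)
    rw [mul_zero] at h0
    have heq : ∀ t, Real.exp ((θ-α)*t) * (m - Wθ t) * Real.exp (-(θ-α)*t) = m - Wθ t := by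
      intro t
      have hEE : Real.exp ((θ-α)*t) * Real.exp (-(θ-α)*t) = 1 := by
        have h00 : (θ-α)*t + -(θ-α)*t = 0 := by ring
        rw [← Real.exp_add, h00, Real.exp_zero]
      calc Real.exp ((θ-α)*t) * (m - Wθ t) * Real.exp (-(θ-α)*t)
          = Real.exp ((θ-α)*t) * Real.exp (-(θ-α)*t) * (m - Wθ t) := by ring
        _ = m - Wθ t := by rw [hEE]; ring
    have h1 : Tendsto (fun t => m - Wθ t) atTop (nhds 0) := Tendsto.congr heq h0
    have h2 := (tendsto_const_nhds (x := m) (f := atTop)).sub h1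
    simpa using h2
  have hfinal : Tendsto (fun t => Real.exp ((θ - α) * t) * ρ t) atTop
      (nhds (c * α / ((θ - α) * m ^ 2 * φ))) := by
    have hm0 : (0:ℝ) < m := by linarith
    have hdenom : Tendsto (fun t => Wθ t * m) atTop (nhds (m*m)) := hWθlim.mul_const m
    have hmm : (m*m : ℝ) ≠ 0 := by positivity
    have hmain : Tendsto (fun t => (1/φ) * (Real.exp ((θ-α)*t) * (m - Wθ t)) / (Wθ t * m))
        atTop (nhds ((1/φ) * (θ*(c/(θ-α)) - c) / (m*m))) :=
      (hg.const_mul (1/φ)).div hdenom hmm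
    have heq : (fun t => (1/φ) * (Real.exp ((θ-α)*t) * (m - Wθ t)) / (Wθ t * m)) =ᶠ[atTop]
        (fun t => Real.exp ((θ - α) * t) * ρ t) := by
      filter_upwards [eventually_ge_atTop (0:ℝ)] with t ht
      have h1 : (0:ℝ) < Wθ t := lt_of_lt_of_le one_pos (hWθ1 t ht)
      rw [hρ t]
      field_simp
    have hval : (1/φ) * (θ*(c/(θ-α)) - c) / (m*m) = c * α / ((θ - α) * m ^ 2 * φ) := by
      field_simp
      ring
    rw [← hval]
    exact Tendsto.congr' heq hmain
  exact ⟨hfint 0 le_rfl, hm1, hmono, hWθ0, hid, hanti, hfinal⟩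
end

section
/- Let 0 < α < θ, let W : [0,∞) → ℝ be nondecreasing with W(0) = 1 (so W ≥ 1) and W(t)e^{−α t} → c ∈ (0,∞) as t → ∞, define W_θ(x) := e^{−θ x} W(x) + θ ∫₀^x W(y) e^{−θ y} dy and m := θ ∫₀^∞ W(y) e^{−θ y} dy. Fix a ∈ ℝ and, for t large enough that α t/θ + a ≤ t, set E₁(t) := W(t)[θ ∫_{α t/θ + a}^{t} (e^{−θ x}/W_θ(x)) dx + e^{−θ t}/W_θ(t)]. Then lim_{t→∞} E₁(t) = (c/m) e^{−θ a}. Moreover, for any function t ↦ x_t with x_t → +∞ as t → ∞, with E₂(t) := W(t)[θ ∫_{α t/θ + a}^{t} (e^{−θ x}/W_θ(x))(1 − 1/W_θ(x))^{⌈x_t⌉−1} dx + (e^{−θ t}/W_θ(t))(1 − 1/W_θ(t))^{⌈x_t⌉−1}], one has lim_{t→∞} E₂(t) = 0. -/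
open MeasureTheory Filter

lemma aux_exp_tendsto_zero {b : ℝ} (hb : 0 < b) :
    Tendsto (fun t : ℝ => Real.exp (-b * t)) atTop (nhds 0) := by
  have h1 : Tendsto (fun t : ℝ => b * t) atTop atTop :=
    (tendsto_id.const_mul_atTop hb)
  have h2 := Real.tendsto_exp_neg_atTop_nhds_zero.comp h1
  have : (fun t : ℝ => Real.exp (-b * t)) = (fun x => Real.exp (-x)) ∘ fun t => b * t := by
    funext t; simp [Function.comp, neg_mul]
  rw [this]; exact h2

lemma aux_hasDeriv (θ x : ℝ) (hθ : θ ≠ 0) :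
    HasDerivAt (fun y => -Real.exp (-θ * y) / θ) (Real.exp (-θ * x)) x := by
  have h1 : HasDerivAt (fun y : ℝ => -θ * y) (-θ) x := by
    simpa using (hasDerivAt_id x).const_mul (-θ)
  have h2 : HasDerivAt (fun y => Real.exp (-θ * y)) (Real.exp (-θ * x) * (-θ)) x := h1.exp
  have h3 := (h2.neg).div_const θ
  exact h3.congr_deriv (by rw [mul_neg, neg_neg, mul_div_assoc, div_self hθ, mul_one])

lemma aux_int_exp_Ioi {θ : ℝ} (hθ : 0 < θ) (s : ℝ) :
    ∫ y in Set.Ioi s, Real.exp (-θ * y) = Real.exp (-θ * s) / θ := by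
  have := integral_Ioi_of_hasDerivAt_of_tendsto' (a := s)
    (f := fun y => -Real.exp (-θ * y) / θ) (f' := fun y => Real.exp (-θ * y)) (m := 0)
    (fun x _ => aux_hasDeriv θ x hθ.ne') (exp_neg_integrableOn_Ioi s hθ) ?_
  · rw [this]; ring
  · have := (aux_exp_tendsto_zero hθ).neg.div_const θ
    simpa using this

lemma aux_int_exp {θ : ℝ} (hθ : θ ≠ 0) (s t : ℝ) :
    ∫ y in s..t, Real.exp (-θ * y) = (Real.exp (-θ * s) - Real.exp (-θ * t)) / θ := by
  have := intervalIntegral.integral_eq_sub_of_hasDerivAt (a := s) (b := t)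
    (f := fun y => -Real.exp (-θ * y) / θ) (f' := fun y => Real.exp (-θ * y))
    (fun x _ => aux_hasDeriv θ x hθ)
    ((Real.continuous_exp.comp (continuous_const.mul continuous_id)).intervalIntegrable s t)
  rw [this]; ring

lemma aux_mul_div (θ X K : ℝ) (hθ : θ ≠ 0) : θ * (X / θ / K) = X / K := by
  rw [div_div, ← mul_div_assoc, mul_div_mul_left _ _ hθ]

/-- Proposition 3.4 (subcritical clonal families, `α < θ`): expected number of haplotypes
older than `αt/θ + a` converges to `(c/m) e^{−θa}`, and the expected number of such
haplotypes carried by at least `x_t → ∞` individuals tends to `0`. -/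
theorem stmt_8 (α θ c a : ℝ) (hα : 0 < α) (hαθ : α < θ) (hc : 0 < c)
    (W : ℝ → ℝ) (hWmono : MonotoneOn W (Set.Ici 0)) (hW0 : W 0 = 1)
    (hlim : Tendsto (fun t => W t * Real.exp (-α * t)) atTop (nhds c))
    (Wθ : ℝ → ℝ)
    (hWθ : ∀ x : ℝ, Wθ x =
      Real.exp (-θ * x) * W x + θ * ∫ y in (0:ℝ)..x, W y * Real.exp (-θ * y))
    (m : ℝ) (hm : m = θ * ∫ y in Set.Ioi (0:ℝ), W y * Real.exp (-θ * y)) :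
    Tendsto (fun t => W t *
        ((θ * ∫ x in (α * t / θ + a)..t, Real.exp (-θ * x) / Wθ x)
          + Real.exp (-θ * t) / Wθ t)) atTop (nhds (c / m * Real.exp (-θ * a))) ∧
    ∀ x_ : ℝ → ℝ, Tendsto x_ atTop atTop →
      Tendsto (fun t => W t *
          ((θ * ∫ x in (α * t / θ + a)..t,
              (Real.exp (-θ * x) / Wθ x) * (1 - 1 / Wθ x) ^ (⌈x_ t⌉₊ - 1))
            + (Real.exp (-θ * t) / Wθ t) * (1 - 1 / Wθ t) ^ (⌈x_ t⌉₊ - 1)))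
        atTop (nhds 0) := by
  have hθ : 0 < θ := hα.trans hαθ
  have hθα : 0 < θ - α := sub_pos.2 hαθ
  -- W ≥ 1 on [0, ∞)
  have hW1 : ∀ x : ℝ, 0 ≤ x → 1 ≤ W x := by
    intro x hx
    have := hWmono (Set.mem_Ici.2 le_rfl) (Set.mem_Ici.2 hx) hx
    rwa [hW0] at this
  -- measurability of W
  have hWmeas : AEMeasurable W (volume.restrict (Set.Ici (0:ℝ))) :=
    aemeasurable_restrict_of_monotoneOn measurableSet_Ici hWmono
  -- exponential upper bound on W
  have hexp1 : ∀ z : ℝ, Real.exp (-α * z) * Real.exp (α * z) = 1 := by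
    intro z; rw [← Real.exp_add]; simp
  obtain ⟨C, hC0, hCb⟩ : ∃ C : ℝ, 0 < C ∧ ∀ y : ℝ, 0 ≤ y → W y ≤ C * Real.exp (α * y) := by
    have h1 : ∀ᶠ y in atTop, W y * Real.exp (-α * y) ≤ c + 1 := by
      filter_upwards [hlim.eventually (eventually_le_nhds (by linarith : c < c + 1))] with y hy
      exact hy
    obtain ⟨T, hT⟩ := (h1.and (eventually_ge_atTop (0:ℝ))).exists_forall_of_atTop
    have hT0 : 0 ≤ T := (hT T le_rfl).2
    have hbd : ∀ y : ℝ, T ≤ y → W y ≤ (c + 1) * Real.exp (α * y) := by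
      intro y hy
      have h2 := (hT y hy).1
      have h3 := hexp1 y
      nlinarith [Real.exp_pos (α * y), Real.exp_pos (-α * y)]
    refine ⟨(c + 1) * Real.exp (α * T), by positivity, fun y hy => ?_⟩
    rcases le_total T y with h | h
    · refine (hbd y h).trans ?_
      exact mul_le_mul_of_nonneg_right
        (le_mul_of_one_le_right (by positivity) (Real.one_le_exp (by positivity)))
        (Real.exp_pos (α * y)).le
    · have h4 : W y ≤ W T := hWmono (Set.mem_Ici.2 hy) (Set.mem_Ici.2 hT0) h
      have h5 := hbd T le_rfl
      exact (h4.trans h5).trans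
        (le_mul_of_one_le_right (by positivity) (Real.one_le_exp (by positivity)))
  -- integrability of W y * exp(-θ y) on (0,∞)
  have hgInt : IntegrableOn (fun y => W y * Real.exp (-θ * y)) (Set.Ioi (0:ℝ)) := by
    have hmeasIoi : AEMeasurable W (volume.restrict (Set.Ioi (0:ℝ))) :=
      hWmeas.mono_measure (Measure.restrict_mono Set.Ioi_subset_Ici_self le_rfl)
    refine Integrable.mono' ((exp_neg_integrableOn_Ioi 0 hθα).const_mul C) ?_ ?_
    · exact (hmeasIoi.mul
        (Real.continuous_exp.comp (continuous_const.mul continuous_id)).aemeasurable).aestronglyMeasurable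
    · rw [ae_restrict_iff' measurableSet_Ioi]
      refine ae_of_all _ fun y hy => ?_
      have hy0 : (0:ℝ) ≤ y := le_of_lt hy
      have h1 : 0 ≤ W y * Real.exp (-θ * y) :=
        mul_nonneg (zero_le_one.trans (hW1 y hy0)) (Real.exp_pos _).le
      rw [Real.norm_eq_abs, abs_of_nonneg h1]
      calc W y * Real.exp (-θ * y) ≤ C * Real.exp (α * y) * Real.exp (-θ * y) :=
            mul_le_mul_of_nonneg_right (hCb y hy0) (Real.exp_pos _).le
        _ = C * Real.exp (-(θ - α) * y) := by
            rw [mul_assoc, ← Real.exp_add]; congr 1; ring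
  have hgII : ∀ u v : ℝ, 0 ≤ u → 0 ≤ v →
      IntervalIntegrable (fun y => W y * Real.exp (-θ * y)) volume u v := by
    intro u v hu hv
    have hsub : Set.uIcc u v ⊆ Set.Ici 0 := fun z hz => le_trans (le_min hu hv) hz.1
    exact ((hWmono.mono hsub).intervalIntegrable).mul_continuousOn
      ((Real.continuous_exp.comp (continuous_const.mul continuous_id)).continuousOn)
  -- m ≥ 1
  have hm1 : 1 ≤ m := by
    have h1 : (∫ y in Set.Ioi (0:ℝ), Real.exp (-θ * y)) ≤
        ∫ y in Set.Ioi (0:ℝ), W y * Real.exp (-θ * y) :=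
      setIntegral_mono_on (exp_neg_integrableOn_Ioi 0 hθ) hgInt measurableSet_Ioi
        (fun y hy => le_mul_of_one_le_left (Real.exp_pos _).le (hW1 y (le_of_lt hy)))
    rw [aux_int_exp_Ioi hθ 0] at h1
    have h2 : Real.exp (-θ * 0) / θ = 1 / θ := by norm_num
    rw [h2] at h1
    rw [hm]
    calc (1:ℝ) = θ * (1 / θ) := by field_simp
      _ ≤ θ * ∫ y in Set.Ioi (0:ℝ), W y * Real.exp (-θ * y) :=
          mul_le_mul_of_nonneg_left h1 hθ.le
  have hmpos : 0 < m := lt_of_lt_of_le one_pos hm1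
  -- Wθ is monotone on [0,∞)
  have hWθmono : MonotoneOn Wθ (Set.Ici 0) := by
    intro x₁ hx₁ x₂ hx₂ h12
    have hx₁' : (0:ℝ) ≤ x₁ := hx₁
    have hx₂' : (0:ℝ) ≤ x₂ := hx₂
    rw [hWθ x₁, hWθ x₂]
    have hsplit := intervalIntegral.integral_add_adjacent_intervals
      (hgII 0 x₁ le_rfl hx₁') (hgII x₁ x₂ hx₁' hx₂')
    have hlow : W x₁ * (Real.exp (-θ * x₁) - Real.exp (-θ * x₂)) ≤
        θ * ∫ y in x₁..x₂, W y * Real.exp (-θ * y) := by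
      have h1 : (∫ y in x₁..x₂, W x₁ * Real.exp (-θ * y)) ≤
          ∫ y in x₁..x₂, W y * Real.exp (-θ * y) :=
        intervalIntegral.integral_mono_on h12
          ((Real.continuous_exp.comp (continuous_const.mul continuous_id)).intervalIntegrable
            x₁ x₂ |>.const_mul _)
          (hgII x₁ x₂ hx₁' hx₂')
          (fun y hy => mul_le_mul_of_nonneg_right
            (hWmono hx₁ (Set.mem_Ici.2 (hx₁'.trans hy.1)) hy.1) (Real.exp_pos _).le)
      rw [intervalIntegral.integral_const_mul, aux_int_exp hθ.ne' x₁ x₂] at h1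
      have h2 := mul_le_mul_of_nonneg_left h1 hθ.le
      calc W x₁ * (Real.exp (-θ * x₁) - Real.exp (-θ * x₂))
          = θ * (W x₁ * ((Real.exp (-θ * x₁) - Real.exp (-θ * x₂)) / θ)) := by field_simp
        _ ≤ θ * ∫ y in x₁..x₂, W y * Real.exp (-θ * y) := h2
    rw [← hsplit]
    have hW12 : W x₁ ≤ W x₂ := hWmono hx₁ hx₂ h12
    nlinarith [mul_nonneg (Real.exp_pos (-θ * x₂)).le (sub_nonneg.2 hW12)]
  -- 1 ≤ Wθ x on [0,∞)
  have hWθ1 : ∀ x : ℝ, 0 ≤ x → 1 ≤ Wθ x := by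
    intro x hx
    rw [hWθ x]
    have h1 : (∫ y in (0:ℝ)..x, Real.exp (-θ * y)) ≤
        ∫ y in (0:ℝ)..x, W y * Real.exp (-θ * y) :=
      intervalIntegral.integral_mono_on hx
        ((Real.continuous_exp.comp (continuous_const.mul continuous_id)).intervalIntegrable 0 x)
        (hgII 0 x le_rfl hx)
        (fun y hy => le_mul_of_one_le_left (Real.exp_pos _).le (hW1 y hy.1))
    rw [aux_int_exp hθ.ne' 0 x] at h1
    have h2 := mul_le_mul_of_nonneg_left h1 hθ.le
    have h3 : θ * ((Real.exp (-θ * 0) - Real.exp (-θ * x)) / θ) = 1 - Real.exp (-θ * x) := by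
      field_simp
      simp
    rw [h3] at h2
    have h4 : Real.exp (-θ * x) ≤ Real.exp (-θ * x) * W x :=
      le_mul_of_one_le_right (Real.exp_pos _).le (hW1 x hx)
    linarith
  -- Wθ x ≤ m on [0,∞)
  have hWθub : ∀ x : ℝ, 0 ≤ x → Wθ x ≤ m := by
    intro x hx
    have hInt1 : IntegrableOn (fun y => W y * Real.exp (-θ * y)) (Set.Ioc (0:ℝ) x) :=
      hgInt.mono_set Set.Ioc_subset_Ioi_self
    have hInt2 : IntegrableOn (fun y => W y * Real.exp (-θ * y)) (Set.Ioi x) :=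
      hgInt.mono_set (Set.Ioi_subset_Ioi hx)
    have hsplit : (∫ y in Set.Ioi (0:ℝ), W y * Real.exp (-θ * y)) =
        (∫ y in Set.Ioc (0:ℝ) x, W y * Real.exp (-θ * y)) +
          ∫ y in Set.Ioi x, W y * Real.exp (-θ * y) := by
      rw [← setIntegral_union (Set.Ioc_disjoint_Ioi le_rfl) measurableSet_Ioi hInt1 hInt2,
        Set.Ioc_union_Ioi_eq_Ioi hx]
    have htail : W x * Real.exp (-θ * x) ≤ θ * ∫ y in Set.Ioi x, W y * Real.exp (-θ * y) := by
      have h1 : (∫ y in Set.Ioi x, W x * Real.exp (-θ * y)) ≤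
          ∫ y in Set.Ioi x, W y * Real.exp (-θ * y) :=
        setIntegral_mono_on ((exp_neg_integrableOn_Ioi x hθ).const_mul _) hInt2
          measurableSet_Ioi
          (fun y hy => mul_le_mul_of_nonneg_right
            (hWmono (Set.mem_Ici.2 hx) (Set.mem_Ici.2 (hx.trans (le_of_lt hy))) (le_of_lt hy))
            (Real.exp_pos _).le)
      rw [MeasureTheory.integral_const_mul, aux_int_exp_Ioi hθ x] at h1
      have h2 := mul_le_mul_of_nonneg_left h1 hθ.le
      calc W x * Real.exp (-θ * x) = θ * (W x * (Real.exp (-θ * x) / θ)) := by field_simp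
        _ ≤ θ * ∫ y in Set.Ioi x, W y * Real.exp (-θ * y) := h2
    have hIoc : (∫ y in (0:ℝ)..x, W y * Real.exp (-θ * y)) =
        ∫ y in Set.Ioc (0:ℝ) x, W y * Real.exp (-θ * y) :=
      intervalIntegral.integral_of_le hx
    rw [hWθ x, hm, hsplit, hIoc]
    nlinarith [htail]
  -- Wθ tends to m at infinity
  have hWθtendsto : Tendsto Wθ atTop (nhds m) := by
    have h1 : Tendsto (fun x => Real.exp (-θ * x) * W x) atTop (nhds 0) := by
      have h2 : Tendsto (fun x => (W x * Real.exp (-α * x)) * Real.exp (-(θ - α) * x))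
          atTop (nhds (c * 0)) := hlim.mul (aux_exp_tendsto_zero hθα)
      rw [mul_zero] at h2
      refine h2.congr fun x => ?_
      rw [mul_comm (Real.exp (-θ * x)) (W x), mul_assoc, ← Real.exp_add]
      congr 2; ring
    have h3 : Tendsto (fun x => θ * ∫ y in (0:ℝ)..x, W y * Real.exp (-θ * y)) atTop
        (nhds (θ * ∫ y in Set.Ioi (0:ℝ), W y * Real.exp (-θ * y))) :=
      (MeasureTheory.intervalIntegral_tendsto_integral_Ioi 0 hgInt tendsto_id).const_mul θ
    have h4 := h1.add h3
    rw [zero_add, ← hm] at h4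
    exact h4.congr fun x => (hWθ x).symm
  have hWθmeas : AEMeasurable Wθ (volume.restrict (Set.Ici (0:ℝ))) :=
    aemeasurable_restrict_of_monotoneOn measurableSet_Ici hWθmono
  have hmne : m ≠ 0 := hmpos.ne'
  -- W t * exp(-θ t) → 0
  have hWe0 : Tendsto (fun t => W t * Real.exp (-θ * t)) atTop (nhds 0) := by
    have h2 := hlim.mul (aux_exp_tendsto_zero hθα)
    rw [mul_zero] at h2
    refine h2.congr fun t => ?_
    rw [mul_assoc, ← Real.exp_add]; congr 2; ring
  have hsTop : Tendsto (fun t : ℝ => α * t / θ + a) atTop atTop := by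
    apply tendsto_atTop_add_const_right
    have h1 := (tendsto_id (α := ℝ)).atTop_mul_const (div_pos hα hθ)
    refine h1.congr fun t => ?_
    simp only [id_eq]; ring
  have hWθs : Tendsto (fun t : ℝ => Wθ (α * t / θ + a)) atTop (nhds m) := hWθtendsto.comp hsTop
  have hdiff : Tendsto (fun t : ℝ => t - (α * t / θ + a)) atTop atTop := by
    have h1 := (tendsto_id (α := ℝ)).atTop_mul_const (div_pos hθα hθ)
    have h2 := tendsto_atTop_add_const_right atTop (-a) h1
    refine h2.congr fun t => ?_
    field_simp; simp only [id_eq]; ring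
  have hev : ∀ᶠ t : ℝ in atTop, 0 ≤ α * t / θ + a ∧ α * t / θ + a ≤ t := by
    filter_upwards [hsTop.eventually_ge_atTop 0, hdiff.eventually_ge_atTop 0] with t h1 h2
    exact ⟨h1, by linarith⟩
  -- integrability of the main integrands
  have hIInt : ∀ (n : ℕ) (u v : ℝ), 0 ≤ u → u ≤ v →
      IntervalIntegrable (fun x => Real.exp (-θ * x) / Wθ x * (1 - 1 / Wθ x) ^ n)
        volume u v := by
    intro n u v hu huv
    rw [intervalIntegrable_iff_integrableOn_Ioc_of_le huv]
    have hmeas : AEMeasurable Wθ (volume.restrict (Set.Ioc u v)) :=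
      hWθmeas.mono_measure (Measure.restrict_mono (fun z hz => hu.trans hz.1.le) le_rfl)
    refine Integrable.mono' ((integrableOn_const (C := (1:ℝ)) measure_Ioc_lt_top.ne)) ?_ ?_
    · exact (((Real.continuous_exp.comp
        (continuous_const.mul continuous_id)).aemeasurable.div hmeas).mul
        ((aemeasurable_const.sub (aemeasurable_const.div hmeas)).pow_const n)).aestronglyMeasurable
    · rw [ae_restrict_iff' measurableSet_Ioc]
      refine ae_of_all _ fun x hx => ?_
      have hx0 : (0:ℝ) ≤ x := hu.trans hx.1.le
      have hW1x := hWθ1 x hx0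
      have hWpos : (0:ℝ) < Wθ x := lt_of_lt_of_le one_pos hW1x
      have hfrac0 : 0 ≤ 1 - 1 / Wθ x := by
        have : 1 / Wθ x ≤ 1 := by rw [div_le_one hWpos]; exact hW1x
        linarith
      have hfrac1 : 1 - 1 / Wθ x ≤ 1 := by
        have : 0 ≤ 1 / Wθ x := by positivity
        linarith
      have hdiv0 : 0 ≤ Real.exp (-θ * x) / Wθ x := by positivity
      have hdiv1 : Real.exp (-θ * x) / Wθ x ≤ 1 := by
        rw [div_le_one hWpos]
        exact (Real.exp_le_one_iff.2 (by nlinarith)).trans hW1x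
      have hpow1 : (1 - 1 / Wθ x) ^ n ≤ 1 := pow_le_one₀ hfrac0 hfrac1
      have hpow0 : 0 ≤ (1 - 1 / Wθ x) ^ n := pow_nonneg hfrac0 n
      rw [Real.norm_eq_abs, abs_of_nonneg (mul_nonneg hdiv0 hpow0)]
      calc Real.exp (-θ * x) / Wθ x * (1 - 1 / Wθ x) ^ n ≤ 1 * 1 :=
            mul_le_mul hdiv1 hpow1 hpow0 zero_le_one
        _ = 1 := by norm_num
  have hIInt0 : ∀ u v : ℝ, 0 ≤ u → u ≤ v →
      IntervalIntegrable (fun x => Real.exp (-θ * x) / Wθ x) volume u v := by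
    intro u v hu huv
    have := hIInt 0 u v hu huv
    simpa using this
  -- the first limit
  have key1 : Tendsto (fun t => W t *
      ((θ * ∫ x in (α * t / θ + a)..t, Real.exp (-θ * x) / Wθ x)
        + Real.exp (-θ * t) / Wθ t)) atTop (nhds (c / m * Real.exp (-θ * a))) := by
    have hWA : Tendsto (fun t => W t * Real.exp (-θ * (α * t / θ + a))) atTop
        (nhds (c * Real.exp (-θ * a))) := by
      have h2 := hlim.mul_const (Real.exp (-θ * a))
      refine h2.congr fun t => ?_
      rw [mul_assoc, ← Real.exp_add]; congr 2; field_simp; ring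
    have hlo : Tendsto (fun t => W t * Real.exp (-θ * (α * t / θ + a)) / Wθ t) atTop
        (nhds (c * Real.exp (-θ * a) / m)) := hWA.div hWθtendsto hmne
    have hhi : Tendsto (fun t =>
        W t * Real.exp (-θ * (α * t / θ + a)) / Wθ (α * t / θ + a)
          - W t * Real.exp (-θ * t) / Wθ (α * t / θ + a)
          + W t * Real.exp (-θ * t) / Wθ t) atTop (nhds (c * Real.exp (-θ * a) / m)) := by
      have t1 := hWA.div hWθs hmne
      have t2 := hWe0.div hWθs hmne
      have t3 := hWe0.div hWθtendsto hmne
      have h4 := (t1.sub t2).add t3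
      simpa using h4
    have hle : c * Real.exp (-θ * a) / m = c / m * Real.exp (-θ * a) := by ring
    rw [← hle]
    refine tendsto_of_tendsto_of_tendsto_of_le_of_le' hlo hhi ?_ ?_
    · filter_upwards [hev] with t ht
      obtain ⟨ht0, htt⟩ := ht
      have ht0' : (0:ℝ) ≤ t := ht0.trans htt
      have hWt0 : (0:ℝ) ≤ W t := zero_le_one.trans (hW1 t ht0')
      have hWθtpos : (0:ℝ) < Wθ t := lt_of_lt_of_le one_pos (hWθ1 t ht0')
      have hI_lo : (Real.exp (-θ * (α * t / θ + a)) - Real.exp (-θ * t)) / θ / Wθ t ≤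
          ∫ x in (α * t / θ + a)..t, Real.exp (-θ * x) / Wθ x := by
        have h1 : (∫ x in (α * t / θ + a)..t, Real.exp (-θ * x) / Wθ t) ≤
            ∫ x in (α * t / θ + a)..t, Real.exp (-θ * x) / Wθ x := by
          refine intervalIntegral.integral_mono_on htt
            (((Real.continuous_exp.comp (continuous_const.mul continuous_id)).div_const
              _).intervalIntegrable _ _)
            (hIInt0 _ _ ht0 htt) fun x hx => ?_
          have hx0 : (0:ℝ) ≤ x := ht0.trans hx.1
          exact div_le_div_of_nonneg_left (Real.exp_pos _).le
            (lt_of_lt_of_le one_pos (hWθ1 x hx0))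
            (hWθmono (Set.mem_Ici.2 hx0) (Set.mem_Ici.2 ht0') hx.2)
        rwa [intervalIntegral.integral_div, aux_int_exp hθ.ne'] at h1
      have hθI : (Real.exp (-θ * (α * t / θ + a)) - Real.exp (-θ * t)) / Wθ t ≤
          θ * ∫ x in (α * t / θ + a)..t, Real.exp (-θ * x) / Wθ x := by
        have h2 := mul_le_mul_of_nonneg_left hI_lo hθ.le
        have h3 := aux_mul_div θ (Real.exp (-θ * (α * t / θ + a)) - Real.exp (-θ * t))
          (Wθ t) hθ.ne'
        rwa [h3] at h2
      have h4 : W t * Real.exp (-θ * (α * t / θ + a)) / Wθ t =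
          W t * ((Real.exp (-θ * (α * t / θ + a)) - Real.exp (-θ * t)) / Wθ t
            + Real.exp (-θ * t) / Wθ t) := by ring
      rw [h4]
      exact mul_le_mul_of_nonneg_left (add_le_add_left hθI _) hWt0
    · filter_upwards [hev] with t ht
      obtain ⟨ht0, htt⟩ := ht
      have ht0' : (0:ℝ) ≤ t := ht0.trans htt
      have hWt0 : (0:ℝ) ≤ W t := zero_le_one.trans (hW1 t ht0')
      have hWθspos : (0:ℝ) < Wθ (α * t / θ + a) := lt_of_lt_of_le one_pos (hWθ1 _ ht0)
      have hI_hi : (∫ x in (α * t / θ + a)..t, Real.exp (-θ * x) / Wθ x) ≤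
          (Real.exp (-θ * (α * t / θ + a)) - Real.exp (-θ * t)) / θ / Wθ (α * t / θ + a) := by
        have h1 : (∫ x in (α * t / θ + a)..t, Real.exp (-θ * x) / Wθ x) ≤
            ∫ x in (α * t / θ + a)..t, Real.exp (-θ * x) / Wθ (α * t / θ + a) := by
          refine intervalIntegral.integral_mono_on htt (hIInt0 _ _ ht0 htt)
            (((Real.continuous_exp.comp (continuous_const.mul continuous_id)).div_const
              _).intervalIntegrable _ _) fun x hx => ?_
          have hx0 : (0:ℝ) ≤ x := ht0.trans hx.1
          exact div_le_div_of_nonneg_left (Real.exp_pos _).le hWθspos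
            (hWθmono (Set.mem_Ici.2 ht0) (Set.mem_Ici.2 hx0) hx.1)
        rwa [intervalIntegral.integral_div, aux_int_exp hθ.ne'] at h1
      have hθI : (θ * ∫ x in (α * t / θ + a)..t, Real.exp (-θ * x) / Wθ x) ≤
          (Real.exp (-θ * (α * t / θ + a)) - Real.exp (-θ * t)) / Wθ (α * t / θ + a) := by
        have h2 := mul_le_mul_of_nonneg_left hI_hi hθ.le
        have h3 := aux_mul_div θ (Real.exp (-θ * (α * t / θ + a)) - Real.exp (-θ * t))
          (Wθ (α * t / θ + a)) hθ.ne'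
        rwa [h3] at h2
      have h4 : W t * Real.exp (-θ * (α * t / θ + a)) / Wθ (α * t / θ + a)
            - W t * Real.exp (-θ * t) / Wθ (α * t / θ + a)
            + W t * Real.exp (-θ * t) / Wθ t =
          W t * ((Real.exp (-θ * (α * t / θ + a)) - Real.exp (-θ * t)) / Wθ (α * t / θ + a)
            + Real.exp (-θ * t) / Wθ t) := by ring
      rw [h4]
      exact mul_le_mul_of_nonneg_left (add_le_add_left hθI _) hWt0
  refine ⟨key1, fun x_ hx_ => ?_⟩
  have hq0 : 0 ≤ 1 - 1 / m := by
    have : 1 / m ≤ 1 := by rw [div_le_one hmpos]; exact hm1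
    linarith
  have hq1 : 1 - 1 / m < 1 := by
    have : 0 < 1 / m := by positivity
    linarith
  have hn : Tendsto (fun t => ⌈x_ t⌉₊ - 1) atTop atTop :=
    (tendsto_sub_atTop_nat 1).comp (tendsto_nat_ceil_atTop.comp hx_)
  have hqn : Tendsto (fun t => (1 - 1 / m) ^ (⌈x_ t⌉₊ - 1)) atTop (nhds 0) :=
    (tendsto_pow_atTop_nhds_zero_of_lt_one hq0 hq1).comp hn
  have hprod := hqn.mul key1
  rw [zero_mul] at hprod
  refine tendsto_of_tendsto_of_tendsto_of_le_of_le' tendsto_const_nhds hprod ?_ ?_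
  · filter_upwards [hev] with t ht
    obtain ⟨ht0, htt⟩ := ht
    have ht0' : (0:ℝ) ≤ t := ht0.trans htt
    have hWt0 : (0:ℝ) ≤ W t := zero_le_one.trans (hW1 t ht0')
    have hWθtpos : (0:ℝ) < Wθ t := lt_of_lt_of_le one_pos (hWθ1 t ht0')
    have hfr : ∀ x : ℝ, 0 ≤ x → 0 ≤ 1 - 1 / Wθ x := by
      intro x hx
      have hWpos : (0:ℝ) < Wθ x := lt_of_lt_of_le one_pos (hWθ1 x hx)
      have : 1 / Wθ x ≤ 1 := by rw [div_le_one hWpos]; exact hWθ1 x hx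
      linarith
    refine mul_nonneg hWt0 (add_nonneg (mul_nonneg hθ.le ?_) ?_)
    · refine intervalIntegral.integral_nonneg htt fun x hx => ?_
      have hx0 : (0:ℝ) ≤ x := ht0.trans hx.1
      exact mul_nonneg (div_nonneg (Real.exp_pos _).le
        (lt_of_lt_of_le one_pos (hWθ1 x hx0)).le) (pow_nonneg (hfr x hx0) _)
    · exact mul_nonneg (div_nonneg (Real.exp_pos _).le hWθtpos.le)
        (pow_nonneg (hfr t ht0') _)
  · filter_upwards [hev] with t ht
    obtain ⟨ht0, htt⟩ := ht
    have ht0' : (0:ℝ) ≤ t := ht0.trans htt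
    have hWt0 : (0:ℝ) ≤ W t := zero_le_one.trans (hW1 t ht0')
    have hWθtpos : (0:ℝ) < Wθ t := lt_of_lt_of_le one_pos (hWθ1 t ht0')
    have hfr : ∀ x : ℝ, 0 ≤ x →
        0 ≤ 1 - 1 / Wθ x ∧ 1 - 1 / Wθ x ≤ 1 - 1 / m := by
      intro x hx
      have hWpos : (0:ℝ) < Wθ x := lt_of_lt_of_le one_pos (hWθ1 x hx)
      have h1 : 1 / Wθ x ≤ 1 := by rw [div_le_one hWpos]; exact hWθ1 x hx
      have h2 : 1 / m ≤ 1 / Wθ x := one_div_le_one_div_of_le hWpos (hWθub x hx)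
      exact ⟨by linarith, by linarith⟩
    have hIb : (∫ x in (α * t / θ + a)..t,
          Real.exp (-θ * x) / Wθ x * (1 - 1 / Wθ x) ^ (⌈x_ t⌉₊ - 1)) ≤
        (1 - 1 / m) ^ (⌈x_ t⌉₊ - 1) *
          ∫ x in (α * t / θ + a)..t, Real.exp (-θ * x) / Wθ x := by
      have h1 : (∫ x in (α * t / θ + a)..t,
            Real.exp (-θ * x) / Wθ x * (1 - 1 / Wθ x) ^ (⌈x_ t⌉₊ - 1)) ≤
          ∫ x in (α * t / θ + a)..t,
            (1 - 1 / m) ^ (⌈x_ t⌉₊ - 1) * (Real.exp (-θ * x) / Wθ x) := by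
        refine intervalIntegral.integral_mono_on htt (hIInt _ _ _ ht0 htt)
          ((hIInt0 _ _ ht0 htt).const_mul _) fun x hx => ?_
        have hx0 : (0:ℝ) ≤ x := ht0.trans hx.1
        obtain ⟨hf0, hf1⟩ := hfr x hx0
        rw [mul_comm ((1 - 1 / m) ^ (⌈x_ t⌉₊ - 1))]
        exact mul_le_mul_of_nonneg_left (pow_le_pow_left₀ hf0 hf1 _)
          (div_nonneg (Real.exp_pos _).le (lt_of_lt_of_le one_pos (hWθ1 x hx0)).le)
      rwa [intervalIntegral.integral_const_mul] at h1
    have hbb : Real.exp (-θ * t) / Wθ t * (1 - 1 / Wθ t) ^ (⌈x_ t⌉₊ - 1) ≤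
        Real.exp (-θ * t) / Wθ t * (1 - 1 / m) ^ (⌈x_ t⌉₊ - 1) := by
      obtain ⟨hf0, hf1⟩ := hfr t ht0'
      exact mul_le_mul_of_nonneg_left (pow_le_pow_left₀ hf0 hf1 _)
        (div_nonneg (Real.exp_pos _).le hWθtpos.le)
    have hrw : (1 - 1 / m) ^ (⌈x_ t⌉₊ - 1) * (W t *
        ((θ * ∫ x in (α * t / θ + a)..t, Real.exp (-θ * x) / Wθ x)
          + Real.exp (-θ * t) / Wθ t)) =
        W t * ((θ * ((1 - 1 / m) ^ (⌈x_ t⌉₊ - 1) *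
            ∫ x in (α * t / θ + a)..t, Real.exp (-θ * x) / Wθ x))
          + Real.exp (-θ * t) / Wθ t * (1 - 1 / m) ^ (⌈x_ t⌉₊ - 1)) := by ring
    rw [hrw]
    exact mul_le_mul_of_nonneg_left
      (add_le_add (mul_le_mul_of_nonneg_left hIb hθ.le) hbb) hWt0
end

section
/- Let 0 < α < θ, let W : [0,∞) → ℝ be nondecreasing with W(0) = 1 (so W ≥ 1) and W(t)e^{−α t} → c ∈ (0,∞) as t → ∞, define W_θ(x) := e^{−θ x} W(x) + θ ∫₀^x W(y) e^{−θ y} dy and m := θ ∫₀^∞ W(y) e^{−θ y} dy. For 0 ≤ x ≤ s define G_O(s, x) := W(s)[θ ∫_x^s (e^{−θ y}/W_θ(y)) dy + e^{−θ s}/W_θ(s)]. Then for every b ∈ (0, 1 − α/θ) and every a ∈ ℝ: lim_{t→∞} e^{α b t} · G_O((1−b)t, α t/θ + a) = (c/m) e^{−θ a}. -/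
open MeasureTheory Filter

/-- Key estimate (4.15) in the proof of Lemma 4.6 (ages of oldest families, `α < θ`):
with `s_t(b) = bt`, `G_O((1−b)t, αt/θ + a) ~ (c/m) e^{−θa} e^{−αbt}` for `0 < b < 1 − α/θ`. -/
theorem stmt_15 (α θ c : ℝ) (hα : 0 < α) (hαθ : α < θ) (hc : 0 < c)
    (W : ℝ → ℝ) (hWmono : MonotoneOn W (Set.Ici 0)) (hW0 : W 0 = 1)
    (hlim : Tendsto (fun t => W t * Real.exp (-α * t)) atTop (nhds c))
    (Wθ : ℝ → ℝ)
    (hWθ : ∀ x : ℝ, Wθ x =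
      Real.exp (-θ * x) * W x + θ * ∫ y in (0:ℝ)..x, W y * Real.exp (-θ * y))
    (m : ℝ) (hm : m = θ * ∫ y in Set.Ioi (0:ℝ), W y * Real.exp (-θ * y))
    (GO : ℝ → ℝ → ℝ)
    (hGO : ∀ s x, GO s x = W s *
      ((θ * ∫ y in x..s, Real.exp (-θ * y) / Wθ y) + Real.exp (-θ * s) / Wθ s)) :
    ∀ b : ℝ, 0 < b → b < 1 - α / θ → ∀ a : ℝ,
      Tendsto (fun t => Real.exp (α * b * t) * GO ((1 - b) * t) (α * t / θ + a)) atTop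
        (nhds (c / m * Real.exp (-θ * a))) := by
  have hθ : 0 < θ := hα.trans hαθ
  -- the exponential integral
  have exp_int : ∀ p q : ℝ, (∫ y in p..q, Real.exp (-θ * y))
      = (Real.exp (-θ * p) - Real.exp (-θ * q)) / θ := by
    intro p q
    have hd : ∀ y ∈ Set.uIcc p q, HasDerivAt (fun z => -Real.exp (-θ * z) / θ)
        (Real.exp (-θ * y)) y := by
      intro y _
      have h1 : HasDerivAt (fun z : ℝ => -θ * z) (-θ) y := by
        simpa using (hasDerivAt_id y).const_mul (-θ)
      have h3 : HasDerivAt (fun z => -Real.exp (-θ * z) / θ) (-(Real.exp (-θ * y) * -θ) / θ) y :=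
        (h1.exp.neg).div_const θ
      convert h3 using 1
      field_simp
    have hcont : Continuous (fun y => Real.exp (-θ * y)) :=
      Real.continuous_exp.comp (continuous_const.mul continuous_id)
    rw [intervalIntegral.integral_eq_sub_of_hasDerivAt hd (hcont.intervalIntegrable p q)]
    ring
  have hcontexp : Continuous (fun y => Real.exp (-θ * y)) :=
    Real.continuous_exp.comp (continuous_const.mul continuous_id)
  -- W ≥ 1 on [0,∞)
  have hW1 : ∀ y : ℝ, 0 ≤ y → 1 ≤ W y := by
    intro y hy
    rw [← hW0]
    exact hWmono Set.self_mem_Ici hy hy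
  -- interval integrability of g := W * exp(-θ·)
  set g : ℝ → ℝ := fun y => W y * Real.exp (-θ * y) with hg
  have hgint : ∀ p q : ℝ, 0 ≤ p → 0 ≤ q → IntervalIntegrable g volume p q := by
    intro p q hp hq
    have hsub : Set.uIcc p q ⊆ Set.Ici 0 := by
      intro y hy
      rcases Set.mem_uIcc.mp hy with h | h
      · exact hp.trans h.1
      · exact hq.trans h.1
    exact ((hWmono.mono hsub).intervalIntegrable).mul_continuousOn hcontexp.continuousOn
  -- monotonicity of Wθ on [0,∞)
  have hWθmono : ∀ x1 x2 : ℝ, 0 ≤ x1 → x1 ≤ x2 → Wθ x1 ≤ Wθ x2 := by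
    intro x1 x2 h0 h12
    have h02 : (0:ℝ) ≤ x2 := h0.trans h12
    rw [hWθ x1, hWθ x2]
    have hsplit : (∫ y in (0:ℝ)..x2, g y) = (∫ y in (0:ℝ)..x1, g y) + ∫ y in x1..x2, g y :=
      (intervalIntegral.integral_add_adjacent_intervals (hgint 0 x1 le_rfl h0)
        (hgint x1 x2 h0 h02)).symm
    rw [hsplit]
    have hmono2 : (∫ y in x1..x2, W x1 * Real.exp (-θ * y)) ≤ ∫ y in x1..x2, g y := by
      apply intervalIntegral.integral_mono_on h12
        ((continuous_const.mul hcontexp).intervalIntegrable x1 x2) (hgint x1 x2 h0 h02)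
      intro y hy
      exact mul_le_mul_of_nonneg_right (hWmono h0 (h0.trans hy.1) hy.1) (Real.exp_nonneg _)
    have hval : (∫ y in x1..x2, W x1 * Real.exp (-θ * y))
        = W x1 * ((Real.exp (-θ * x1) - Real.exp (-θ * x2)) / θ) := by
      rw [intervalIntegral.integral_const_mul, exp_int]
    rw [hval] at hmono2
    have hWle : Real.exp (-θ * x2) * W x1 ≤ Real.exp (-θ * x2) * W x2 :=
      mul_le_mul_of_nonneg_left (hWmono h0 h02 h12) (Real.exp_nonneg _)
    have hθI : W x1 * (Real.exp (-θ * x1) - Real.exp (-θ * x2)) ≤ θ * ∫ y in x1..x2, g y := by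
      have := mul_le_mul_of_nonneg_left hmono2 hθ.le
      calc W x1 * (Real.exp (-θ * x1) - Real.exp (-θ * x2))
          = θ * (W x1 * ((Real.exp (-θ * x1) - Real.exp (-θ * x2)) / θ)) := by
            field_simp
        _ ≤ θ * ∫ y in x1..x2, g y := this
    nlinarith [hθI, hWle]
  -- Wθ 0 = 1
  have hWθ0 : Wθ 0 = 1 := by
    rw [hWθ 0]
    simp [hW0]
  have hWθ1 : ∀ y : ℝ, 0 ≤ y → 1 ≤ Wθ y := fun y hy => hWθ0 ▸ hWθmono 0 y le_rfl hy
  have hWθpos : ∀ y : ℝ, 0 ≤ y → 0 < Wθ y := fun y hy => lt_of_lt_of_le one_pos (hWθ1 y hy)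
  -- global integrability of g on (0,∞)
  have hgmeas : AEStronglyMeasurable g (volume.restrict (Set.Ioi (0:ℝ))) := by
    have hW' : Monotone (fun y : ℝ => W (max y 0)) := by
      intro u v huv
      exact hWmono (le_max_right u 0) (le_max_right v 0) (max_le_max huv le_rfl)
    have hmeas : Measurable (fun y : ℝ => W (max y 0) * Real.exp (-θ * y)) :=
      hW'.measurable.mul hcontexp.measurable
    refine hmeas.aestronglyMeasurable.congr ?_
    filter_upwards [self_mem_ae_restrict measurableSet_Ioi] with y hy
    simp [g, max_eq_left (le_of_lt (Set.mem_Ioi.mp hy))]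
  have hKbound : ∃ K : ℝ, 0 < K ∧ ∀ y : ℝ, 0 ≤ y → W y ≤ K * Real.exp (α * y) := by
    have hev : ∀ᶠ t in atTop, W t * Real.exp (-α * t) < c + 1 :=
      hlim.eventually (gt_mem_nhds (lt_add_one c))
    obtain ⟨T, hT⟩ := (hev.and (eventually_ge_atTop (0:ℝ))).exists_forall_of_atTop
    refine ⟨max (c + 1) (W (max T 0)), lt_max_of_lt_left (by linarith), fun y hy => ?_⟩
    rcases le_or_gt (max T 0) y with h | h
    · have h1 := (hT y ((le_max_left T 0).trans h)).1
      have h2 : W y < (c + 1) * Real.exp (α * y) := by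
        have hkey : W y * Real.exp (-α * y) * Real.exp (α * y) = W y := by
          rw [mul_assoc, ← Real.exp_add]; simp
        have := mul_lt_mul_of_pos_right h1 (Real.exp_pos (α * y))
        rwa [hkey] at this
      exact h2.le.trans (mul_le_mul_of_nonneg_right (le_max_left _ _) (Real.exp_nonneg _))
    · have h1 : W y ≤ W (max T 0) := hWmono hy (le_max_right T 0) h.le
      have h2 : (1:ℝ) ≤ Real.exp (α * y) :=
        Real.one_le_exp (mul_nonneg hα.le hy)
      calc W y ≤ W (max T 0) := h1
        _ ≤ max (c + 1) (W (max T 0)) := le_max_right _ _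
        _ ≤ max (c + 1) (W (max T 0)) * Real.exp (α * y) := by
            nlinarith [hW1 (max T 0) (le_max_right T 0),
              le_max_right (c+1) (W (max T 0))]
  have hgInt : IntegrableOn g (Set.Ioi (0:ℝ)) volume := by
    obtain ⟨K, hK, hKb⟩ := hKbound
    have hbint : IntegrableOn (fun y => K * Real.exp (-(θ - α) * y)) (Set.Ioi (0:ℝ)) volume :=
      (exp_neg_integrableOn_Ioi 0 (sub_pos.mpr hαθ)).const_mul K
    refine Integrable.mono' hbint hgmeas ?_
    filter_upwards [self_mem_ae_restrict measurableSet_Ioi] with y hy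
    have hy0 : (0:ℝ) ≤ y := hy.le
    have hgpos : 0 ≤ g y := mul_nonneg (by linarith [hW1 y hy0]) (Real.exp_nonneg _)
    rw [Real.norm_of_nonneg hgpos]
    have : W y * Real.exp (-θ * y) ≤ (K * Real.exp (α * y)) * Real.exp (-θ * y) :=
      mul_le_mul_of_nonneg_right (hKb y hy0) (Real.exp_nonneg _)
    calc g y ≤ (K * Real.exp (α * y)) * Real.exp (-θ * y) := this
      _ = K * Real.exp (-(θ - α) * y) := by
          rw [mul_assoc, ← Real.exp_add]; ring_nf
  -- Wθ tends to m
  have htendWθ : Tendsto Wθ atTop (nhds m) := by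
    have h1 : Tendsto (fun x => Real.exp (-θ * x) * W x) atTop (nhds 0) := by
      have heq : ∀ x : ℝ, Real.exp (-θ * x) * W x
          = (W x * Real.exp (-α * x)) * Real.exp (-(θ - α) * x) := by
        intro x
        rw [mul_comm, mul_assoc, ← Real.exp_add]
        ring_nf
      have h2 : Tendsto (fun x : ℝ => Real.exp (-(θ - α) * x)) atTop (nhds 0) := by
        have := Real.tendsto_exp_neg_atTop_nhds_zero.comp
          (tendsto_id.const_mul_atTop (sub_pos.mpr hαθ))
        refine this.congr fun x => ?_
        simp only [Function.comp, id]
        congr 1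
        ring
      have := hlim.mul h2
      rw [mul_zero] at this
      exact Tendsto.congr (fun x => (heq x).symm) this
    have h2 : Tendsto (fun x => θ * ∫ y in (0:ℝ)..x, g y) atTop (nhds m) := by
      rw [hm]
      exact (intervalIntegral_tendsto_integral_Ioi 0 hgInt tendsto_id).const_mul θ
    have := h1.add h2
    rw [zero_add] at this
    exact Tendsto.congr (fun x => (hWθ x).symm) this
  have hWθlem : ∀ y : ℝ, 0 ≤ y → Wθ y ≤ m := by
    intro y hy
    refine ge_of_tendsto htendWθ ?_
    filter_upwards [eventually_ge_atTop y] with z hz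
    exact hWθmono y z hy hz
  have hmpos : 0 < m := lt_of_lt_of_le one_pos (hWθ0 ▸ hWθlem 0 le_rfl)
  -- integrability of the integrand of G_O
  set h : ℝ → ℝ := fun y => Real.exp (-θ * y) / Wθ y with hh
  have hhint : ∀ x s : ℝ, 0 ≤ x → x ≤ s → IntervalIntegrable h volume x s := by
    intro x s hx hxs
    have hanti : AntitoneOn (fun y => (Wθ y)⁻¹) (Set.uIcc x s) := by
      intro u hu v hv huv
      rw [Set.uIcc_of_le hxs] at hu hv
      have hu0 : 0 ≤ u := hx.trans hu.1
      exact inv_anti₀ (hWθpos u hu0) (hWθmono u v hu0 huv)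
    have := (hanti.intervalIntegrable (μ := volume)).continuousOn_mul hcontexp.continuousOn
    simp only [hh, div_eq_mul_inv]
    exact this
  -- lower bound on the bracket
  have hBlow : ∀ x s : ℝ, 0 ≤ x → x ≤ s →
      Real.exp (-θ * x) / m ≤ (θ * ∫ y in x..s, h y) + Real.exp (-θ * s) / Wθ s := by
    intro x s hx hxs
    have hs : 0 ≤ s := hx.trans hxs
    have h1 : (∫ y in x..s, Real.exp (-θ * y) / m) ≤ ∫ y in x..s, h y := by
      apply intervalIntegral.integral_mono_on hxs
        ((hcontexp.div_const m).intervalIntegrable x s) (hhint x s hx hxs)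
      intro y hy
      have hy0 : 0 ≤ y := hx.trans hy.1
      exact div_le_div_of_nonneg_left (Real.exp_nonneg _) (hWθpos y hy0) (hWθlem y hy0)
    have hval : (∫ y in x..s, Real.exp (-θ * y) / m)
        = (Real.exp (-θ * x) - Real.exp (-θ * s)) / θ / m := by
      rw [intervalIntegral.integral_div, exp_int]
    rw [hval] at h1
    have h2 : Real.exp (-θ * s) / m ≤ Real.exp (-θ * s) / Wθ s :=
      div_le_div_of_nonneg_left (Real.exp_nonneg _) (hWθpos s hs) (hWθlem s hs)
    have h3 := mul_le_mul_of_nonneg_left h1 hθ.le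
    have heq : θ * ((Real.exp (-θ * x) - Real.exp (-θ * s)) / θ / m)
        = Real.exp (-θ * x) / m - Real.exp (-θ * s) / m := by
      field_simp
    rw [heq] at h3
    linarith
  -- upper bound on the bracket
  have hBup : ∀ x s : ℝ, 0 ≤ x → x ≤ s →
      (θ * ∫ y in x..s, h y) + Real.exp (-θ * s) / Wθ s ≤ Real.exp (-θ * x) / Wθ x := by
    intro x s hx hxs
    have h1 : (∫ y in x..s, h y) ≤ ∫ y in x..s, Real.exp (-θ * y) / Wθ x := by
      apply intervalIntegral.integral_mono_on hxs (hhint x s hx hxs)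
        ((hcontexp.div_const _).intervalIntegrable x s)
      intro y hy
      exact div_le_div_of_nonneg_left (Real.exp_nonneg _) (hWθpos x hx) (hWθmono x y hx hy.1)
    have hval : (∫ y in x..s, Real.exp (-θ * y) / Wθ x)
        = (Real.exp (-θ * x) - Real.exp (-θ * s)) / θ / Wθ x := by
      rw [intervalIntegral.integral_div, exp_int]
    rw [hval] at h1
    have h2 : Real.exp (-θ * s) / Wθ s ≤ Real.exp (-θ * s) / Wθ x :=
      div_le_div_of_nonneg_left (Real.exp_nonneg _) (hWθpos x hx) (hWθmono x s hx hxs)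
    have h3 := mul_le_mul_of_nonneg_left h1 hθ.le
    have hWx := (hWθpos x hx).ne'
    have heq : θ * ((Real.exp (-θ * x) - Real.exp (-θ * s)) / θ / Wθ x)
        = Real.exp (-θ * x) / Wθ x - Real.exp (-θ * s) / Wθ x := by
      field_simp
    rw [heq] at h3
    linarith
  -- main part
  intro b hb hb' a
  have h1b : α / θ < 1 - b := by linarith
  have hαθdiv : 0 < α / θ := div_pos hα hθ
  have h1bpos : 0 < 1 - b := hαθdiv.trans h1b
  have hxt : Tendsto (fun t : ℝ => α * t / θ + a) atTop atTop := by
    apply tendsto_atTop_add_const_right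
    exact (Tendsto.const_mul_atTop hαθdiv tendsto_id).congr
      (fun t => by simp only [id_eq]; ring)
  have hst : Tendsto (fun t : ℝ => (1 - b) * t) atTop atTop :=
    Tendsto.const_mul_atTop h1bpos tendsto_id
  have hdiff : Tendsto (fun t : ℝ => (1 - b) * t - (α * t / θ + a)) atTop atTop := by
    have hd : Tendsto (fun t : ℝ => (1 - b - α / θ) * t + (-a)) atTop atTop := by
      apply tendsto_atTop_add_const_right
      exact Tendsto.const_mul_atTop (by linarith) tendsto_id
    exact hd.congr (fun t => by ring)
  -- the key exponential identity
  have hexpid : ∀ t : ℝ, Real.exp (α * b * t) * Real.exp (-θ * (α * t / θ + a))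
      = Real.exp (-α * ((1 - b) * t)) * Real.exp (-θ * a) := by
    intro t
    rw [← Real.exp_add, ← Real.exp_add]
    congr 1
    field_simp
    ring
  -- lower bounding function tends to the limit
  have hL : Tendsto (fun t => Real.exp (α * b * t) *
      (W ((1 - b) * t) * (Real.exp (-θ * (α * t / θ + a)) / m)))
      atTop (nhds (c / m * Real.exp (-θ * a))) := by
    have h0 := (hlim.comp hst).mul_const (Real.exp (-θ * a) / m)
    have hlimval : c * (Real.exp (-θ * a) / m) = c / m * Real.exp (-θ * a) := by ring
    rw [hlimval] at h0
    refine h0.congr fun t => ?_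
    have hid := hexpid t
    simp only [Function.comp]
    calc (W ((1 - b) * t) * Real.exp (-α * ((1 - b) * t))) * (Real.exp (-θ * a) / m)
        = W ((1 - b) * t) * (Real.exp (-α * ((1 - b) * t)) * Real.exp (-θ * a)) / m := by
          ring
      _ = W ((1 - b) * t) * (Real.exp (α * b * t) * Real.exp (-θ * (α * t / θ + a))) / m := by
          rw [← hid]
      _ = Real.exp (α * b * t) * (W ((1 - b) * t) * (Real.exp (-θ * (α * t / θ + a)) / m)) := by
          ring
  -- upper bounding function tends to the limit
  have hU : Tendsto (fun t => Real.exp (α * b * t) *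
      (W ((1 - b) * t) * (Real.exp (-θ * (α * t / θ + a)) / Wθ (α * t / θ + a))))
      atTop (nhds (c / m * Real.exp (-θ * a))) := by
    have hWθinv : Tendsto (fun t : ℝ => (Wθ (α * t / θ + a))⁻¹) atTop (nhds m⁻¹) :=
      (htendWθ.comp hxt).inv₀ hmpos.ne'
    have h0 := ((hlim.comp hst).mul_const (Real.exp (-θ * a))).mul hWθinv
    have hlimval : c * Real.exp (-θ * a) * m⁻¹ = c / m * Real.exp (-θ * a) := by ring
    rw [hlimval] at h0
    refine h0.congr fun t => ?_
    have hid := hexpid t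
    simp only [Function.comp]
    calc (W ((1 - b) * t) * Real.exp (-α * ((1 - b) * t))) * Real.exp (-θ * a) *
          (Wθ (α * t / θ + a))⁻¹
        = W ((1 - b) * t) * (Real.exp (-α * ((1 - b) * t)) * Real.exp (-θ * a)) *
          (Wθ (α * t / θ + a))⁻¹ := by ring
      _ = W ((1 - b) * t) * (Real.exp (α * b * t) * Real.exp (-θ * (α * t / θ + a))) *
          (Wθ (α * t / θ + a))⁻¹ := by rw [← hid]
      _ = Real.exp (α * b * t) *
          (W ((1 - b) * t) * (Real.exp (-θ * (α * t / θ + a)) / Wθ (α * t / θ + a))) := by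
          rw [div_eq_mul_inv]; ring
  -- squeeze
  refine tendsto_of_tendsto_of_tendsto_of_le_of_le' hL hU ?_ ?_
  · filter_upwards [hxt.eventually_ge_atTop 0, hdiff.eventually_ge_atTop 0] with t ht1 ht2
    have hxs : α * t / θ + a ≤ (1 - b) * t := by linarith
    have hs0 : 0 ≤ (1 - b) * t := ht1.trans hxs
    have hWs : 0 ≤ W ((1 - b) * t) := by linarith [hW1 _ hs0]
    rw [hGO]
    have := mul_le_mul_of_nonneg_left (hBlow _ _ ht1 hxs) hWs
    exact mul_le_mul_of_nonneg_left this (Real.exp_nonneg _)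
  · filter_upwards [hxt.eventually_ge_atTop 0, hdiff.eventually_ge_atTop 0] with t ht1 ht2
    have hxs : α * t / θ + a ≤ (1 - b) * t := by linarith
    have hs0 : 0 ≤ (1 - b) * t := ht1.trans hxs
    have hWs : 0 ≤ W ((1 - b) * t) := by linarith [hW1 _ hs0]
    rw [hGO]
    have := mul_le_mul_of_nonneg_left (hBup _ _ ht1 hxs) hWs
    exact mul_le_mul_of_nonneg_left this (Real.exp_nonneg _)
end

section
/- Let (Ω, ℱ, ℙ) be a probability space, q ∈ (0,1), N an ℕ-valued random variable with ℙ(N = k) = q(1−q)^{k−1} for every integer k ≥ 1, and (X_i)_{i≥1} an i.i.d. sequence of real-valued random variables such that N and the sequence (X_i)_{i≥1} are independent. Let n ≥ 1, let x₁ > x₂ > … > x_n be real numbers, let k₁, …, k_n ∈ ℕ with K := k₁ + ⋯ + k_n ≥ 1, and set F_j := ℙ(X₁ ≥ x_j) for 1 ≤ j ≤ n. Then, with the convention 0⁰ = 1, ℙ(#{1 ≤ i ≤ N : X_i ≥ x₁} = k₁ and #{1 ≤ i ≤ N : x_j ≤ X_i < x_{j−1}} = k_j for all 2 ≤ j ≤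 n) = (q (1−q)^{K−1} / (q + F_n(1−q))^{K+1}) · (K!/(k₁!⋯k_n!)) · F₁^{k₁} · ∏_{j=2}^n (F_j − F_{j−1})^{k_j}. -/
open MeasureTheory ProbabilityTheory
open scoped Classical

open Finset
open scoped ENNReal

-- Pascal recurrence for multinomial coefficients
lemma multinomial_pascal (t : Finset ℕ) (c : ℕ → ℕ) (m : ℕ) (h : ∑ j ∈ t, c j = m + 1) :
    Nat.multinomial t c
      = ∑ j ∈ t.filter (fun j => c j ≠ 0), Nat.multinomial t (Function.update c j (c j - 1)) := by
  have hpos : 0 < ∏ j ∈ t, (c j).factorial := Nat.prod_factorial_pos t c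
  refine Nat.eq_of_mul_eq_mul_left hpos ?_
  rw [Nat.multinomial_spec, h, Finset.mul_sum]
  have hterm : ∀ j0 ∈ t.filter (fun j => c j ≠ 0),
      (∏ j ∈ t, (c j).factorial) * Nat.multinomial t (Function.update c j0 (c j0 - 1))
        = c j0 * m.factorial := by
    intro j0 hj0
    rw [Finset.mem_filter] at hj0
    obtain ⟨hj0t, hj0ne⟩ := hj0
    have hc1 : 1 ≤ c j0 := Nat.one_le_iff_ne_zero.2 hj0ne
    have hprod : (∏ j ∈ t, (c j).factorial)
        = c j0 * ∏ j ∈ t, (Function.update c j0 (c j0 - 1) j).factorial := by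
      have h1 : (fun j => (Function.update c j0 (c j0 - 1) j).factorial)
          = Function.update (fun j => (c j).factorial) j0 ((c j0 - 1).factorial) := by
        funext j
        by_cases hj : j = j0
        · subst hj; simp
        · simp [Function.update_of_ne hj]
      rw [h1, Finset.prod_update_of_mem hj0t,
        ← Finset.prod_erase_mul t _ hj0t, Finset.sdiff_singleton_eq_erase]
      have hfac : (c j0).factorial = c j0 * (c j0 - 1).factorial :=
        Nat.mul_factorial_pred (by omega) |>.symm
      rw [hfac]; ring
    have hsum : ∑ j ∈ t, Function.update c j0 (c j0 - 1) j = m := by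
      rw [Finset.sum_update_of_mem hj0t]
      have := Finset.sum_erase_add t c hj0t
      rw [Finset.sdiff_singleton_eq_erase]
      omega
    rw [hprod, mul_assoc, Nat.multinomial_spec, hsum]
  rw [Finset.sum_congr rfl hterm, ← Finset.sum_mul, Finset.sum_filter_ne_zero, h]
  rw [← Nat.factorial_succ]

open scoped ENNReal

lemma count_prob {Ω : Type*} [mΩ : MeasurableSpace Ω] (P : Measure Ω) [IsProbabilityMeasure P]
    (X : ℕ → Ω → ℝ) (hX : ∀ i, Measurable (X i))
    (hXindep : iIndepFun X P)
    (t : Finset ℕ) (S : ℕ → Set ℝ) (hS : ∀ j, MeasurableSet (S j))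
    (hpart : ∀ r : ℝ, ∃! j, j ∈ t ∧ r ∈ S j)
    (p : ℕ → ℝ≥0∞) (hp : ∀ j ∈ t, ∀ i, P (X i ⁻¹' S j) = p j)
    (s : Finset ℕ) (c : ℕ → ℕ) :
    P {ω | ∀ j ∈ t, ((s.filter (fun i => X i ω ∈ S j)).card = c j)}
      = if ∑ j ∈ t, c j = s.card then
          (Nat.multinomial t c : ℝ≥0∞) * ∏ j ∈ t, p j ^ c j
        else 0 := by
  induction s using Finset.cons_induction generalizing c with
  | empty =>
    by_cases hc : ∀ j ∈ t, c j = 0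
    · have hset : {ω : Ω | ∀ j ∈ t, ((Finset.filter (fun i => X i ω ∈ S j) ∅).card = c j)}
          = Set.univ := by
        ext ω; simp only [Set.mem_setOf_eq, Set.mem_univ, iff_true]
        intro j hj; rw [hc j hj]; simp
      have hsum : ∑ j ∈ t, c j = 0 := Finset.sum_eq_zero hc
      rw [hset, if_pos (by simpa using hsum)]
      have hmult : Nat.multinomial t c = 1 := by
        unfold Nat.multinomial
        rw [hsum]
        have : ∏ j ∈ t, (c j).factorial = 1 :=
          Finset.prod_eq_one (fun j hj => by rw [hc j hj]; rfl)
        simp [this]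
      have hprod : ∏ j ∈ t, p j ^ c j = 1 :=
        Finset.prod_eq_one (fun j hj => by rw [hc j hj, pow_zero])
      simp [hmult, hprod]
    · push_neg at hc
      obtain ⟨j0, hj0t, hj0⟩ := hc
      have hset : {ω : Ω | ∀ j ∈ t, ((Finset.filter (fun i => X i ω ∈ S j) ∅).card = c j)}
          = ∅ := by
        ext ω; simp only [Set.mem_setOf_eq, Set.mem_empty_iff_false, iff_false]
        intro h
        have := h j0 hj0t
        simp only [Finset.filter_empty, Finset.card_empty] at this
        exact hj0 this.symm
      have : ¬ (∑ j ∈ t, c j = (∅ : Finset ℕ).card) := by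
        simp only [Finset.card_empty]
        intro h
        exact hj0 (Finset.sum_eq_zero_iff.1 h j0 hj0t)
      rw [hset, if_neg this, measure_empty]
  | @cons i s' hi ih =>
    classical
    -- the sigma-algebra generated by the variables indexed by s'
    set M' : MeasurableSpace Ω := ⨆ i' ∈ (↑s' : Set ℕ), MeasurableSpace.comap (X i') inferInstance
      with hM'
    have hM'le : M' ≤ mΩ := by
      rw [hM']; exact iSup₂_le (fun i' _ => (hX i').comap_le)
    have hXiM' : ∀ i' ∈ s', ∀ (A : Set ℝ), MeasurableSet A →
        MeasurableSet[M'] (X i' ⁻¹' A) := by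
      intro i' hi' A hA
      have hle : MeasurableSpace.comap (X i') inferInstance ≤ M' := by
        rw [hM']
        exact le_iSup₂ (f := fun (i'' : ℕ) (_ : i'' ∈ (↑s' : Set ℕ)) =>
          MeasurableSpace.comap (X i'') inferInstance) i' hi'
      exact hle _ ⟨A, hA, rfl⟩
    have hcardM : ∀ j : ℕ, Measurable[M'] fun ω => ((s'.filter (fun i' => X i' ω ∈ S j)).card : ℕ) := by
      intro j
      have heq : (fun ω => ((s'.filter (fun i' => X i' ω ∈ S j)).card : ℕ))
          = fun ω => ∑ i' ∈ s', if X i' ω ∈ S j then 1 else 0 :=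
        funext fun ω => Finset.card_filter _ _
      rw [heq]
      refine Finset.measurable_sum s' (fun i' hi' => ?_)
      exact Measurable.ite (hXiM' i' hi' _ (hS j)) measurable_const measurable_const
    have hEM : ∀ d : ℕ → ℕ, MeasurableSet[M']
        {ω | ∀ j ∈ t, ((s'.filter (fun i' => X i' ω ∈ S j)).card = d j)} := by
      intro d
      have : {ω | ∀ j ∈ t, ((s'.filter (fun i' => X i' ω ∈ S j)).card = d j)}
          = ⋂ j ∈ t, (fun ω => (s'.filter (fun i' => X i' ω ∈ S j)).card) ⁻¹' {d j} := by
        ext ω; simp [Set.mem_iInter]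
      rw [this]
      exact MeasurableSet.biInter t.countable_toSet
        (fun j _ => hcardM j (measurableSet_singleton _))
    -- independence of X i from the family over s'
    have hindep : Indep (MeasurableSpace.comap (X i) inferInstance) M' P := by
      have hdisj : Disjoint ({i} : Set ℕ) (↑s' : Set ℕ) :=
        Set.disjoint_singleton_left.2 (by simpa using hi)
      have h := indep_iSup_of_disjoint (m := fun i' =>
          MeasurableSpace.comap (X i') inferInstance)
        (fun i' => (hX i').comap_le) hXindep hdisj
      simpa [hM'] using h
    have hpiece : ∀ j0 ∈ t, ∀ d : ℕ → ℕ,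
        P (X i ⁻¹' S j0 ∩ {ω | ∀ j ∈ t, ((s'.filter (fun i' => X i' ω ∈ S j)).card = d j)})
          = p j0 * P {ω | ∀ j ∈ t, ((s'.filter (fun i' => X i' ω ∈ S j)).card = d j)} := by
      intro j0 hj0 d
      have := (Indep_iff _ _ _).1 hindep (X i ⁻¹' S j0) _ ⟨S j0, hS j0, rfl⟩ (hEM d)
      rw [this, hp j0 hj0 i]
    have hcardcons : ∀ (j : ℕ) (ω : Ω),
        (((Finset.cons i s' hi).filter (fun i' => X i' ω ∈ S j)).card : ℕ)
          = (if X i ω ∈ S j then 1 else 0) + (s'.filter (fun i' => X i' ω ∈ S j)).card := by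
      intro j ω
      rw [Finset.card_filter, Finset.sum_cons, Finset.card_filter]
    have hsumup : ∀ j0 ∈ t, c j0 ≠ 0 →
        ∑ j ∈ t, Function.update c j0 (c j0 - 1) j = (∑ j ∈ t, c j) - 1 := by
      intro j0 hj0 hne
      rw [Finset.sum_update_of_mem hj0, Finset.sdiff_singleton_eq_erase]
      have h2 := Finset.sum_erase_add t c hj0
      have h3 : 1 ≤ c j0 := Nat.one_le_iff_ne_zero.2 hne
      omega
    have hdecomp : {ω | ∀ j ∈ t,
          (((Finset.cons i s' hi).filter (fun i' => X i' ω ∈ S j)).card = c j)}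
        = ⋃ j0 ∈ (t.filter fun j => c j ≠ 0),
            (X i ⁻¹' S j0 ∩ {ω | ∀ j ∈ t, ((s'.filter (fun i' => X i' ω ∈ S j)).card
              = Function.update c j0 (c j0 - 1) j)}) := by
      ext ω
      simp only [Set.mem_setOf_eq, Set.mem_iUnion, Set.mem_inter_iff, Set.mem_preimage,
        Finset.mem_filter, exists_prop]
      constructor
      · intro h
        obtain ⟨j0, ⟨hj0t, hj0mem⟩, huniq⟩ := hpart (X i ω)
        have hcons := h j0 hj0t
        rw [hcardcons, if_pos hj0mem] at hcons
        refine ⟨j0, ⟨hj0t, by omega⟩, hj0mem, ?_⟩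
        intro j hj
        by_cases hjj : j = j0
        · subst hjj
          rw [Function.update_self]
          omega
        · have hnot : X i ω ∉ S j := fun hmem => hjj (huniq j ⟨hj, hmem⟩)
          have h1 := h j hj
          rw [hcardcons, if_neg hnot] at h1
          rw [Function.update_of_ne hjj]
          omega
      · rintro ⟨j0, ⟨hj0t, hj0ne⟩, hj0mem, h⟩
        intro j hj
        rw [hcardcons]
        by_cases hjj : j = j0
        · subst hjj
          rw [if_pos hj0mem]
          have h1 := h j hj
          rw [Function.update_self] at h1
          omega
        · have hnot : X i ω ∉ S j := by
            intro hmem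
            obtain ⟨j1, _, huniq⟩ := hpart (X i ω)
            exact hjj ((huniq j ⟨hj, hmem⟩).trans (huniq j0 ⟨hj0t, hj0mem⟩).symm)
          rw [if_neg hnot]
          have h1 := h j hj
          rw [Function.update_of_ne hjj] at h1
          omega
    have hmeasU : P {ω | ∀ j ∈ t,
          (((Finset.cons i s' hi).filter (fun i' => X i' ω ∈ S j)).card = c j)}
        = ∑ j0 ∈ t.filter (fun j => c j ≠ 0),
            p j0 * P {ω | ∀ j ∈ t, ((s'.filter (fun i' => X i' ω ∈ S j)).card
              = Function.update c j0 (c j0 - 1) j)} := by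
      rw [hdecomp, measure_biUnion_finset ?hd ?hm]
      · exact Finset.sum_congr rfl (fun j0 hj0 => hpiece j0 (Finset.mem_filter.1 hj0).1 _)
      case hd =>
        intro j1 hj1 j2 hj2 hne
        rw [Finset.mem_coe, Finset.mem_filter] at hj1 hj2
        refine Set.disjoint_left.2 (fun {ω} hω1 hω2 => hne ?_)
        obtain ⟨j', hj', huniq⟩ := hpart (X i ω)
        exact (huniq j1 ⟨hj1.1, hω1.1⟩).trans (huniq j2 ⟨hj2.1, hω2.1⟩).symm
      case hm =>
        intro j0 hj0
        exact ((hS j0).preimage (hX i)).inter (hM'le _ (hEM _))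
    rw [hmeasU]
    by_cases hsum : ∑ j ∈ t, c j = (Finset.cons i s' hi).card
    · rw [if_pos hsum]
      rw [Finset.card_cons] at hsum
      have hterm : ∀ j0 ∈ t.filter (fun j => c j ≠ 0),
          p j0 * P {ω | ∀ j ∈ t, ((s'.filter (fun i' => X i' ω ∈ S j)).card
              = Function.update c j0 (c j0 - 1) j)}
            = (Nat.multinomial t (Function.update c j0 (c j0 - 1)) : ℝ≥0∞)
                * ∏ j ∈ t, p j ^ c j := by
        intro j0 hj0
        rw [Finset.mem_filter] at hj0
        rw [ih]
        rw [if_pos (by rw [hsumup j0 hj0.1 hj0.2]; omega)]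
        have hprodp : p j0 * ∏ j ∈ t, p j ^ (Function.update c j0 (c j0 - 1) j)
            = ∏ j ∈ t, p j ^ c j := by
          have h1 : (fun j => p j ^ (Function.update c j0 (c j0 - 1) j))
              = Function.update (fun j => p j ^ c j) j0 (p j0 ^ (c j0 - 1)) := by
            funext j
            by_cases hjj : j = j0
            · subst hjj; simp
            · simp [Function.update_of_ne hjj]
          rw [h1, Finset.prod_update_of_mem hj0.1, Finset.sdiff_singleton_eq_erase,
            ← Finset.mul_prod_erase t (fun j => p j ^ c j) hj0.1]
          rw [← mul_assoc, ← pow_succ']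
          have h2 : c j0 - 1 + 1 = c j0 := by
            have : 1 ≤ c j0 := Nat.one_le_iff_ne_zero.2 hj0.2
            omega
          rw [h2]
        rw [← hprodp]; ring
      rw [Finset.sum_congr rfl hterm, ← Finset.sum_mul]
      congr 1
      rw [← Nat.cast_sum]
      norm_cast
      exact (multinomial_pascal t c s'.card (by omega)).symm
    · rw [if_neg hsum]
      refine Finset.sum_eq_zero (fun j0 hj0 => ?_)
      rw [Finset.mem_filter] at hj0
      rw [ih, if_neg, mul_zero]
      intro h
      rw [hsumup j0 hj0.1 hj0.2] at h
      rw [Finset.card_cons] at hsum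
      have h3 : 1 ≤ c j0 := Nat.one_le_iff_ne_zero.2 hj0.2
      have h4 : 1 ≤ ∑ j ∈ t, c j :=
        le_trans h3 (Finset.single_le_sum (f := c) (fun _ _ => Nat.zero_le _) hj0.1)
      omega

/-- Extreme-value computation from the proof of Theorem 4.3: joint law of the numbers of
maxima among a geometric number `N` of i.i.d. variables falling in the successive level
sets `[x_j, x_{j−1})`. -/
theorem stmt_18 {Ω : Type*} [MeasurableSpace Ω] (P : Measure Ω) [IsProbabilityMeasure P]
    (q : ℝ) (hq : q ∈ Set.Ioo (0:ℝ) 1)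
    (N : Ω → ℕ) (hN : Measurable N)
    (hNgeom : ∀ m : ℕ, 1 ≤ m → P {ω | N ω = m} = ENNReal.ofReal (q * (1 - q) ^ (m - 1)))
    (X : ℕ → Ω → ℝ) (hX : ∀ i, Measurable (X i))
    (hXindep : iIndepFun X P)
    (hXident : ∀ i, IdentDistrib (X i) (X 1) P P)
    (hNXindep : IndepFun N (fun ω i => X i ω) P)
    (n : ℕ) (hn : 1 ≤ n) (x : ℕ → ℝ)
    (hx : ∀ i j : ℕ, 1 ≤ i → i < j → j ≤ n → x j < x i)
    (k : ℕ → ℕ) (K : ℕ) (hK : K = ∑ j ∈ Finset.Icc 1 n, k j) (hK1 : 1 ≤ K)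
    (F : ℕ → ℝ) (hF : ∀ j, F j = (P {ω | x j ≤ X 1 ω}).toReal) :
    P {ω | ((Finset.Icc 1 (N ω)).filter (fun i => x 1 ≤ X i ω)).card = k 1 ∧
        ∀ j : ℕ, 2 ≤ j → j ≤ n →
          ((Finset.Icc 1 (N ω)).filter
            (fun i => x j ≤ X i ω ∧ X i ω < x (j - 1))).card = k j}
      = ENNReal.ofReal ((q * (1 - q) ^ (K - 1) / (q + F n * (1 - q)) ^ (K + 1))
          * ((Nat.factorial K : ℝ) / ∏ j ∈ Finset.Icc 1 n, (Nat.factorial (k j) : ℝ))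
          * (F 1) ^ (k 1) * ∏ j ∈ Finset.Icc 2 n, (F j - F (j - 1)) ^ (k j)) := by
  obtain ⟨hq0, hq1⟩ := hq
  -- the level sets
  set S : ℕ → Set ℝ := fun j =>
    if j = 0 then Set.Iio (x n) else if j = 1 then Set.Ici (x 1)
      else Set.Ico (x j) (x (j-1)) with hSdef
  have hSval0 : S 0 = Set.Iio (x n) := by simp [hSdef]
  have hSval1 : S 1 = Set.Ici (x 1) := by simp [hSdef]
  have hSvalj : ∀ j, 2 ≤ j → S j = Set.Ico (x j) (x (j-1)) := by
    intro j hj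
    have h0 : j ≠ 0 := by omega
    have h1 : j ≠ 1 := by omega
    simp [hSdef, h0, h1]
  have hS : ∀ j, MeasurableSet (S j) := by
    intro j
    rcases Nat.eq_zero_or_pos j with h | h
    · subst h; rw [hSval0]; exact measurableSet_Iio
    rcases Nat.lt_or_ge j 2 with h2 | h2
    · have : j = 1 := by omega
      subst this; rw [hSval1]; exact measurableSet_Ici
    · rw [hSvalj j h2]; exact measurableSet_Ico
  -- x is strictly antitone on [1, n]
  have hxa : ∀ i j : ℕ, 1 ≤ i → i ≤ j → j ≤ n → x j ≤ x i := by
    intro i j h1 h2 h3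
    rcases eq_or_lt_of_le h2 with h | h
    · subst h; exact le_refl _
    · exact le_of_lt (hx i j h1 h h3)
  -- the level sets S j, j ∈ [0, n] partition ℝ
  have hSsub : ∀ j, 1 ≤ j → j ≤ n → S j ⊆ Set.Ici (x j) := by
    intro j h1 h2
    rcases Nat.lt_or_ge j 2 with h | h
    · have : j = 1 := by omega
      subst this; rw [hSval1]
    · rw [hSvalj j h]; exact Set.Ico_subset_Ici_self
  have hpart : ∀ r : ℝ, ∃! j, j ∈ Finset.Icc 0 n ∧ r ∈ S j := by
    intro r
    by_cases hr : r < x n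
    · refine ⟨0, ⟨Finset.mem_Icc.2 ⟨le_refl _, Nat.zero_le _⟩, by rw [hSval0]; exact hr⟩, ?_⟩
      rintro j ⟨hjt, hjS⟩
      by_contra hj0
      have hj1 : 1 ≤ j := by omega
      have hjn : j ≤ n := (Finset.mem_Icc.1 hjt).2
      have : x j ≤ r := hSsub j hj1 hjn hjS
      have : x n ≤ r := le_trans (hxa j n hj1 hjn (le_refl _)) this
      linarith
    · push_neg at hr
      have hQn : 1 ≤ n ∧ x n ≤ r := ⟨hn, hr⟩
      have hex : ∃ j, 1 ≤ j ∧ x j ≤ r := ⟨n, hQn⟩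
      set j0 := Nat.find hex with hj0def
      obtain ⟨hj01, hj0x⟩ := Nat.find_spec hex
      have hj0n : j0 ≤ n := Nat.find_min' _ hQn
      have hj0S : r ∈ S j0 := by
        rcases Nat.lt_or_ge j0 2 with h | h
        · have : j0 = 1 := by omega
          rw [this, hSval1]
          have : x j0 ≤ r := hj0x
          rwa [‹j0 = 1›] at this
        · rw [hSvalj j0 h]
          refine ⟨hj0x, ?_⟩
          by_contra hcon
          push_neg at hcon
          have : ¬(1 ≤ j0 - 1 ∧ x (j0-1) ≤ r) := Nat.find_min hex (m := j0 - 1) (by omega)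
          exact this ⟨by omega, hcon⟩
      refine ⟨j0, ⟨Finset.mem_Icc.2 ⟨Nat.zero_le _, hj0n⟩, hj0S⟩, ?_⟩
      rintro j ⟨hjt, hjS⟩
      have hjn : j ≤ n := (Finset.mem_Icc.1 hjt).2
      have hj1 : 1 ≤ j := by
        by_contra hcon
        have : j = 0 := by omega
        subst this
        rw [hSval0] at hjS
        exact absurd hjS (not_lt.2 hr)
      have hxjr : x j ≤ r := hSsub j hj1 hjn hjS
      have hle : j0 ≤ j := Nat.find_min' _ ⟨hj1, hxjr⟩
      rcases eq_or_lt_of_le hle with h | h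
      · exact h.symm
      · exfalso
        have hj2 : 2 ≤ j := by omega
        rw [hSvalj j hj2] at hjS
        have h1 : r < x (j-1) := hjS.2
        have h2 : x (j-1) ≤ x j0 := hxa j0 (j-1) hj01 (by omega) (by omega)
        linarith
  -- probabilities of the level sets
  set p : ℕ → ℝ≥0∞ := fun j => P (X 1 ⁻¹' S j) with hpdef
  have hp : ∀ j ∈ Finset.Icc 0 n, ∀ i, P (X i ⁻¹' S j) = p j :=
    fun j _ i => (hXident i).measure_mem_eq (hS j)
  have hFnonneg : ∀ j, 0 ≤ F j := fun j => by rw [hF]; exact ENNReal.toReal_nonneg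
  have hFle1 : ∀ j, F j ≤ 1 := by
    intro j
    rw [hF]
    have h1 : P {ω | x j ≤ X 1 ω} ≤ 1 := prob_le_one
    calc (P {ω | x j ≤ X 1 ω}).toReal ≤ (1 : ℝ≥0∞).toReal := ENNReal.toReal_mono (by simp) h1
    _ = 1 := by simp
  have hIci : ∀ j : ℕ, X 1 ⁻¹' Set.Ici (x j) = {ω | x j ≤ X 1 ω} := by
    intro j; ext ω; simp [Set.mem_Ici]
  have hofF : ∀ j, P (X 1 ⁻¹' Set.Ici (x j)) = ENNReal.ofReal (F j) := by
    intro j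
    rw [hIci, hF]
    exact (ENNReal.ofReal_toReal (measure_ne_top P _)).symm
  have hp1 : p 1 = ENNReal.ofReal (F 1) := by
    rw [hpdef]; simp only; rw [hSval1, hofF]
  have hpj : ∀ j, 2 ≤ j → j ≤ n → p j = ENNReal.ofReal (F j - F (j-1)) := by
    intro j h2 hjn
    have hxle : x j ≤ x (j-1) := le_of_lt (hx (j-1) j (by omega) (by omega) hjn)
    have hIco : X 1 ⁻¹' S j = X 1 ⁻¹' Set.Ici (x j) \ X 1 ⁻¹' Set.Ici (x (j-1)) := by
      rw [hSvalj j h2]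
      ext ω
      simp only [Set.mem_preimage, Set.mem_Ico, Set.mem_diff, Set.mem_Ici, not_le]
    have hsub : X 1 ⁻¹' Set.Ici (x (j-1)) ⊆ X 1 ⁻¹' Set.Ici (x j) :=
      fun ω h => le_trans hxle h
    rw [hpdef]; simp only
    rw [hIco, measure_diff hsub (measurableSet_Ici.preimage (hX 1)).nullMeasurableSet
      (measure_ne_top P _), hofF, hofF, ← ENNReal.ofReal_sub _ (hFnonneg (j-1))]
  have hp0 : p 0 = ENNReal.ofReal (1 - F n) := by
    have hcompl : X 1 ⁻¹' S 0 = (X 1 ⁻¹' Set.Ici (x n))ᶜ := by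
      rw [hSval0]; ext ω; simp [not_le]
    rw [hpdef]; simp only
    rw [hcompl, measure_compl (measurableSet_Ici.preimage (hX 1)) (measure_ne_top P _),
      measure_univ, hofF, ← ENNReal.ofReal_one, ← ENNReal.ofReal_sub _ (hFnonneg n)]
  have hFmono : ∀ j, 2 ≤ j → j ≤ n → 0 ≤ F j - F (j-1) := by
    intro j h2 hjn
    have hxle : x j ≤ x (j-1) := le_of_lt (hx (j-1) j (by omega) (by omega) hjn)
    have hm : P {ω | x (j-1) ≤ X 1 ω} ≤ P {ω | x j ≤ X 1 ω} :=
      measure_mono (fun ω h => le_trans hxle h)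
    have hm2 := ENNReal.toReal_mono (measure_ne_top P _) hm
    rw [hF j, hF (j-1)]
    linarith
  -- total count identity coming from the partition
  have hcountsum : ∀ (m : ℕ) (ω : Ω),
      ∑ j ∈ Finset.Icc 0 n, ((Finset.Icc 1 m).filter (fun i => X i ω ∈ S j)).card = m := by
    intro m ω
    have h1 : ∀ j, ((Finset.Icc 1 m).filter (fun i => X i ω ∈ S j)).card
        = ∑ i ∈ Finset.Icc 1 m, if X i ω ∈ S j then 1 else 0 :=
      fun j => Finset.card_filter _ _
    simp_rw [h1]
    rw [Finset.sum_comm]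
    have h2 : ∀ i ∈ Finset.Icc 1 m,
        (∑ j ∈ Finset.Icc 0 n, if X i ω ∈ S j then 1 else 0) = 1 := by
      intro i _
      obtain ⟨j0, ⟨hj0t, hj0S⟩, huniq⟩ := hpart (X i ω)
      rw [Finset.sum_eq_single_of_mem j0 hj0t]
      · rw [if_pos hj0S]
      · intro j hj hne
        rw [if_neg]
        intro hmem
        exact hne (huniq j ⟨hj, hmem⟩)
    rw [Finset.sum_congr rfl h2, Finset.sum_const, Nat.card_Icc]
    simp
  have h0notin : (0 : ℕ) ∉ Finset.Icc 1 n := by simp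
  have hIcc0 : Finset.Icc 0 n = Finset.cons 0 (Finset.Icc 1 n) h0notin := by
    ext a
    simp only [Finset.mem_Icc, Finset.mem_cons]
    omega
  have h1notin : (1 : ℕ) ∉ Finset.Icc 2 n := by simp
  have hIcc1 : Finset.Icc 1 n = Finset.cons 1 (Finset.Icc 2 n) h1notin := by
    ext a
    simp only [Finset.mem_Icc, Finset.mem_cons]
    omega
  -- the events conditioned on N = m
  set Am : ℕ → Set Ω := fun m =>
    {ω | ∀ j ∈ Finset.Icc 1 n, ((Finset.Icc 1 m).filter (fun i => X i ω ∈ S j)).card = k j}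
    with hAmdef
  have hcardmeas : ∀ (m j : ℕ),
      Measurable fun ω => (((Finset.Icc 1 m).filter (fun i => X i ω ∈ S j)).card : ℕ) := by
    intro m j
    have heq : (fun ω => (((Finset.Icc 1 m).filter (fun i => X i ω ∈ S j)).card : ℕ))
        = fun ω => ∑ i ∈ Finset.Icc 1 m, if X i ω ∈ S j then 1 else 0 :=
      funext fun ω => Finset.card_filter _ _
    rw [heq]
    exact Finset.measurable_sum _ (fun i _ =>
      Measurable.ite ((hS j).preimage (hX i)) measurable_const measurable_const)
  have hAmeas : ∀ m, MeasurableSet (Am m) := by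
    intro m
    have hset : Am m = ⋂ j ∈ Finset.Icc 1 n,
        (fun ω => (((Finset.Icc 1 m).filter (fun i => X i ω ∈ S j)).card : ℕ)) ⁻¹' {k j} := by
      ext ω; simp [hAmdef, Set.mem_iInter]
    rw [hset]
    exact MeasurableSet.biInter (Finset.Icc 1 n).countable_toSet
      (fun j _ => hcardmeas m j (measurableSet_singleton _))
  have hSmem1 : ∀ r : ℝ, r ∈ S 1 ↔ x 1 ≤ r := by
    intro r; rw [hSval1]; simp
  have hSmemj : ∀ j, 2 ≤ j → ∀ r : ℝ, r ∈ S j ↔ (x j ≤ r ∧ r < x (j-1)) := by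
    intro j hj r; rw [hSvalj j hj]; simp [Set.mem_Ico]
  have hfeq1 : ∀ (ω : Ω) (s : Finset ℕ),
      s.filter (fun i => x 1 ≤ X i ω) = s.filter (fun i => X i ω ∈ S 1) := by
    intro ω s; ext i; simp [Finset.mem_filter, hSmem1]
  have hfeqj : ∀ (ω : Ω) (s : Finset ℕ) j, 2 ≤ j →
      s.filter (fun i => x j ≤ X i ω ∧ X i ω < x (j-1))
        = s.filter (fun i => X i ω ∈ S j) := by
    intro ω s j hj; ext i; simp [Finset.mem_filter, hSmemj j hj]
  have horig : {ω | ((Finset.Icc 1 (N ω)).filter (fun i => x 1 ≤ X i ω)).card = k 1 ∧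
        ∀ j : ℕ, 2 ≤ j → j ≤ n →
          ((Finset.Icc 1 (N ω)).filter
            (fun i => x j ≤ X i ω ∧ X i ω < x (j - 1))).card = k j}
      = ⋃ m, ({ω | N ω = m} ∩ Am m) := by
    ext ω
    simp only [Set.mem_setOf_eq, Set.mem_iUnion, Set.mem_inter_iff, hAmdef]
    constructor
    · rintro ⟨h1, h2⟩
      refine ⟨N ω, rfl, ?_⟩
      intro j hj
      rw [Finset.mem_Icc] at hj
      rcases Nat.lt_or_ge j 2 with hlt | hge
      · have hj1 : j = 1 := by omega
        subst hj1
        rw [← hfeq1 ω]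
        exact h1
      · rw [← hfeqj ω _ j hge]
        exact h2 j hge hj.2
    · rintro ⟨m, hm, h⟩
      rw [← hm] at h
      constructor
      · rw [hfeq1 ω]
        exact h 1 (Finset.mem_Icc.2 ⟨le_refl _, hn⟩)
      · intro j h2 hjn
        rw [hfeqj ω _ j h2]
        exact h j (Finset.mem_Icc.2 ⟨by omega, hjn⟩)
  have hdisjU : Pairwise (Function.onFun Disjoint (fun m => {ω | N ω = m} ∩ Am m)) := by
    intro m1 m2 hne
    refine Set.disjoint_left.2 (fun {ω} h1 h2 => hne ?_)
    rw [← h1.1, ← h2.1]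
  have hNmeas : ∀ m : ℕ, MeasurableSet {ω | N ω = m} :=
    fun m => hN (measurableSet_singleton m)
  have hPsum : P {ω | ((Finset.Icc 1 (N ω)).filter (fun i => x 1 ≤ X i ω)).card = k 1 ∧
        ∀ j : ℕ, 2 ≤ j → j ≤ n →
          ((Finset.Icc 1 (N ω)).filter
            (fun i => x j ≤ X i ω ∧ X i ω < x (j - 1))).card = k j}
      = ∑' m, P ({ω | N ω = m} ∩ Am m) := by
    rw [horig]
    exact measure_iUnion hdisjU (fun m => (hNmeas m).inter (hAmeas m))
  have hindepNA : ∀ m : ℕ, P ({ω | N ω = m} ∩ Am m) = P {ω | N ω = m} * P (Am m) := by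
    intro m
    set T : Set (ℕ → ℝ) := {g | ∀ j ∈ Finset.Icc 1 n,
      ((Finset.Icc 1 m).filter (fun i => g i ∈ S j)).card = k j} with hTdef
    have hTmeas : MeasurableSet T := by
      have hcard : ∀ j : ℕ, Measurable fun g : ℕ → ℝ =>
          (((Finset.Icc 1 m).filter (fun i => g i ∈ S j)).card : ℕ) := by
        intro j
        have heq : (fun g : ℕ → ℝ => (((Finset.Icc 1 m).filter (fun i => g i ∈ S j)).card : ℕ))
            = fun g => ∑ i ∈ Finset.Icc 1 m, if g i ∈ S j then 1 else 0 :=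
          funext fun g => Finset.card_filter _ _
        rw [heq]
        exact Finset.measurable_sum _ (fun i _ =>
          Measurable.ite ((hS j).preimage (measurable_pi_apply i)) measurable_const
            measurable_const)
      have hset : T = ⋂ j ∈ Finset.Icc 1 n,
          (fun g : ℕ → ℝ => (((Finset.Icc 1 m).filter (fun i => g i ∈ S j)).card : ℕ)) ⁻¹' {k j} := by
        ext g; simp [hTdef, Set.mem_iInter]
      rw [hset]
      exact MeasurableSet.biInter (Finset.Icc 1 n).countable_toSet
        (fun j _ => hcard j (measurableSet_singleton _))
    exact (indepFun_iff_measure_inter_preimage_eq_mul.1 hNXindep) {m} T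
      (measurableSet_singleton m) hTmeas
  have hAmval : ∀ m, K ≤ m → P (Am m)
      = ((m.choose K : ℝ≥0∞)) * (Nat.multinomial (Finset.Icc 1 n) k : ℝ≥0∞)
        * p 0 ^ (m - K) * ∏ j ∈ Finset.Icc 1 n, p j ^ k j := by
    intro m hm
    set c : ℕ → ℕ := fun j => if j = 0 then m - K else k j with hcdef
    have hcval : ∀ j, j ≠ 0 → c j = k j := by
      intro j hj; simp [hcdef, hj]
    have hAmE : Am m = {ω | ∀ j ∈ Finset.Icc 0 n,
        ((Finset.Icc 1 m).filter (fun i => X i ω ∈ S j)).card = c j} := by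
      ext ω
      simp only [hAmdef, Set.mem_setOf_eq]
      constructor
      · intro h j hj
        rw [Finset.mem_Icc] at hj
        rcases Nat.eq_zero_or_pos j with h0 | h0
        · subst h0
          have hsum := hcountsum m ω
          rw [hIcc0, Finset.sum_cons] at hsum
          have hrest : ∑ j ∈ Finset.Icc 1 n,
              ((Finset.Icc 1 m).filter (fun i => X i ω ∈ S j)).card = K := by
            rw [hK]
            exact Finset.sum_congr rfl (fun j hj => h j hj)
          simp only [hcdef, if_pos rfl]
          omega
        · rw [hcval j (by omega)]
          exact h j (Finset.mem_Icc.2 ⟨h0, hj.2⟩)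
      · intro h j hj
        have hj0 : j ∈ Finset.Icc 0 n := by
          rw [Finset.mem_Icc] at hj ⊢; omega
        have h' := h j hj0
        rw [Finset.mem_Icc] at hj
        rwa [hcval j (by omega)] at h'
    rw [hAmE, count_prob P X hX hXindep (Finset.Icc 0 n) S hS hpart p hp (Finset.Icc 1 m) c]
    have hcsum1 : ∑ j ∈ Finset.Icc 1 n, c j = K := by
      rw [hK]
      exact Finset.sum_congr rfl (fun j hj => hcval j
        (by rw [Finset.mem_Icc] at hj; omega))
    have hcsum : ∑ j ∈ Finset.Icc 0 n, c j = (Finset.Icc 1 m).card := by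
      rw [hIcc0, Finset.sum_cons, Nat.card_Icc, hcsum1]
      simp only [hcdef, if_pos rfl]
      omega
    rw [if_pos hcsum]
    rw [hIcc0, Nat.multinomial_cons, Finset.prod_cons, hcsum1]
    have hc0 : c 0 = m - K := by simp [hcdef]
    have hmc : Nat.multinomial (Finset.Icc 1 n) c = Nat.multinomial (Finset.Icc 1 n) k :=
      Nat.multinomial_congr (fun j hj => hcval j (by rw [Finset.mem_Icc] at hj; omega))
    have hprodc : ∏ j ∈ Finset.Icc 1 n, p j ^ c j = ∏ j ∈ Finset.Icc 1 n, p j ^ k j :=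
      Finset.prod_congr rfl (fun j hj => by
        rw [hcval j (by rw [Finset.mem_Icc] at hj; omega)])
    rw [hc0, hmc, hprodc]
    have hchoose : (m - K + K).choose (m - K) = m.choose K := by
      have h1 : m - K + K = m := by omega
      rw [h1, Nat.choose_symm hm]
    rw [hchoose]
    push_cast
    ring
  -- P(N = 0) = 0
  have hNsum1 : ∑' m : ℕ, P {ω | N ω = m + 1} = 1 := by
    have heq : ∀ m : ℕ, P {ω | N ω = m + 1} = ENNReal.ofReal (q * (1-q)^m) := by
      intro m
      rw [hNgeom (m+1) (by omega)]
      simp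
    simp_rw [heq]
    rw [← ENNReal.ofReal_tsum_of_nonneg
      (fun m => mul_nonneg hq0.le (pow_nonneg (by linarith) m))
      (Summable.mul_left q (summable_geometric_of_lt_one (by linarith) (by linarith)))]
    rw [tsum_mul_left, tsum_geometric_of_lt_one (by linarith) (by linarith)]
    rw [show (1 : ℝ) - (1-q) = q by ring, mul_inv_cancel₀ (ne_of_gt hq0)]
    simp
  have hN0 : P {ω | N ω = 0} = 0 := by
    have hUmeas : MeasurableSet (⋃ m : ℕ, {ω | N ω = m + 1}) :=
      MeasurableSet.iUnion (fun m => hNmeas (m+1))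
    have hU : P (⋃ m : ℕ, {ω | N ω = m + 1}) = 1 := by
      rw [measure_iUnion ?_ (fun m => hNmeas (m+1))]
      · exact hNsum1
      · intro m1 m2 hne
        refine Set.disjoint_left.2 (fun {ω} h1 h2 => hne ?_)
        simp only [Set.mem_setOf_eq] at h1 h2
        omega
    have hsub : {ω | N ω = 0} ⊆ (⋃ m : ℕ, {ω | N ω = m + 1})ᶜ := by
      intro ω h
      simp only [Set.mem_compl_iff, Set.mem_iUnion, Set.mem_setOf_eq] at h ⊢
      push_neg
      intro m
      omega
    have hle := measure_mono (μ := P) hsub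
    rw [measure_compl hUmeas (measure_ne_top P _), hU, measure_univ, tsub_self] at hle
    exact le_antisymm hle zero_le
  -- A_m is empty for m < K
  have hAm0 : ∀ m, m < K → Am m = ∅ := by
    intro m hmK
    ext ω
    simp only [hAmdef, Set.mem_setOf_eq, Set.mem_empty_iff_false, iff_false]
    intro h
    have hsum := hcountsum m ω
    rw [hIcc0, Finset.sum_cons] at hsum
    have hrest : ∑ j ∈ Finset.Icc 1 n,
        ((Finset.Icc 1 m).filter (fun i => X i ω ∈ S j)).card = K := by
      rw [hK]; exact Finset.sum_congr rfl (fun j hj => h j hj)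
    omega
  -- reindex the series
  have hsupp : ∀ m : ℕ, m ∉ Set.range (fun d : ℕ => d + K) →
      P ({ω | N ω = m} ∩ Am m) = 0 := by
    intro m hm
    have hmK : m < K := by
      by_contra hcon
      push_neg at hcon
      exact hm ⟨m - K, show m - K + K = m by omega⟩
    rcases Nat.eq_zero_or_pos m with h0 | h0
    · subst h0
      exact le_antisymm
        (le_trans (measure_mono Set.inter_subset_left) (le_of_eq hN0)) zero_le
    · rw [hindepNA m, hAm0 m hmK, measure_empty, mul_zero]
  have hre : ∑' m, P ({ω | N ω = m} ∩ Am m)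
      = ∑' d, P ({ω | N ω = d + K} ∩ Am (d + K)) := by
    refine (Function.Injective.tsum_eq (fun a b hab => by omega) ?_).symm
    intro m hm
    by_contra hc
    exact hm (hsupp m hc)
  -- evaluate each term for m = d + K
  have h1q0 : (0:ℝ) ≤ 1 - q := by linarith
  have hFn0 : (0:ℝ) ≤ 1 - F n := by linarith [hFle1 n]
  have ha0 : (0:ℝ) ≤ q * (1-q)^(K-1) := mul_nonneg hq0.le (pow_nonneg h1q0 _)
  set r : ℝ := (1-q) * (1 - F n) with hrdef
  have hr0 : (0:ℝ) ≤ r := mul_nonneg h1q0 hFn0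
  have hr1 : r < 1 := by
    have h1 : r ≤ (1-q) * 1 := by
      apply mul_le_mul_of_nonneg_left _ h1q0
      linarith [hFnonneg n]
    linarith
  set C : ℝ≥0∞ := ENNReal.ofReal (q * (1-q)^(K-1))
      * (Nat.multinomial (Finset.Icc 1 n) k : ℝ≥0∞)
      * ∏ j ∈ Finset.Icc 1 n, p j ^ k j with hCdef
  have hterm : ∀ d : ℕ, P ({ω | N ω = d + K} ∩ Am (d + K))
      = C * (((d + K).choose K : ℝ≥0∞) * ENNReal.ofReal (r ^ d)) := by
    intro d
    rw [hindepNA, hNgeom (d+K) (by omega), hAmval (d+K) (by omega)]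
    have h1 : d + K - K = d := by omega
    rw [h1, hp0]
    have h2 : q * (1-q)^(d+K-1) = (q * (1-q)^(K-1)) * (1-q)^d := by
      have h3 : d + K - 1 = (K-1) + d := by omega
      rw [h3, pow_add]; ring
    rw [h2, ENNReal.ofReal_mul ha0, ENNReal.ofReal_pow h1q0]
    have h4 : ENNReal.ofReal (r ^ d)
        = ENNReal.ofReal (1-q) ^ d * ENNReal.ofReal (1 - F n) ^ d := by
      rw [← ENNReal.ofReal_pow h1q0, ← ENNReal.ofReal_pow hFn0,
        ← ENNReal.ofReal_mul (pow_nonneg h1q0 d), hrdef, mul_pow]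
    rw [h4, hCdef]
    ring
  -- the geometric-binomial series
  have hrnorm : ‖r‖ < 1 := by
    rw [Real.norm_eq_abs, abs_of_nonneg hr0]
    exact hr1
  have hseries : ∑' d : ℕ, (((d + K).choose K : ℝ≥0∞) * ENNReal.ofReal (r ^ d))
      = ENNReal.ofReal (1 / (1-r)^(K+1)) := by
    have heq : ∀ d : ℕ, (((d + K).choose K : ℝ≥0∞) * ENNReal.ofReal (r ^ d))
        = ENNReal.ofReal (((d + K).choose K : ℝ) * r ^ d) := by
      intro d
      rw [ENNReal.ofReal_mul (by positivity), ENNReal.ofReal_natCast]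
    simp_rw [heq]
    rw [← ENNReal.ofReal_tsum_of_nonneg
      (fun d => mul_nonneg (by positivity) (pow_nonneg hr0 d))
      (summable_choose_mul_geometric_of_norm_lt_one K hrnorm)]
    rw [tsum_choose_mul_geometric_of_norm_lt_one K hrnorm]
  -- assemble everything
  rw [hPsum, hre]
  simp_rw [hterm]
  rw [ENNReal.tsum_mul_left, hseries]
  -- evaluate the multinomial coefficient and the product of level-set probabilities
  have hprodpos : (0:ℝ) < ∏ j ∈ Finset.Icc 1 n, ((k j).factorial : ℝ) := by
    apply Finset.prod_pos
    intro j _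
    exact_mod_cast Nat.factorial_pos (k j)
  have hMk : (Nat.multinomial (Finset.Icc 1 n) k : ℝ≥0∞)
      = ENNReal.ofReal ((K.factorial : ℝ) / ∏ j ∈ Finset.Icc 1 n, ((k j).factorial : ℝ)) := by
    have hnat : Nat.multinomial (Finset.Icc 1 n) k * ∏ j ∈ Finset.Icc 1 n, (k j).factorial
        = K.factorial := by
      rw [mul_comm, Nat.multinomial_spec, hK]
    have hreal : ((Nat.multinomial (Finset.Icc 1 n) k : ℕ) : ℝ)
        = (K.factorial : ℝ) / ∏ j ∈ Finset.Icc 1 n, ((k j).factorial : ℝ) := by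
      rw [eq_div_iff (ne_of_gt hprodpos), ← Nat.cast_prod, ← Nat.cast_mul]
      exact_mod_cast hnat
    rw [← ENNReal.ofReal_natCast, hreal]
  have hprod2nonneg : (0:ℝ) ≤ ∏ j ∈ Finset.Icc 2 n, (F j - F (j-1))^(k j) :=
    Finset.prod_nonneg (fun j hj => by
      rw [Finset.mem_Icc] at hj
      exact pow_nonneg (hFmono j hj.1 hj.2) _)
  have hPi : ∏ j ∈ Finset.Icc 1 n, p j ^ k j
      = ENNReal.ofReal ((F 1)^(k 1) * ∏ j ∈ Finset.Icc 2 n, (F j - F (j-1))^(k j)) := by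
    rw [hIcc1, Finset.prod_cons, hp1]
    have h2 : ∀ j ∈ Finset.Icc 2 n, p j ^ k j = ENNReal.ofReal ((F j - F (j-1))^(k j)) := by
      intro j hj
      rw [Finset.mem_Icc] at hj
      rw [hpj j hj.1 hj.2, ← ENNReal.ofReal_pow (hFmono j hj.1 hj.2)]
    rw [Finset.prod_congr rfl h2,
      ← ENNReal.ofReal_prod_of_nonneg (fun j hj => by
        rw [Finset.mem_Icc] at hj
        exact pow_nonneg (hFmono j hj.1 hj.2) _),
      ← ENNReal.ofReal_pow (hFnonneg 1),
      ← ENNReal.ofReal_mul (pow_nonneg (hFnonneg 1) _)]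
  rw [hCdef, hMk, hPi]
  have hb0 : (0:ℝ) ≤ q * (1-q)^(K-1) * ((K.factorial : ℝ)
      / ∏ j ∈ Finset.Icc 1 n, ((k j).factorial : ℝ)) :=
    mul_nonneg ha0 (div_nonneg (Nat.cast_nonneg _) hprodpos.le)
  rw [← ENNReal.ofReal_mul ha0, ← ENNReal.ofReal_mul hb0,
    ← ENNReal.ofReal_mul (mul_nonneg hb0
      (mul_nonneg (pow_nonneg (hFnonneg 1) _) hprod2nonneg))]
  congr 1
  have h1r : q + F n * (1-q) = 1 - r := by rw [hrdef]; ring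
  rw [h1r]
  have h1rpos : (0:ℝ) < 1 - r := by linarith
  field_simp
end

section
/- Let 0 < α < θ, let W : [0,∞) → [1,∞) be nondecreasing with W(0) = 1 and W(t)e^{−αt} → c ∈ (0,∞) as t → ∞, and define W_θ(x) := e^{−θx}W(x) + θ∫₀^x W(y)e^{−θy} dy and m := θ∫₀^∞ W(y)e^{−θy} dy. Then there exists a constant C > 0 such that for all t ≥ 0 and all 0 ≤ s₁ ≤ s₂ ≤ t: e^{−θ s₁} + ∫₀^{s₁} θ e^{−θ z} · (W_θ(s₂) − W_θ(s₁ − z))/W_θ(s₂) dz ≤ C e^{−(θ−α)s₁}. -/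
open MeasureTheory Filter

open intervalIntegral in
private lemma my_exp_int (k a b : ℝ) (hk : k ≠ 0) :
    ∫ y in a..b, Real.exp (k * y) = (Real.exp (k * b) - Real.exp (k * a)) / k := by
  rw [integral_comp_mul_left (fun x => Real.exp x) hk, integral_exp, smul_eq_mul]
  ring

/-- Intermediate bound from the proof of Lemma 4.6 (subcritical case `α < θ`):
`e^{−θs₁} + ∫₀^{s₁} θ e^{−θz} (W_θ(s₂) − W_θ(s₁−z))/W_θ(s₂) dz ≤ C e^{−(θ−α)s₁}`
uniformly over `0 ≤ s₁ ≤ s₂ ≤ t`. -/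
theorem stmt_19 (α θ c : ℝ) (hα : 0 < α) (hαθ : α < θ) (hc : 0 < c)
    (W : ℝ → ℝ) (hWmono : MonotoneOn W (Set.Ici 0)) (hW0 : W 0 = 1)
    (hW1 : ∀ x : ℝ, 0 ≤ x → 1 ≤ W x)
    (hlim : Tendsto (fun t => W t * Real.exp (-α * t)) atTop (nhds c))
    (Wθ : ℝ → ℝ)
    (hWθ : ∀ x : ℝ, Wθ x =
      Real.exp (-θ * x) * W x + θ * ∫ y in (0:ℝ)..x, W y * Real.exp (-θ * y))
    (m : ℝ) (hm : m = θ * ∫ y in Set.Ioi (0:ℝ), W y * Real.exp (-θ * y)) :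
    ∃ C : ℝ, 0 < C ∧ ∀ t : ℝ, 0 ≤ t → ∀ s₁ s₂ : ℝ, 0 ≤ s₁ → s₁ ≤ s₂ → s₂ ≤ t →
      Real.exp (-θ * s₁)
        + ∫ z in (0:ℝ)..s₁, θ * Real.exp (-θ * z) * ((Wθ s₂ - Wθ (s₁ - z)) / Wθ s₂)
      ≤ C * Real.exp (-(θ - α) * s₁) := by
  have hθ : 0 < θ := hα.trans hαθ
  have hθα : 0 < θ - α := sub_pos.mpr hαθ
  -- a global bound W y ≤ M e^{α y}
  obtain ⟨T, hT⟩ := eventually_atTop.mp (hlim.eventually (eventually_le_nhds (lt_add_one c)))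
  set T' : ℝ := max T 0 with hT'
  set M : ℝ := max (c + 1) (W T') with hMdef
  have hM0 : 0 < M := lt_of_lt_of_le (by linarith) (le_max_left _ _)
  have hWb : ∀ y : ℝ, 0 ≤ y → W y ≤ M * Real.exp (α * y) := by
    intro y hy
    have he1 : (1 : ℝ) ≤ Real.exp (α * y) := Real.one_le_exp (by positivity)
    rcases le_total y T' with h | h
    · have h1 : W y ≤ W T' := hWmono hy (le_max_right T 0) h
      calc W y ≤ M := h1.trans (le_max_right _ _)
        _ = M * 1 := (mul_one M).symm
        _ ≤ M * Real.exp (α * y) := by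
            exact mul_le_mul_of_nonneg_left he1 hM0.le
    · have h2 : W y * Real.exp (-α * y) ≤ c + 1 := hT y ((le_max_left T 0).trans h)
      have hE : Real.exp (-α * y) * Real.exp (α * y) = 1 := by
        rw [← Real.exp_add]; ring_nf; exact Real.exp_zero
      have : W y = W y * Real.exp (-α * y) * Real.exp (α * y) := by
        rw [mul_assoc, hE, mul_one]
      rw [this]
      calc W y * Real.exp (-α * y) * Real.exp (α * y)
          ≤ (c + 1) * Real.exp (α * y) :=
            mul_le_mul_of_nonneg_right h2 (Real.exp_pos _).le
        _ ≤ M * Real.exp (α * y) :=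
            mul_le_mul_of_nonneg_right (le_max_left _ _) (Real.exp_pos _).le
  -- integrability of the basic integrand
  have hWint : ∀ a b : ℝ, 0 ≤ a → 0 ≤ b →
      IntervalIntegrable (fun y => W y * Real.exp (-θ * y)) volume a b := by
    intro a b ha hb
    have hsub : Set.uIcc a b ⊆ Set.Ici 0 := by
      intro x hx
      rcases Set.mem_uIcc.mp hx with h | h
      · exact le_trans ha h.1
      · exact le_trans hb h.1
    exact ((hWmono.mono hsub).intervalIntegrable).mul_continuousOn
      (Continuous.continuousOn (by fun_prop))
  -- additivity of Wθ
  have hWθrec : ∀ u v : ℝ, 0 ≤ u → u ≤ v →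
      Wθ v = Wθ u + (Real.exp (-θ * v) * W v - Real.exp (-θ * u) * W u)
        + θ * ∫ y in u..v, W y * Real.exp (-θ * y) := by
    intro u v hu huv
    rw [hWθ u, hWθ v,
      ← intervalIntegral.integral_add_adjacent_intervals (hWint 0 u le_rfl hu)
        (hWint u v hu (hu.trans huv))]
    ring
  -- lower bound on the integral piece
  have hint_lower : ∀ u v : ℝ, 0 ≤ u → u ≤ v →
      W u * (Real.exp (-θ * u) - Real.exp (-θ * v))
        ≤ θ * ∫ y in u..v, W y * Real.exp (-θ * y) := by
    intro u v hu huv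
    have hWu0 : 0 ≤ W u := (zero_le_one.trans (hW1 u hu))
    have hmono : ∫ y in u..v, W u * Real.exp (-θ * y)
        ≤ ∫ y in u..v, W y * Real.exp (-θ * y) := by
      have hci : IntervalIntegrable (fun y => W u * Real.exp (-θ * y)) volume u v :=
        (intervalIntegrable_const).mul_continuousOn (Continuous.continuousOn (by fun_prop))
      apply intervalIntegral.integral_mono_on huv hci (hWint u v hu (hu.trans huv))
      intro y hy
      exact mul_le_mul_of_nonneg_right (hWmono hu (hu.trans hy.1) hy.1)
        (Real.exp_pos _).le
    have hval : ∫ y in u..v, W u * Real.exp (-θ * y)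
        = W u * ((Real.exp (-θ * v) - Real.exp (-θ * u)) / (-θ)) := by
      rw [intervalIntegral.integral_const_mul, my_exp_int (-θ) u v (by linarith)]
    have := mul_le_mul_of_nonneg_left hmono hθ.le
    rw [hval] at this
    calc W u * (Real.exp (-θ * u) - Real.exp (-θ * v))
        = θ * (W u * ((Real.exp (-θ * v) - Real.exp (-θ * u)) / (-θ))) := by
          rw [div_neg, ← neg_div, neg_sub, mul_comm θ, mul_assoc, div_mul_cancel₀ _ hθ.ne']
      _ ≤ θ * ∫ y in u..v, W y * Real.exp (-θ * y) := this
  -- Wθ is monotone and ≥ 1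
  have hWθmono : ∀ u v : ℝ, 0 ≤ u → u ≤ v → Wθ u ≤ Wθ v := by
    intro u v hu huv
    rw [hWθrec u v hu huv]
    have h1 := hint_lower u v hu huv
    have h2 : Real.exp (-θ * v) * W u ≤ Real.exp (-θ * v) * W v :=
      mul_le_mul_of_nonneg_left (hWmono hu (hu.trans huv) huv) (Real.exp_pos _).le
    nlinarith [Real.exp_pos (-θ * v), Real.exp_pos (-θ * u)]
  have hWθ1 : ∀ x : ℝ, 0 ≤ x → 1 ≤ Wθ x := by
    intro x hx
    rw [hWθ x]
    have h1 := hint_lower 0 x le_rfl hx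
    rw [hW0] at h1
    have h2 : Real.exp (-θ * x) * 1 ≤ Real.exp (-θ * x) * W x :=
      mul_le_mul_of_nonneg_left (hW1 x hx) (Real.exp_pos _).le
    simp only [mul_zero, neg_zero, Real.exp_zero, one_mul] at h1 ⊢
    linarith
  -- the key exponential decay bound
  set K : ℝ := M + M * θ / (θ - α) with hKdef
  have hK0 : 0 < K := by positivity
  have hkey : ∀ u v : ℝ, 0 ≤ u → u ≤ v →
      Wθ v - Wθ u ≤ K * Real.exp ((α - θ) * u) := by
    intro u v hu huv
    have hv : 0 ≤ v := hu.trans huv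
    rw [hWθrec u v hu huv]
    have hup : ∫ y in u..v, W y * Real.exp (-θ * y)
        ≤ ∫ y in u..v, M * Real.exp ((α - θ) * y) := by
      have hci : IntervalIntegrable (fun y => M * Real.exp ((α - θ) * y)) volume u v :=
        (intervalIntegrable_const).mul_continuousOn (Continuous.continuousOn (by fun_prop))
      apply intervalIntegral.integral_mono_on huv (hWint u v hu hv) hci
      intro y hy
      have hy0 : 0 ≤ y := hu.trans hy.1
      calc W y * Real.exp (-θ * y)
          ≤ M * Real.exp (α * y) * Real.exp (-θ * y) :=
            mul_le_mul_of_nonneg_right (hWb y hy0) (Real.exp_pos _).le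
        _ = M * Real.exp ((α - θ) * y) := by
            rw [mul_assoc, ← Real.exp_add]; ring_nf
    have hval : ∫ y in u..v, M * Real.exp ((α - θ) * y)
        = M * ((Real.exp ((α - θ) * v) - Real.exp ((α - θ) * u)) / (α - θ)) := by
      rw [intervalIntegral.integral_const_mul, my_exp_int (α - θ) u v (by linarith)]
    rw [hval] at hup
    have hWv : Real.exp (-θ * v) * W v ≤ M * Real.exp ((α - θ) * v) := by
      calc Real.exp (-θ * v) * W v
          ≤ Real.exp (-θ * v) * (M * Real.exp (α * v)) :=
            mul_le_mul_of_nonneg_left (hWb v hv) (Real.exp_pos _).le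
        _ = M * Real.exp ((α - θ) * v) := by
            rw [← mul_assoc, mul_comm (Real.exp (-θ * v)) M, mul_assoc, ← Real.exp_add]
            ring_nf
    have hmono : Real.exp ((α - θ) * v) ≤ Real.exp ((α - θ) * u) :=
      Real.exp_le_exp.mpr (by nlinarith)
    have hWu0 : 0 ≤ Real.exp (-θ * u) * W u :=
      mul_nonneg (Real.exp_pos _).le (zero_le_one.trans (hW1 u hu))
    have hup2 := mul_le_mul_of_nonneg_left hup hθ.le
    have hαθ0 : α - θ ≠ 0 := by linarith
    have hθα0 : θ - α ≠ 0 := by linarith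
    have heq : θ * (M * ((Real.exp ((α - θ) * v) - Real.exp ((α - θ) * u)) / (α - θ)))
        = M * θ / (θ - α) * (Real.exp ((α - θ) * u) - Real.exp ((α - θ) * v)) := by
      field_simp
      ring
    rw [heq] at hup2
    have hpos : 0 < Real.exp ((α - θ) * v) := Real.exp_pos _
    have hc1 : 0 ≤ M * θ / (θ - α) := by positivity
    have hKE : K * Real.exp ((α - θ) * u)
        = M * Real.exp ((α - θ) * u) + M * θ / (θ - α) * Real.exp ((α - θ) * u) := by
      rw [hKdef]; ring
    have hsplit : M * θ / (θ - α) * (Real.exp ((α - θ) * u) - Real.exp ((α - θ) * v))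
        = M * θ / (θ - α) * Real.exp ((α - θ) * u)
          - M * θ / (θ - α) * Real.exp ((α - θ) * v) := by ring
    have h9 := mul_le_mul_of_nonneg_left hmono hM0.le
    have h10 := mul_nonneg hc1 hpos.le
    rw [hKE]
    linarith
  -- now the main estimate
  refine ⟨1 + θ * K / α, by positivity, ?_⟩
  intro t ht s₁ s₂ hs1 h12 h2t
  have hs2 : 0 ≤ s₂ := hs1.trans h12
  have hWθs2 : 1 ≤ Wθ s₂ := hWθ1 s₂ hs2
  have hre : -(θ - α) * s₁ = (α - θ) * s₁ := by ring
  rw [hre]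
  -- integrability of the integrand
  have huIcc : Set.uIcc (0:ℝ) s₁ = Set.Icc 0 s₁ := Set.uIcc_of_le hs1
  have hanti : AntitoneOn (fun z => Wθ (s₁ - z)) (Set.uIcc 0 s₁) := by
    intro x hx y hy hxy
    rw [huIcc] at hx hy
    exact hWθmono (s₁ - y) (s₁ - x) (by linarith [hy.2]) (by linarith)
  have hI2 : IntervalIntegrable (fun z => Wθ s₂ - Wθ (s₁ - z)) volume 0 s₁ :=
    (intervalIntegrable_const).sub hanti.intervalIntegrable
  have hIint : IntervalIntegrable
      (fun z => θ * Real.exp (-θ * z) * ((Wθ s₂ - Wθ (s₁ - z)) / Wθ s₂)) volume 0 s₁ :=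
    (hI2.div_const (Wθ s₂)).continuousOn_mul
      (Continuous.continuousOn (by fun_prop))
  -- pointwise bound and integral comparison
  have hle : ∫ z in (0:ℝ)..s₁, θ * Real.exp (-θ * z) * ((Wθ s₂ - Wθ (s₁ - z)) / Wθ s₂)
      ≤ ∫ z in (0:ℝ)..s₁, θ * K * Real.exp ((α - θ) * s₁) * Real.exp (-α * z) := by
    have hci : IntervalIntegrable
        (fun z => θ * K * Real.exp ((α - θ) * s₁) * Real.exp (-α * z)) volume 0 s₁ :=
      (intervalIntegrable_const).mul_continuousOn (Continuous.continuousOn (by fun_prop))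
    apply intervalIntegral.integral_mono_on hs1 hIint hci
    intro z hz
    have hz1 : 0 ≤ s₁ - z := by linarith [hz.2]
    have hz2 : s₁ - z ≤ s₂ := by linarith [hz.1]
    have hD0 : 0 ≤ Wθ s₂ - Wθ (s₁ - z) := by
      have := hWθmono (s₁ - z) s₂ hz1 hz2
      linarith
    have hdiv : (Wθ s₂ - Wθ (s₁ - z)) / Wθ s₂ ≤ Wθ s₂ - Wθ (s₁ - z) :=
      div_le_self hD0 hWθs2
    have hDK : Wθ s₂ - Wθ (s₁ - z) ≤ K * Real.exp ((α - θ) * (s₁ - z)) :=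
      hkey (s₁ - z) s₂ hz1 hz2
    have hfac : 0 ≤ θ * Real.exp (-θ * z) := by positivity
    calc θ * Real.exp (-θ * z) * ((Wθ s₂ - Wθ (s₁ - z)) / Wθ s₂)
        ≤ θ * Real.exp (-θ * z) * (K * Real.exp ((α - θ) * (s₁ - z))) :=
          mul_le_mul_of_nonneg_left (hdiv.trans hDK) hfac
      _ = θ * K * Real.exp ((α - θ) * s₁) * Real.exp (-α * z) := by
          rw [mul_comm (θ * Real.exp (-θ * z))]
          rw [show θ * Real.exp (-θ * z) = Real.exp (-θ * z) * θ from mul_comm _ _]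
          rw [← mul_assoc, mul_assoc K, ← Real.exp_add]
          rw [show θ * K * Real.exp ((α - θ) * s₁) * Real.exp (-α * z)
            = K * Real.exp ((α - θ) * s₁ + -α * z) * θ by rw [Real.exp_add]; ring]
          congr 2
          ring
  have hval : ∫ z in (0:ℝ)..s₁, θ * K * Real.exp ((α - θ) * s₁) * Real.exp (-α * z)
      = θ * K * Real.exp ((α - θ) * s₁)
        * ((Real.exp (-α * s₁) - Real.exp (-α * 0)) / (-α)) := by
    rw [intervalIntegral.integral_const_mul, my_exp_int (-α) 0 s₁ (by linarith)]
  have hbnd : (Real.exp (-α * s₁) - Real.exp (-α * 0)) / (-α) ≤ 1 / α := by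
    rw [mul_zero, Real.exp_zero, div_neg, ← neg_div, neg_sub]
    gcongr
    linarith [Real.exp_pos (-α * s₁)]
  have hexp1 : Real.exp (-θ * s₁) ≤ Real.exp ((α - θ) * s₁) :=
    Real.exp_le_exp.mpr (by nlinarith)
  have hfin : θ * K * Real.exp ((α - θ) * s₁)
      * ((Real.exp (-α * s₁) - Real.exp (-α * 0)) / (-α))
      ≤ θ * K / α * Real.exp ((α - θ) * s₁) := by
    have hpos : 0 ≤ θ * K * Real.exp ((α - θ) * s₁) := by positivity
    calc θ * K * Real.exp ((α - θ) * s₁)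
        * ((Real.exp (-α * s₁) - Real.exp (-α * 0)) / (-α))
        ≤ θ * K * Real.exp ((α - θ) * s₁) * (1 / α) :=
          mul_le_mul_of_nonneg_left hbnd hpos
      _ = θ * K / α * Real.exp ((α - θ) * s₁) := by ring
  have := hle.trans (le_of_eq hval) |>.trans hfin
  calc Real.exp (-θ * s₁)
      + ∫ z in (0:ℝ)..s₁, θ * Real.exp (-θ * z) * ((Wθ s₂ - Wθ (s₁ - z)) / Wθ s₂)
      ≤ Real.exp ((α - θ) * s₁) + θ * K / α * Real.exp ((α - θ) * s₁) := by
        have h2 := hle.trans_eq hval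
        linarith [hfin, hexp1]
    _ = (1 + θ * K / α) * Real.exp ((α - θ) * s₁) := by ring
end
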